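/- arXiv:1301.7150 — 14 statements merged into one kernel-verified Lean document; each statement's English description precedes it below -/
import Mathlib

section
/- Let m > 2 be a real number. If f : ℝ → ℝ is a positive three-times differentiable function satisfying f(t)²·f'''(t) − (2(m+1)/(m−2))·f(t)·f'(t)·f''(t) + (m²/(m−2)²)·f'(t)³ = 0 for all t ∈ ℝ, then u := f'/f is twice differentiable and satisfies u''(t) + ((m−8)/(m−2))·u(t)·u'(t) − (2(m−4)/(m−2)²)·u(t)³ = 0 for all t ∈ ℝ. Conversely, if u : ℝ → ℝ is a twice differentiable solution of u''(t) + ((m−8)/(m−2))·u(t)·u'(t) − (2(m−4)/(m−2)²)·u(t)³ = 0 on ℝ, then for every positive constant C the function f(t) = C·exp(∫₀ᵗ u(s) ds) is a positive global solution of f²·f''' − (2(m+1)/(m−2))·f·f'·f'' + (m²/(m−2)²)·f'³ = 0 on ℝ. -/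
/-- Cole–Hopf transformation between the third-order ODE (1.1) and the
second-order ODE (5.6). -/
theorem stmt_0 (m : ℝ) (hm : 2 < m) :
    (∀ f : ℝ → ℝ, (∀ t, 0 < f t) →
      Differentiable ℝ f → Differentiable ℝ (deriv f) →
      Differentiable ℝ (deriv (deriv f)) →
      (∀ t, (f t) ^ 2 * deriv (deriv (deriv f)) t
        - (2 * (m + 1) / (m - 2)) * f t * deriv f t * deriv (deriv f) t
        + (m ^ 2 / (m - 2) ^ 2) * (deriv f t) ^ 3 = 0) →
      (Differentiable ℝ (fun t => deriv f t / f t) ∧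
       Differentiable ℝ (deriv (fun t => deriv f t / f t)) ∧
       ∀ t, deriv (deriv (fun s => deriv f s / f s)) t
         + ((m - 8) / (m - 2)) * (deriv f t / f t)
            * deriv (fun s => deriv f s / f s) t
         - (2 * (m - 4) / (m - 2) ^ 2) * (deriv f t / f t) ^ 3 = 0))
    ∧
    (∀ u : ℝ → ℝ, Differentiable ℝ u → Differentiable ℝ (deriv u) →
      (∀ t, deriv (deriv u) t + ((m - 8) / (m - 2)) * u t * deriv u t
        - (2 * (m - 4) / (m - 2) ^ 2) * (u t) ^ 3 = 0) →
      ∀ C : ℝ, 0 < C →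
        ((∀ t, 0 < C * Real.exp (∫ s in (0:ℝ)..t, u s)) ∧
         Differentiable ℝ (fun t => C * Real.exp (∫ s in (0:ℝ)..t, u s)) ∧
         Differentiable ℝ (deriv (fun t => C * Real.exp (∫ s in (0:ℝ)..t, u s))) ∧
         Differentiable ℝ (deriv (deriv (fun t => C * Real.exp (∫ s in (0:ℝ)..t, u s)))) ∧
         ∀ t, (C * Real.exp (∫ s in (0:ℝ)..t, u s)) ^ 2
              * deriv (deriv (deriv (fun x => C * Real.exp (∫ s in (0:ℝ)..x, u s)))) t
           - (2 * (m + 1) / (m - 2)) * (C * Real.exp (∫ s in (0:ℝ)..t, u s))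
              * deriv (fun x => C * Real.exp (∫ s in (0:ℝ)..x, u s)) t
              * deriv (deriv (fun x => C * Real.exp (∫ s in (0:ℝ)..x, u s))) t
           + (m ^ 2 / (m - 2) ^ 2)
              * (deriv (fun x => C * Real.exp (∫ s in (0:ℝ)..x, u s)) t) ^ 3 = 0)) := by
  have hm2 : m - 2 ≠ 0 := by linarith
  constructor
  · -- forward direction
    intro f hfpos hf hf' hf'' hode
    have hfne : ∀ t, f t ≠ 0 := fun t => (hfpos t).ne'
    have hgdiff : Differentiable ℝ (fun t => deriv f t / f t) := hf'.div hf hfne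
    have hgeq : deriv (fun t => deriv f t / f t)
        = fun t => deriv (deriv f) t / f t - (deriv f t / f t) ^ 2 := by
      funext t
      rw [deriv_fun_div (hf' t) (hf t) (hfne t)]
      rw [sub_div, div_pow, pow_two (f t), ← div_div,
        mul_div_assoc, div_self (hfne t), mul_one]
      ring
    have hg'diff : Differentiable ℝ (deriv (fun t => deriv f t / f t)) := by
      rw [hgeq]
      exact (hf''.div hf hfne).sub ((hf'.div hf hfne).pow 2)
    refine ⟨hgdiff, hg'diff, fun t => ?_⟩
    have H2 : HasDerivAt (deriv (fun t => deriv f t / f t))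
        ((deriv (deriv (deriv f)) t * f t - deriv (deriv f) t * deriv f t) / f t ^ 2
          - 2 * (deriv f t / f t) ^ 1
            * ((deriv (deriv f) t * f t - deriv f t * deriv f t) / f t ^ 2)) t := by
      rw [hgeq]
      exact HasDerivAt.sub
        (((hf'' t).hasDerivAt.div (hf t).hasDerivAt (hfne t)))
        ((((hf' t).hasDerivAt.div (hf t).hasDerivAt (hfne t))).pow 2)
    have hg1 : deriv (fun s => deriv f s / f s) t
        = deriv (deriv f) t / f t - (deriv f t / f t) ^ 2 := by rw [hgeq]
    rw [H2.deriv, hg1]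
    have h := hode t
    field_simp [hfne t] at h ⊢
    linear_combination h
  · -- converse direction
    intro u hu hu' hode C hC
    set F : ℝ → ℝ := fun t => ∫ s in (0:ℝ)..t, u s with hF_def
    have hFd : ∀ t, HasDerivAt F (u t) t := fun t =>
      (hu.continuous.integral_hasStrictDerivAt 0 t).hasDerivAt
    set f : ℝ → ℝ := fun t => C * Real.exp (F t) with hf_def
    have hfpos : ∀ t, 0 < f t := fun t => mul_pos hC (Real.exp_pos _)
    have hfd : ∀ t, HasDerivAt f (u t * f t) t := by
      intro t
      have := ((hFd t).exp.const_mul C)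
      refine this.congr_deriv ?_
      simp [hf_def]; ring
    have hfdiff : Differentiable ℝ f := fun t => (hfd t).differentiableAt
    have hf'eq : deriv f = fun t => u t * f t := funext fun t => (hfd t).deriv
    have hf'diff : Differentiable ℝ (deriv f) := by
      rw [hf'eq]; exact hu.mul hfdiff
    have hf'd : ∀ t, HasDerivAt (deriv f)
        ((deriv u t + u t ^ 2) * f t) t := by
      intro t
      rw [hf'eq]
      have := ((hu t).hasDerivAt.mul (hfd t))
      refine this.congr_deriv ?_
      ring
    have hf''eq : deriv (deriv f) = fun t => (deriv u t + u t ^ 2) * f t :=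
      funext fun t => (hf'd t).deriv
    have hf''diff : Differentiable ℝ (deriv (deriv f)) := by
      rw [hf''eq]
      exact (hu'.add (hu.pow 2)).mul hfdiff
    have hf''d : ∀ t, HasDerivAt (deriv (deriv f))
        ((deriv (deriv u) t + 3 * u t * deriv u t + u t ^ 3) * f t) t := by
      intro t
      rw [hf''eq]
      have := (((hu' t).hasDerivAt.add (((hu t).hasDerivAt.pow 2))).mul (hfd t))
      refine this.congr_deriv ?_
      simp only [Pi.add_apply, Pi.pow_apply]
      norm_num
      ring
    refine ⟨hfpos, hfdiff, hf'diff, hf''diff, fun t => ?_⟩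
    have h3 : deriv (deriv (deriv f)) t
        = (deriv (deriv u) t + 3 * u t * deriv u t + u t ^ 3) * f t := (hf''d t).deriv
    show f t ^ 2 * deriv (deriv (deriv f)) t
        - (2 * (m + 1) / (m - 2)) * f t * deriv f t * deriv (deriv f) t
        + (m ^ 2 / (m - 2) ^ 2) * (deriv f t) ^ 3 = 0
    rw [h3, hf''eq, hf'eq]
    simp only []
    have h := hode t
    field_simp [(hfpos t).ne'] at h ⊢
    linear_combination (f t) ^ 3 * h
end

section
/- Let A and C be positive real numbers. Then there is no differentiable function v : ℝ → ℝ satisfying v'(t) = √(A·v(t)⁴ + C) for all t ∈ ℝ; that is, every solution of this ODE blows up in finite time and its maximal interval of existence is a bounded interval (−T₀, T₁). -/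
/-- The ODE v' = √(A v⁴ + C), with A, C > 0, has no global solution on ℝ. -/
theorem stmt_1 (A C : ℝ) (hA : 0 < A) (hC : 0 < C) :
    ¬ ∃ v : ℝ → ℝ, Differentiable ℝ v ∧
      ∀ t : ℝ, deriv v t = Real.sqrt (A * (v t) ^ 4 + C) := by
  rintro ⟨v, hv, hode⟩
  have hsc : 0 < Real.sqrt C := Real.sqrt_pos.mpr hC
  have hsa : 0 < Real.sqrt A := Real.sqrt_pos.mpr hA
  -- deriv v ≥ √C everywhere
  have hd1 : ∀ t, Real.sqrt C ≤ deriv v t := by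
    intro t
    rw [hode t]
    apply Real.sqrt_le_sqrt
    have h4 : 0 ≤ (v t) ^ 4 := by positivity
    nlinarith
  -- linear growth lemma on univ
  have hgrow : ∀ x y : ℝ, x ≤ y → Real.sqrt C * (y - x) ≤ v y - v x := by
    intro x y hxy
    exact mul_sub_le_image_sub_of_le_deriv hv (fun z => hd1 z) hxy
  have hmono : Monotone v := by
    intro x y hxy
    have := hgrow x y hxy
    nlinarith [mul_nonneg hsc.le (sub_nonneg.mpr hxy)]
  set t₀ : ℝ := (|v 0| + 1) / Real.sqrt C with ht₀def
  have ht₀nonneg : 0 ≤ t₀ := by positivity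
  have hvt₀ : 1 ≤ v t₀ := by
    have h := hgrow 0 t₀ ht₀nonneg
    have : Real.sqrt C * (t₀ - 0) = |v 0| + 1 := by
      rw [sub_zero, ht₀def, mul_div_cancel₀ _ (ne_of_gt hsc)]
    nlinarith [neg_abs_le (v 0)]
  -- for t ≥ t₀, v t ≥ 1
  have hv1 : ∀ t, t₀ ≤ t → 1 ≤ v t := fun t ht => hvt₀.trans (hmono ht)
  -- the function f = -(v t)⁻¹ on Ici t₀
  set f : ℝ → ℝ := fun t => -(v t)⁻¹ with hfdef
  have hfd : ∀ t, t₀ ≤ t → HasDerivAt f (deriv v t / (v t) ^ 2) t := by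
    intro t ht
    have hvt : v t ≠ 0 := by have := hv1 t ht; linarith
    have := ((hv t).hasDerivAt.inv hvt).neg
    have h2 : HasDerivAt (-v⁻¹) (deriv v t / v t ^ 2) t := by simpa [neg_div] using this
    exact h2
  have hfc : ContinuousOn f (Set.Ici t₀) := by
    intro t ht
    exact ((hfd t ht).continuousAt).continuousWithinAt
  have hfderiv : ∀ t ∈ interior (Set.Ici t₀), Real.sqrt A ≤ deriv f t := by
    intro t ht
    rw [interior_Ici] at ht
    have ht' : t₀ ≤ t := le_of_lt ht
    have h1 : 1 ≤ v t := hv1 t ht'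
    have hvpos : 0 < v t := by linarith
    rw [(hfd t ht').deriv]
    rw [le_div_iff₀ (by positivity)]
    rw [hode t]
    have : Real.sqrt A * (v t) ^ 2 = Real.sqrt (A * (v t) ^ 4) := by
      rw [Real.sqrt_mul hA.le]
      congr 1
      rw [show (v t) ^ 4 = ((v t) ^ 2) ^ 2 by ring, Real.sqrt_sq (by positivity)]
    rw [this]
    exact Real.sqrt_le_sqrt (by linarith)
  have hkey : ∀ x ∈ Set.Ici t₀, ∀ y ∈ Set.Ici t₀, x ≤ y →
      Real.sqrt A * (y - x) ≤ f y - f x :=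
    fun x hx y hy hxy =>
      (convex_Ici t₀).mul_sub_le_image_sub_of_le_deriv hfc
        (fun z hz => by
          rw [interior_Ici] at hz
          exact ((hfd z (le_of_lt hz)).differentiableAt).differentiableWithinAt)
        hfderiv x hx y hy hxy
  set t₁ : ℝ := t₀ + 2 / Real.sqrt A with ht₁def
  have ht₁ : t₀ ≤ t₁ := by
    rw [ht₁def]
    exact le_add_of_nonneg_right (by positivity)
  have h := hkey t₀ Set.self_mem_Ici t₁ ht₁ ht₁
  have heq : Real.sqrt A * (t₁ - t₀) = 2 := by
    have : t₁ - t₀ = 2 / Real.sqrt A := by rw [ht₁def]; ring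
    rw [this, mul_div_cancel₀ _ (ne_of_gt hsa)]
  have hv1t₀ : 0 < v t₀ := by linarith
  have hv1t₁ : 1 ≤ v t₁ := hv1 t₁ ht₁
  have hf₀ : (v t₀)⁻¹ ≤ 1 := by
    rw [inv_le_one_iff₀]; right; exact hvt₀
  have hf₁ : 0 ≤ (v t₁)⁻¹ := by positivity
  have hfe : f t₁ - f t₀ = (v t₀)⁻¹ - (v t₁)⁻¹ := by simp [hfdef]; ring
  rw [heq, hfe] at h
  linarith
end

section
/- Let A and C be positive real numbers and let a be a real number with A·a⁴ > C. Then there is no differentiable function v : ℝ → ℝ with v(0) = a satisfying v'(t) = √(A·v(t)⁴ − C) for all t ∈ ℝ (where necessarily A·v(t)⁴ ≥ C along the solution); that is, every solution with this initial value blows up in finite time and its maximal interval of existence is a bounded interval (−T₀, T₁). -/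
/-- Helper: the positive initial-value case. -/
lemma no_global_sol_pos (A C a : ℝ) (hA : 0 < A) (hC : 0 < C) (ha0 : 0 < a)
    (ha : A * a ^ 4 > C) :
    ¬ ∃ v : ℝ → ℝ, Differentiable ℝ v ∧ v 0 = a ∧
      ∀ t : ℝ, deriv v t = Real.sqrt (A * (v t) ^ 4 - C) := by
  rintro ⟨v, hv, hv0, hode⟩
  obtain ⟨B, hBdef⟩ : ∃ B : ℝ, B = A - C / a ^ 4 := ⟨_, rfl⟩
  have ha4 : (0:ℝ) < a ^ 4 := by positivity
  have hB : 0 < B := by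
    have : C / a ^ 4 < A := (div_lt_iff₀ ha4).mpr (by linarith)
    rw [hBdef]; linarith
  have hsB : 0 < Real.sqrt B := Real.sqrt_pos.mpr hB
  have hmono : Monotone v :=
    monotone_of_deriv_nonneg hv (fun t => by rw [hode]; exact Real.sqrt_nonneg _)
  have hva : ∀ t, 0 ≤ t → a ≤ v t := fun t ht => hv0 ▸ hmono ht
  -- h t = 1/(v t) + √B * t is antitone on [0, ∞)
  set h : ℝ → ℝ := fun s => (v s)⁻¹ + Real.sqrt B * s with hhdef
  have hder : ∀ t, 0 ≤ t → HasDerivAt h (-(deriv v t) / (v t) ^ 2 + Real.sqrt B * 1) t := by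
    intro t ht
    have hvt : 0 < v t := lt_of_lt_of_le ha0 (hva t ht)
    exact ((hv t).hasDerivAt.inv hvt.ne').add ((hasDerivAt_id t).const_mul (Real.sqrt B))
  have hanti : AntitoneOn h (Set.Ici (0:ℝ)) := by
    apply antitoneOn_of_deriv_nonpos (convex_Ici 0)
    · apply ContinuousOn.add
      · exact ContinuousOn.inv₀ hv.continuous.continuousOn
          (fun t ht => (lt_of_lt_of_le ha0 (hva t ht)).ne')
      · exact (continuous_const.mul continuous_id).continuousOn
    · intro t ht
      rw [interior_Ici] at ht
      exact (hder t (le_of_lt ht)).differentiableAt.differentiableWithinAt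
    · intro t ht
      rw [interior_Ici] at ht
      have ht0 : 0 ≤ t := le_of_lt ht
      have hvt : 0 < v t := lt_of_lt_of_le ha0 (hva t ht0)
      rw [(hder t ht0).deriv]
      have hav : a ^ 4 ≤ (v t) ^ 4 := pow_le_pow_left₀ ha0.le (hva t ht0) 4
      have h1 : B * (v t) ^ 4 ≤ A * (v t) ^ 4 - C := by
        have h2 : C ≤ C / a ^ 4 * (v t) ^ 4 := by
          rw [div_mul_eq_mul_div, le_div_iff₀ ha4]
          nlinarith
        rw [hBdef]; nlinarith
      have key : Real.sqrt B * (v t) ^ 2 ≤ Real.sqrt (A * (v t) ^ 4 - C) := by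
        calc Real.sqrt B * (v t) ^ 2 = Real.sqrt (B * (v t) ^ 4) := by
              rw [Real.sqrt_mul hB.le]
              congr 1
              rw [show (v t) ^ 4 = ((v t) ^ 2) ^ 2 by ring, Real.sqrt_sq (sq_nonneg _)]
          _ ≤ _ := Real.sqrt_le_sqrt h1
      have hkey2 : Real.sqrt B ≤ Real.sqrt (A * (v t) ^ 4 - C) / (v t) ^ 2 :=
        (le_div_iff₀ (by positivity)).mpr key
      rw [hode t]
      have : -(Real.sqrt (A * v t ^ 4 - C)) / v t ^ 2
          = -(Real.sqrt (A * v t ^ 4 - C) / v t ^ 2) := by ring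
      rw [this]
      linarith
  -- derive contradiction at large t
  set T : ℝ := (a⁻¹ + 1) / Real.sqrt B with hTdef
  have hT : 0 < T := by
    apply div_pos _ hsB
    have : 0 < a⁻¹ := inv_pos.mpr ha0
    linarith
  have hhT : h T ≤ h 0 := hanti (Set.self_mem_Ici) (Set.mem_Ici.mpr hT.le) hT.le
  have hh0 : h 0 = a⁻¹ := by simp [hhdef, hv0]
  have hBT : Real.sqrt B * T = a⁻¹ + 1 := by
    rw [hTdef, mul_div_cancel₀ _ hsB.ne']
  have hvT : 0 < v T := lt_of_lt_of_le ha0 (hva T hT.le)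
  have hvTinv : 0 < (v T)⁻¹ := inv_pos.mpr hvT
  have : (v T)⁻¹ + (a⁻¹ + 1) ≤ a⁻¹ := by
    rw [← hBT]; rw [hh0] at hhT; exact hhT
  linarith

/-- The ODE v' = √(A v⁴ − C), with A, C > 0 and initial value a with A a⁴ > C,
has no global solution on ℝ. -/
theorem stmt_2 (A C a : ℝ) (hA : 0 < A) (hC : 0 < C) (ha : A * a ^ 4 > C) :
    ¬ ∃ v : ℝ → ℝ, Differentiable ℝ v ∧ v 0 = a ∧
      ∀ t : ℝ, deriv v t = Real.sqrt (A * (v t) ^ 4 - C) := by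
  rcases lt_trichotomy a 0 with hneg | hzero | hpos
  · rintro ⟨v, hv, hv0, hode⟩
    have hna : 0 < -a := neg_pos.mpr hneg
    have hna4 : A * (-a) ^ 4 > C := by
      have : (-a) ^ 4 = a ^ 4 := by ring
      rw [this]; exact ha
    apply no_global_sol_pos A C (-a) hA hC hna hna4
    refine ⟨fun t => -v (-t), ?_, by simp [hv0], ?_⟩
    · exact (hv.comp differentiable_neg).neg
    · intro t
      have hd : HasDerivAt (fun t => -v (-t)) (deriv v (-t)) t := by
        have h1 : HasDerivAt (fun t : ℝ => v (-t)) (deriv v (-t) * (-1)) t :=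
          (hv (-t)).hasDerivAt.comp t (hasDerivAt_neg t)
        have := h1.neg
        rw [show deriv v (-t) = -(deriv v (-t) * -1) by ring]
        exact this
      rw [hd.deriv]
      rw [hode (-t)]
      congr 2
      ring
  · exfalso
    rw [hzero] at ha
    simp at ha
    linarith
  · exact no_global_sol_pos A C a hA hC hpos ha
end

section
/- Let A and B be real constants, let u be a twice differentiable real function on an interval containing 0 satisfying u''(t) = A·u(t)·u'(t) + B·u(t)³, and let k be a real number with 2k² + A·k − B = 0. Define g_k(u)(t) = u'(t) + k·u(t)². Then (d/dt) g_k(u)(t) = (A + 2k)·u(t)·g_k(u)(t) for all t, and consequently g_k(u)(t) = g_k(u)(0)·exp((A + 2k)·∫₀ᵗ u(s) ds). -/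
/-- For a characteristic root k of 2k² + Ak − B = 0, the quantity
g_k(u) = u' + k u² satisfies a linear first-order ODE along solutions of
u'' = A u u' + B u³, hence has an exponential integral representation. -/
theorem stmt_4 (A B k : ℝ) (a b : ℝ) (h0 : (0:ℝ) ∈ Set.Ioo a b)
    (hk : 2 * k ^ 2 + A * k - B = 0) (u u' u'' : ℝ → ℝ)
    (hu : ∀ t ∈ Set.Ioo a b, HasDerivAt u (u' t) t)
    (hu' : ∀ t ∈ Set.Ioo a b, HasDerivAt u' (u'' t) t)
    (hode : ∀ t ∈ Set.Ioo a b, u'' t = A * u t * u' t + B * (u t) ^ 3) :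
    (∀ t ∈ Set.Ioo a b,
      HasDerivAt (fun s => u' s + k * (u s) ^ 2)
        ((A + 2 * k) * u t * (u' t + k * (u t) ^ 2)) t) ∧
    (∀ t ∈ Set.Ioo a b,
      u' t + k * (u t) ^ 2
        = (u' 0 + k * (u 0) ^ 2)
            * Real.exp ((A + 2 * k) * ∫ s in (0:ℝ)..t, u s)) := by
  set c := A + 2 * k with hc
  have hg : ∀ t ∈ Set.Ioo a b,
      HasDerivAt (fun s => u' s + k * (u s) ^ 2)
        (c * u t * (u' t + k * (u t) ^ 2)) t := by
    intro t ht
    have h1 := (hu' t ht).add (((hu t ht).pow 2).const_mul k)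
    refine h1.congr_deriv ?_
    rw [hode t ht]
    simp only [hc]
    linear_combination -(u t) ^ 3 * hk
  refine ⟨hg, ?_⟩
  -- continuity of u
  have hucont : ContinuousOn u (Set.Ioo a b) := fun t ht =>
    (hu t ht).continuousAt.continuousWithinAt
  set F : ℝ → ℝ := fun t => ∫ s in (0:ℝ)..t, u s with hF
  have hFd : ∀ t ∈ Set.Ioo a b, HasDerivAt F (u t) t := by
    intro t ht
    have hsub : Set.uIcc (0:ℝ) t ⊆ Set.Ioo a b := by
      exact (Set.ordConnected_Ioo).uIcc_subset h0 ht
    have hint : IntervalIntegrable u MeasureTheory.volume 0 t :=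
      (hucont.mono hsub).intervalIntegrable
    exact intervalIntegral.integral_hasDerivAt_right hint
      (hucont.stronglyMeasurableAtFilter isOpen_Ioo t ht)
      (hucont.continuousAt (isOpen_Ioo.mem_nhds ht))
  set g : ℝ → ℝ := fun s => u' s + k * (u s) ^ 2 with hgdef
  set h : ℝ → ℝ := fun s => g s * Real.exp (-(c * F s)) with hhdef
  have hh : ∀ t ∈ Set.Ioo a b, HasDerivAt h 0 t := by
    intro t ht
    have hexp : HasDerivAt (fun s => Real.exp (-(c * F s)))
        (Real.exp (-(c * F t)) * (-(c * u t))) t :=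
      (((hFd t ht).const_mul c).neg).exp
    have := (hg t ht).mul hexp
    refine this.congr_deriv ?_
    ring
  have hconst : ∀ t ∈ Set.Ioo a b, h t = h 0 := by
    intro t ht
    have hdiff : DifferentiableOn ℝ h (Set.Ioo a b) := fun s hs =>
      (hh s hs).differentiableAt.differentiableWithinAt
    have hf' : ∀ s ∈ Set.Ioo a b, fderivWithin ℝ h (Set.Ioo a b) s = 0 := by
      intro s hs
      rw [(hh s hs).hasFDerivAt.hasFDerivWithinAt.fderivWithin (isOpen_Ioo.uniqueDiffWithinAt hs)]
      apply ContinuousLinearMap.ext; intro x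
      simp
    exact (convex_Ioo a b).is_const_of_fderivWithin_eq_zero hdiff hf' ht h0
  intro t ht
  have hF0 : F 0 = 0 := by simp [hF]
  have h0v : h 0 = g 0 := by simp [hhdef, hF0]
  have := hconst t ht
  rw [h0v] at this
  have hg_eq : g t = g 0 * Real.exp (c * F t) := by
    have hexp_ne : Real.exp (-(c * F t)) ≠ 0 := Real.exp_ne_zero _
    simp only [hhdef] at this
    rw [← this]
    rw [mul_assoc, ← Real.exp_add]
    simp
  simpa [hgdef, hF] using hg_eq
end

section
/- Let B > 0. If u : ℝ → ℝ is a twice differentiable function satisfying u''(t) = B·u(t)³ for all t ∈ ℝ, then u is identically zero. Consequently, for m = 8 every positive three-times differentiable global solution f : ℝ → ℝ of f²·f''' − (2(m+1)/(m−2))·f·f'·f'' + (m²/(m−2)²)·f'³ = 0 is constant. -/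
/-- Monotone on `Ici a` from nonneg derivative. -/
lemma monoIci {φ : ℝ → ℝ} {a : ℝ} (hφ : Differentiable ℝ φ)
    (h : ∀ t, a < t → 0 ≤ deriv φ t) : MonotoneOn φ (Set.Ici a) := by
  apply monotoneOn_of_deriv_nonneg (convex_Ici a) hφ.continuous.continuousOn
  · intro x _; exact (hφ x).differentiableWithinAt
  · intro x hx; rw [interior_Ici] at hx; exact h x hx

/-- Linear lower bound from a derivative lower bound on a half-line. -/
lemma lin_lower {φ : ℝ → ℝ} {a δ : ℝ} (hφ : Differentiable ℝ φ)
    (h : ∀ t, a ≤ t → δ ≤ deriv φ t) :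
    ∀ t, a ≤ t → φ a + δ * (t - a) ≤ φ t := by
  intro t ht
  have hψd : Differentiable ℝ (fun s => φ s - δ * s) :=
    hφ.sub (differentiable_id.const_mul δ)
  have hψ : MonotoneOn (fun s => φ s - δ * s) (Set.Ici a) := by
    apply monoIci hψd
    intro s hs
    have heq : deriv (fun s => φ s - δ * s) s = deriv φ s - δ := by
      have h1 : HasDerivAt (fun s => φ s - δ * s) (deriv φ s - δ * 1) s :=
        (hφ s).hasDerivAt.sub ((hasDerivAt_id s).const_mul δ)
      simpa using h1.deriv
    rw [heq]
    have := h s hs.le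
    linarith
  have := hψ Set.self_mem_Ici ht ht
  simp only at this
  linarith

set_option maxHeartbeats 1600000 in
/-- Core blow-up argument: a nonnegative function with `h'' ≥ 2B h²` that is
positive with nonnegative slope at some point cannot be globally defined. -/
lemma core (B : ℝ) (hB : 0 < B) (h : ℝ → ℝ)
    (hd : Differentiable ℝ h) (hd2 : Differentiable ℝ (deriv h))
    (hpos : ∀ t, 0 ≤ h t)
    (hineq : ∀ t, 2 * B * (h t) ^ 2 ≤ deriv (deriv h) t)
    (t₀ : ℝ) (hc0 : 0 < h t₀) (hs : 0 ≤ deriv h t₀) : False := by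
  obtain ⟨c, hc_eq⟩ : ∃ c : ℝ, c = h t₀ := ⟨_, rfl⟩
  have hc : 0 < c := hc_eq ▸ hc0
  obtain ⟨δ, hδ_eq⟩ : ∃ δ : ℝ, δ = 2 * B * c ^ 2 := ⟨_, rfl⟩
  have hδ : 0 < δ := by rw [hδ_eq]; positivity
  -- deriv h is monotone globally
  have hmono1 : Monotone (deriv h) :=
    monotone_of_deriv_nonneg hd2 (fun x => le_trans (by positivity) (hineq x))
  have hd_nonneg : ∀ t, t₀ ≤ t → 0 ≤ deriv h t := fun t ht => hs.trans (hmono1 ht)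
  -- h is monotone on Ici t₀, so h ≥ c there
  have hmono2 : MonotoneOn h (Set.Ici t₀) := monoIci hd (fun t ht => hd_nonneg t ht.le)
  have hge_c : ∀ t, t₀ ≤ t → c ≤ h t := by
    intro t ht; rw [hc_eq]; exact hmono2 Set.self_mem_Ici ht ht
  -- h'' ≥ δ on Ici t₀
  have hpp : ∀ t, t₀ ≤ t → δ ≤ deriv (deriv h) t := by
    intro t ht
    refine le_trans ?_ (hineq t)
    have h1 := hge_c t ht
    rw [hδ_eq]
    have h2 : c ^ 2 ≤ h t ^ 2 := by nlinarith
    nlinarith [mul_le_mul_of_nonneg_left h2 (by positivity : (0:ℝ) ≤ 2 * B)]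
  -- deriv h t ≥ δ * (t - t₀) on Ici t₀
  have step4 : ∀ t, t₀ ≤ t → δ * (t - t₀) ≤ deriv h t := by
    intro t ht
    have := lin_lower hd2 hpp t ht
    linarith
  -- beyond t₁ := t₀ + 1 : deriv h ≥ δ
  have step4' : ∀ t, t₀ + 1 ≤ t → δ ≤ deriv h t := by
    intro t ht
    have := step4 t (by linarith)
    nlinarith
  have step5 : ∀ t, t₀ + 1 ≤ t → c + δ * (t - (t₀ + 1)) ≤ h t := by
    intro t ht
    have := lin_lower hd step4' t ht
    have h1 : c ≤ h (t₀ + 1) := hge_c _ (by linarith)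
    linarith
  -- energy w := h'^2 - (4B/3) h^3 is monotone on Ici t₀
  obtain ⟨w, hwdef⟩ : ∃ w : ℝ → ℝ, w = fun t => (deriv h t) ^ 2 - (4 * B / 3) * (h t) ^ 3 :=
    ⟨_, rfl⟩
  have hw' : ∀ t, HasDerivAt w
      (2 * deriv h t * deriv (deriv h) t - (4 * B / 3) * (3 * h t ^ 2 * deriv h t)) t := by
    intro t
    rw [hwdef]
    have := ((hd2 t).hasDerivAt.fun_pow 2).fun_sub (((hd t).hasDerivAt.fun_pow 3).const_mul (4 * B / 3))
    refine this.congr_deriv ?_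
    push_cast
    ring
  have hwdiff : Differentiable ℝ w := fun t => (hw' t).differentiableAt
  have hwmono : MonotoneOn w (Set.Ici t₀) := by
    apply monoIci hwdiff
    intro s hsgt
    rw [(hw' s).deriv]
    have h1 := hd_nonneg s hsgt.le
    have h2 := hineq s
    nlinarith
  have hwlb : ∀ t, t₀ ≤ t → w t₀ ≤ w t := fun t ht => hwmono Set.self_mem_Ici ht ht
  -- choose T beyond which (2B/3) h^3 controls |w t₀|
  obtain ⟨K, hK_eq⟩ : ∃ K : ℝ, K = |w t₀| := ⟨_, rfl⟩
  have hK : 0 ≤ K := hK_eq ▸ abs_nonneg _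
  obtain ⟨M, hM_eq⟩ : ∃ M : ℝ, M = 3 * K / (2 * B * c ^ 2) := ⟨_, rfl⟩
  have hM : 0 ≤ M := by rw [hM_eq]; positivity
  obtain ⟨T, hT_eq⟩ : ∃ T : ℝ, T = t₀ + 1 + M / δ := ⟨_, rfl⟩
  have hT1 : t₀ + 1 ≤ T := by
    have : 0 ≤ M / δ := by positivity
    rw [hT_eq]; linarith
  have hT0 : t₀ ≤ T := by linarith
  have hhTc : ∀ t, T ≤ t → c ≤ h t := fun t ht => hge_c t (le_trans hT0 ht)
  have hhTM : ∀ t, T ≤ t → M ≤ h t := by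
    intro t ht
    have h5 := step5 t (le_trans hT1 ht)
    have hTm : δ * (T - (t₀ + 1)) = M := by
      rw [hT_eq]; field_simp; ring
    nlinarith [mul_nonneg hδ.le (sub_nonneg.mpr ht), hc.le]
  -- energy bound: h'^2 ≥ (2B/3) h^3 beyond T
  have step8 : ∀ t, T ≤ t → (2 * B / 3) * (h t) ^ 3 ≤ (deriv h t) ^ 2 := by
    intro t ht
    have h1 := hhTc t ht
    have h2 := hhTM t ht
    have h3 := hwlb t (le_trans hT0 ht)
    have h4 : -K ≤ w t₀ := hK_eq ▸ neg_abs_le _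
    have h5 : K ≤ 2 * B * c ^ 2 / 3 * h t := by
      have hKM : 2 * B * c ^ 2 / 3 * M = K := by
        rw [hM_eq]; field_simp
      have := mul_le_mul_of_nonneg_left h2 (by positivity : (0:ℝ) ≤ 2 * B * c ^ 2 / 3)
      linarith
    have h6 : c ^ 2 * h t ≤ (h t) ^ 3 := by
      have hcc : c ^ 2 ≤ h t ^ 2 := by nlinarith
      nlinarith [mul_le_mul_of_nonneg_right hcc (hc.trans_le h1).le]
    rw [hwdef] at h3 h4
    simp only at h3 h4
    have h7 := mul_le_mul_of_nonneg_left h6 (by positivity : (0:ℝ) ≤ 2 * B / 3)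
    nlinarith
  -- pointwise derivative bound for z = (√h)⁻¹
  obtain ⟨δ₀, hδ₀_eq⟩ : ∃ d : ℝ, d = Real.sqrt (2 * B / 3) / 2 := ⟨_, rfl⟩
  have hδ₀ : 0 < δ₀ := by
    rw [hδ₀_eq]
    have : 0 < Real.sqrt (2 * B / 3) := Real.sqrt_pos.mpr (by positivity)
    positivity
  obtain ⟨z, hzdef⟩ : ∃ z : ℝ → ℝ, z = fun t => (Real.sqrt (h t))⁻¹ := ⟨_, rfl⟩
  have hzderiv : ∀ t, T ≤ t →
      HasDerivAt z (-(1 / (2 * Real.sqrt (h t)) * deriv h t) / (Real.sqrt (h t)) ^ 2) t ∧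
      -(1 / (2 * Real.sqrt (h t)) * deriv h t) / (Real.sqrt (h t)) ^ 2 ≤ -δ₀ := by
    intro t ht
    have h1 := hhTc t ht
    have hht : 0 < h t := lt_of_lt_of_le hc h1
    have hst : 0 < Real.sqrt (h t) := Real.sqrt_pos.mpr hht
    have hsq : HasDerivAt (fun s => Real.sqrt (h s)) (1 / (2 * Real.sqrt (h t)) * deriv h t) t :=
      (Real.hasDerivAt_sqrt (ne_of_gt hht)).comp t (hd t).hasDerivAt
    constructor
    · rw [hzdef]; exact hsq.inv (ne_of_gt hst)
    have h8 := step8 t ht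
    have hdn := hd_nonneg t (le_trans hT0 ht)
    have hsqh : Real.sqrt (h t) ^ 2 = h t := Real.sq_sqrt hht.le
    have hsb : Real.sqrt (2 * B / 3) ^ 2 = 2 * B / 3 := Real.sq_sqrt (by positivity)
    have hlow : Real.sqrt (2 * B / 3) * h t * Real.sqrt (h t) ≤ deriv h t := by
      have ha : 0 ≤ Real.sqrt (2 * B / 3) * h t * Real.sqrt (h t) := by positivity
      have hsq2 : (Real.sqrt (2 * B / 3) * h t * Real.sqrt (h t)) ^ 2 ≤ (deriv h t) ^ 2 := by
        have heq : (Real.sqrt (2 * B / 3) * h t * Real.sqrt (h t)) ^ 2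
            = 2 * B / 3 * (h t) ^ 3 := by
          rw [mul_pow, mul_pow, hsb, hsqh]; ring
        rw [heq]; exact h8
      calc Real.sqrt (2 * B / 3) * h t * Real.sqrt (h t)
          = Real.sqrt ((Real.sqrt (2 * B / 3) * h t * Real.sqrt (h t)) ^ 2) :=
            (Real.sqrt_sq ha).symm
        _ ≤ Real.sqrt ((deriv h t) ^ 2) := Real.sqrt_le_sqrt hsq2
        _ = deriv h t := Real.sqrt_sq hdn
    rw [neg_div, neg_le_neg_iff, hsqh, hδ₀_eq]
    rw [le_div_iff₀ hht, one_div, inv_mul_eq_div, div_mul_eq_mul_div,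
      le_div_iff₀ (by positivity : (0:ℝ) < 2 * Real.sqrt (h t))]
    nlinarith [hlow, hst.le, hht.le]
  -- z is positive but decreases at uniform speed on [T, ∞): contradiction
  have hzpos : ∀ t, T ≤ t → 0 < z t := by
    intro t ht
    have hht : 0 < h t := lt_of_lt_of_le hc (hhTc t ht)
    rw [hzdef]
    simp only
    exact inv_pos.mpr (Real.sqrt_pos.mpr hht)
  have hanti : AntitoneOn (fun t => z t + δ₀ * t) (Set.Ici T) := by
    apply antitoneOn_of_deriv_nonpos (convex_Ici T)
    · apply ContinuousOn.add _ (Continuous.continuousOn (continuous_const.mul continuous_id))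
      rw [hzdef]
      apply ContinuousOn.inv₀
      · exact (Real.continuous_sqrt.comp hd.continuous).continuousOn
      · intro x hx
        exact ne_of_gt (Real.sqrt_pos.mpr (lt_of_lt_of_le hc (hhTc x hx)))
    · intro x hx
      rw [interior_Ici] at hx
      exact (((hzderiv x hx.le).1.add (((hasDerivAt_id x).const_mul δ₀))).differentiableAt).differentiableWithinAt
    · intro x hx
      rw [interior_Ici] at hx
      obtain ⟨h1, h2⟩ := hzderiv x hx.le
      have : HasDerivAt (fun t => z t + δ₀ * t)
          (-(1 / (2 * Real.sqrt (h x)) * deriv h x) / (Real.sqrt (h x)) ^ 2 + δ₀ * 1) x :=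
        h1.add ((hasDerivAt_id x).const_mul δ₀)
      rw [this.deriv]
      linarith
  -- evaluate at t := T + z T / δ₀ + 1
  have hzT := hzpos T le_rfl
  obtain ⟨t₂, ht₂_eq⟩ : ∃ t₂ : ℝ, t₂ = T + z T / δ₀ + 1 := ⟨_, rfl⟩
  have ht₂ : T ≤ t₂ := by
    have : 0 ≤ z T / δ₀ := by positivity
    rw [ht₂_eq]; linarith
  have hthis := hanti Set.self_mem_Ici ht₂ ht₂
  simp only at hthis
  have hgz := hzpos t₂ ht₂
  have hkey : δ₀ * t₂ = δ₀ * T + z T + δ₀ := by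
    rw [ht₂_eq]; field_simp
  linarith [hthis, hgz, hzT, hδ₀, hkey]

/-- A nonnegative globally-defined function with `h'' ≥ 2B h²` vanishes. -/
lemma zero_of (B : ℝ) (hB : 0 < B) (h : ℝ → ℝ)
    (hd : Differentiable ℝ h) (hd2 : Differentiable ℝ (deriv h))
    (hpos : ∀ t, 0 ≤ h t)
    (hineq : ∀ t, 2 * B * (h t) ^ 2 ≤ deriv (deriv h) t) :
    ∀ t, h t = 0 := by
  by_contra hcon
  push_neg at hcon
  obtain ⟨t₀, ht₀⟩ := hcon
  have hc : 0 < h t₀ := (hpos t₀).lt_of_ne (Ne.symm ht₀)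
  rcases le_or_gt 0 (deriv h t₀) with hs | hs
  · exact core B hB h hd hd2 hpos hineq t₀ hc hs
  · -- reflect
    have hgd : Differentiable ℝ (fun t => h (-t)) := hd.comp differentiable_neg
    have hgderiv : deriv (fun t => h (-t)) = fun t => -deriv h (-t) :=
      funext fun t => deriv_comp_neg h t
    have hgd2 : Differentiable ℝ (deriv (fun t => h (-t))) := by
      rw [hgderiv]; exact (hd2.comp differentiable_neg).neg
    have hg2 : ∀ t, deriv (deriv (fun t => h (-t))) t = deriv (deriv h) (-t) := by
      intro t
      rw [hgderiv, deriv.fun_neg, deriv_comp_neg (deriv h) t, neg_neg]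
    refine core B hB (fun t => h (-t)) hgd hgd2 (fun t => hpos (-t)) ?_ (-t₀) ?_ ?_
    · intro t; rw [hg2 t]; exact hineq (-t)
    · simpa using hc
    · rw [hgderiv]; simp only [neg_neg]; linarith

/-- Any global solution of `u'' = B u³` with `B > 0` vanishes identically. -/
lemma keylemma (B : ℝ) (hB : 0 < B) (u : ℝ → ℝ)
    (h1 : Differentiable ℝ u) (h2 : Differentiable ℝ (deriv u))
    (heq : ∀ t, deriv (deriv u) t = B * (u t) ^ 3) : ∀ t, u t = 0 := by
  have hhd : ∀ t, HasDerivAt (fun s => u s ^ 2) (2 * u t * deriv u t) t := by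
    intro t
    have := (h1 t).hasDerivAt.fun_pow 2
    simpa using this
  have hderiv : deriv (fun s => u s ^ 2) = fun t => 2 * u t * deriv u t :=
    funext fun t => (hhd t).deriv
  have hd : Differentiable ℝ (fun s => u s ^ 2) := fun t => (hhd t).differentiableAt
  have hd2 : Differentiable ℝ (deriv (fun s => u s ^ 2)) := by
    rw [hderiv]; exact (h1.const_mul 2).mul h2
  have hdd : ∀ t, deriv (deriv (fun s => u s ^ 2)) t
      = 2 * deriv u t * deriv u t + 2 * u t * deriv (deriv u) t := by
    intro t
    rw [hderiv]
    have : HasDerivAt (fun s => 2 * u s * deriv u s)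
        (2 * deriv u t * deriv u t + 2 * u t * deriv (deriv u) t) t :=
      ((h1 t).hasDerivAt.const_mul (2:ℝ)).mul (h2 t).hasDerivAt
    exact this.deriv
  have hineq : ∀ t, 2 * B * ((fun s => u s ^ 2) t) ^ 2 ≤ deriv (deriv (fun s => u s ^ 2)) t := by
    intro t
    show 2 * B * (u t ^ 2) ^ 2 ≤ _
    rw [hdd t, heq t]
    nlinarith [sq_nonneg (deriv u t)]
  have hz := zero_of B hB (fun s => u s ^ 2) hd hd2 (fun t => sq_nonneg (u t)) hineq
  intro t
  have := hz t
  simpa using pow_eq_zero_iff (two_ne_zero) |>.mp this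

set_option maxHeartbeats 1600000 in
/-- Cole–Hopf part: every positive global solution of (1.1) with m = 8 is constant. -/
lemma part2_aux :
    ∀ f : ℝ → ℝ, (∀ t, 0 < f t) →
      Differentiable ℝ f → Differentiable ℝ (deriv f) →
      Differentiable ℝ (deriv (deriv f)) →
      (∀ t, (f t) ^ 2 * deriv (deriv (deriv f)) t
        - (2 * ((8:ℝ) + 1) / ((8:ℝ) - 2)) * f t * deriv f t * deriv (deriv f) t
        + ((8:ℝ) ^ 2 / ((8:ℝ) - 2) ^ 2) * (deriv f t) ^ 3 = 0) →
      ∀ s t, f s = f t := by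
  intro f hfpos hf1 hf2 hf3 hpde
  have hfne : ∀ t, f t ≠ 0 := fun t => (hfpos t).ne'
  -- normalize the PDE coefficients
  have hpde' : ∀ t, (f t) ^ 2 * deriv (deriv (deriv f)) t
      = 3 * f t * deriv f t * deriv (deriv f) t - (16 / 9) * (deriv f t) ^ 3 := by
    intro t
    have := hpde t
    norm_num at this
    linarith
  -- Cole–Hopf: u = f'/f
  have hu1 : ∀ t, HasDerivAt (fun s => deriv f s / f s)
      ((deriv (deriv f) t * f t - deriv f t * deriv f t) / f t ^ 2) t :=
    fun t => (hf2 t).hasDerivAt.div (hf1 t).hasDerivAt (hfne t)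
  have hud : deriv (fun s => deriv f s / f s)
      = fun t => (deriv (deriv f) t * f t - deriv f t * deriv f t) / f t ^ 2 :=
    funext fun t => (hu1 t).deriv
  have hu_diff : Differentiable ℝ (fun s => deriv f s / f s) := hf2.div hf1 hfne
  have hNd : ∀ t, HasDerivAt (fun s => deriv (deriv f) s * f s - deriv f s * deriv f s)
      (deriv (deriv (deriv f)) t * f t + deriv (deriv f) t * deriv f t
        - (deriv (deriv f) t * deriv f t + deriv f t * deriv (deriv f) t)) t :=
    fun t => ((hf3 t).hasDerivAt.mul (hf1 t).hasDerivAt).sub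
      ((hf2 t).hasDerivAt.mul (hf2 t).hasDerivAt)
  have hDd : ∀ t, HasDerivAt (fun s => f s ^ 2) (2 * f t * deriv f t) t := by
    intro t
    have := (hf1 t).hasDerivAt.fun_pow 2
    simpa using this
  have hu2 : ∀ t, HasDerivAt (deriv (fun s => deriv f s / f s))
      (((deriv (deriv (deriv f)) t * f t + deriv (deriv f) t * deriv f t
        - (deriv (deriv f) t * deriv f t + deriv f t * deriv (deriv f) t)) * f t ^ 2
        - (deriv (deriv f) t * f t - deriv f t * deriv f t) * (2 * f t * deriv f t))
        / (f t ^ 2) ^ 2) t := by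
    intro t
    rw [hud]
    exact (hNd t).div (hDd t) (pow_ne_zero 2 (hfne t))
  have hu2_diff : Differentiable ℝ (deriv (fun s => deriv f s / f s)) :=
    fun t => (hu2 t).differentiableAt
  have hODE : ∀ t, deriv (deriv (fun s => deriv f s / f s)) t
      = (2 / 9) * ((fun s => deriv f s / f s) t) ^ 3 := by
    intro t
    rw [(hu2 t).deriv]
    simp only
    have h3 := hpde' t
    have hne := hfne t
    field_simp
    linear_combination 9 * h3
  have hz := keylemma (2 / 9) (by norm_num) (fun s => deriv f s / f s)
    hu_diff hu2_diff hODE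
  have hz' : ∀ t, deriv f t = 0 := by
    intro t
    have := hz t
    exact (div_eq_zero_iff.mp this).resolve_right (hfne t)
  exact fun s t => is_const_of_deriv_eq_zero hf1 hz' s t

/-- Non-existence of non-trivial global solutions when A = 0, B > 0 (m = 8). -/
theorem stmt_6 (B : ℝ) (hB : 0 < B) :
    (∀ u : ℝ → ℝ, Differentiable ℝ u → Differentiable ℝ (deriv u) →
      (∀ t, deriv (deriv u) t = B * (u t) ^ 3) → ∀ t, u t = 0)
    ∧
    (∀ f : ℝ → ℝ, (∀ t, 0 < f t) →
      Differentiable ℝ f → Differentiable ℝ (deriv f) →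
      Differentiable ℝ (deriv (deriv f)) →
      (∀ t, (f t) ^ 2 * deriv (deriv (deriv f)) t
        - (2 * ((8:ℝ) + 1) / ((8:ℝ) - 2)) * f t * deriv f t * deriv (deriv f) t
        + ((8:ℝ) ^ 2 / ((8:ℝ) - 2) ^ 2) * (deriv f t) ^ 3 = 0) →
      ∀ s t, f s = f t) :=
  ⟨fun u h1 h2 heq => keylemma B hB u h1 h2 heq, part2_aux⟩
end

section
/- Let A > 0 and B > 0 be real constants. If u : ℝ → ℝ is a twice differentiable function satisfying u''(t) = A·u(t)·u'(t) + B·u(t)³ for all t ∈ ℝ and u'(0) ≥ 0, then u is identically zero. (Equivalently: every solution with initial data u'(0) ≥ 0 and (u(0), u'(0)) ≠ (0,0) blows up in finite time and cannot be extended to all of ℝ.) -/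
open Set Filter Topology


lemma ev_left_neg {f : ℝ → ℝ} {x d : ℝ} (hf : HasDerivAt f d x) (hd : 0 < d) (hfx : f x = 0) :
    ∀ᶠ t in 𝓝[<] x, f t < 0 := by
  have hs := hasDerivAt_iff_tendsto_slope.1 hf
  have h1 : ∀ᶠ t in 𝓝[≠] x, 0 < slope f x t := hs.eventually (lt_mem_nhds hd)
  have h2 : ∀ᶠ t in 𝓝[<] x, 0 < slope f x t :=
    h1.filter_mono (nhdsWithin_mono x fun t ht => ne_of_lt ht)
  filter_upwards [h2, self_mem_nhdsWithin] with t ht ht'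
  have hlt : t - x < 0 := sub_neg.2 ht'
  rw [slope_def_field, hfx, sub_zero, div_pos_iff] at ht
  rcases ht with ⟨h, h'⟩ | ⟨h, h'⟩ <;> linarith

lemma ev_right_pos {f : ℝ → ℝ} {x d : ℝ} (hf : HasDerivAt f d x) (hd : 0 < d) (hfx : f x = 0) :
    ∀ᶠ t in 𝓝[>] x, 0 < f t := by
  have hs := hasDerivAt_iff_tendsto_slope.1 hf
  have h1 : ∀ᶠ t in 𝓝[≠] x, 0 < slope f x t := hs.eventually (lt_mem_nhds hd)
  have h2 : ∀ᶠ t in 𝓝[>] x, 0 < slope f x t :=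
    h1.filter_mono (nhdsWithin_mono x fun t ht => ne_of_gt ht)
  filter_upwards [h2, self_mem_nhdsWithin] with t ht ht'
  have hlt : 0 < t - x := sub_pos.2 ht'
  rw [slope_def_field, hfx, sub_zero, div_pos_iff] at ht
  rcases ht with ⟨h, h'⟩ | ⟨h, h'⟩ <;> linarith




lemma deriv_nonneg_forward (C B : ℝ) (hB : 0 < B) (v : ℝ → ℝ)
    (hv : Differentiable ℝ v) (hv' : Differentiable ℝ (deriv v))
    (hode : ∀ t, deriv (deriv v) t = C * v t * deriv v t + B * v t ^ 3)
    (t₀ : ℝ) (h0 : 0 < v t₀) (h1 : 0 < deriv v t₀) :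
    ∀ t, t₀ ≤ t → 0 ≤ deriv v t := by
  by_contra hcon
  push_neg at hcon
  obtain ⟨T, hT0, hTneg⟩ := hcon
  set S : Set ℝ := {t | t₀ < t ∧ deriv v t ≤ 0} with hS
  have hTS : T ∈ S := by
    refine ⟨lt_of_le_of_ne hT0 ?_, hTneg.le⟩
    rintro rfl; linarith
  have hSne : S.Nonempty := ⟨T, hTS⟩
  have hbdd : BddBelow S := ⟨t₀, fun s hs => hs.1.le⟩
  set c := sInf S with hc
  -- a positive radius around t₀ where deriv v > 0
  have hev : ∀ᶠ s in 𝓝 t₀, 0 < deriv v s :=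
    (hv'.continuous.continuousAt).eventually_mem (lt_mem_nhds h1)
  obtain ⟨δ, hδ, hball⟩ := Metric.eventually_nhds_iff.1 hev
  have hlow : ∀ s ∈ S, t₀ + δ/2 ≤ s := by
    intro s hs
    by_contra hlt
    push_neg at hlt
    have : dist s t₀ < δ := by
      rw [Real.dist_eq, abs_lt]; constructor <;> [linarith [hs.1]; linarith]
    exact absurd (hball this) (not_lt.2 hs.2)
  have hct₀ : t₀ + δ/2 ≤ c := le_csInf hSne hlow
  have hct₀' : t₀ < c := by linarith
  -- deriv v c ≤ 0
  have hcle : deriv v c ≤ 0 := by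
    by_contra hgt
    push_neg at hgt
    have hev2 : ∀ᶠ s in 𝓝 c, 0 < deriv v s :=
      (hv'.continuous.continuousAt).eventually_mem (lt_mem_nhds hgt)
    obtain ⟨δ', hδ', hball'⟩ := Metric.eventually_nhds_iff.1 hev2
    obtain ⟨s, hsS, hslt⟩ := exists_lt_of_csInf_lt hSne (by linarith : sInf S < c + δ')
    have hsge : c ≤ s := csInf_le hbdd hsS
    have : dist s c < δ' := by rw [Real.dist_eq, abs_lt]; constructor <;> linarith
    exact absurd (hball' this) (not_lt.2 hsS.2)
  -- deriv v nonneg strictly before c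
  have hprev : ∀ s, t₀ ≤ s → s < c → 0 ≤ deriv v s := by
    intro s hs hsc
    rcases eq_or_lt_of_le hs with rfl | hlt
    · exact h1.le
    · by_contra hneg
      push_neg at hneg
      exact absurd (csInf_le hbdd ⟨hlt, hneg.le⟩) (not_le.2 hsc)
  -- deriv v c ≥ 0 by left continuity
  have hcge : 0 ≤ deriv v c := by
    have htend : Tendsto (deriv v) (𝓝[<] c) (𝓝 (deriv v c)) :=
      (hv'.continuous.continuousAt).tendsto.mono_left nhdsWithin_le_nhds
    refine ge_of_tendsto htend ?_
    filter_upwards [Ioo_mem_nhdsLT_of_mem ⟨hct₀', le_refl c⟩] with s hs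
    exact hprev s hs.1.le hs.2
  have hczero : deriv v c = 0 := le_antisymm hcle hcge
  -- v c ≥ v t₀ > 0 by monotonicity on [t₀, c]
  have hmono : MonotoneOn v (Icc t₀ c) := by
    apply monotoneOn_of_deriv_nonneg (convex_Icc t₀ c) hv.continuous.continuousOn
      hv.differentiableOn
    intro x hx
    rw [interior_Icc] at hx
    exact hprev x hx.1.le hx.2
  have hvc : 0 < v c := lt_of_lt_of_le h0 (hmono ⟨le_refl t₀, hct₀'.le⟩ ⟨hct₀'.le, le_refl c⟩ hct₀'.le)
  -- second derivative at c is positive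
  have hdd : 0 < deriv (deriv v) c := by
    rw [hode c, hczero]
    have : (0:ℝ) < B * v c ^ 3 := by positivity
    linarith
  have hda : HasDerivAt (deriv v) (deriv (deriv v) c) c := (hv' c).hasDerivAt
  have hleft := ev_left_neg hda hdd hczero
  have hmem : Ioo t₀ c ∈ 𝓝[<] c := Ioo_mem_nhdsLT_of_mem ⟨hct₀', le_refl c⟩
  obtain ⟨s, hs1, hs2⟩ := (hleft.and (eventually_of_mem hmem (fun x hx => hx))).exists
  exact absurd (hprev s hs2.1.le hs2.2) (not_le.2 hs1)




lemma blowup (C B : ℝ) (hB : 0 < B) (v : ℝ → ℝ)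
    (hv : Differentiable ℝ v) (hv' : Differentiable ℝ (deriv v))
    (hode : ∀ t, deriv (deriv v) t = C * v t * deriv v t + B * v t ^ 3)
    (t₀ : ℝ) (h0 : 0 < v t₀) (h1 : 0 < deriv v t₀) : False := by
  have hdpos := deriv_nonneg_forward C B hB v hv hv' hode t₀ h0 h1
  -- v is monotone on [t₀, ∞)
  have hmono : MonotoneOn v (Ici t₀) := by
    apply monotoneOn_of_deriv_nonneg (convex_Ici t₀) hv.continuous.continuousOn
      hv.differentiableOn
    intro x hx
    rw [interior_Ici] at hx
    exact hdpos x (le_of_lt hx)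
  have hva : ∀ t, t₀ ≤ t → v t₀ ≤ v t := fun t ht =>
    hmono (self_mem_Ici) ht ht
  have hvpos : ∀ t, t₀ ≤ t → 0 < v t := fun t ht => lt_of_lt_of_le h0 (hva t ht)
  -- constants
  set s : ℝ := Real.sqrt (C^2 + 8*B) with hs
  have hs2 : s^2 = C^2 + 8*B := Real.sq_sqrt (by positivity)
  have hsC : -C < s := by
    have h1 : Real.sqrt (C^2) < s := Real.sqrt_lt_sqrt (sq_nonneg C) (by linarith)
    have h2 : Real.sqrt (C^2) = |C| := Real.sqrt_sq_eq_abs C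
    have := neg_abs_le C
    linarith [h1, h2 ▸ h1]
  set k : ℝ := (C + s)/4 with hk
  have hkpos : 0 < k := by rw [hk]; linarith
  have hqk : 2*k^2 = C*k + B := by rw [hk]; nlinarith [hs2]
  set μ : ℝ := min (deriv v t₀ / (v t₀)^2) k with hμ
  have hμpos : 0 < μ := lt_min (div_pos h1 (by positivity)) hkpos
  have hμk : μ ≤ k := min_le_right _ _
  have hq : 0 ≤ B + C*μ - 2*μ^2 := by
    nlinarith [mul_nonneg (sub_nonneg.2 hμk) (by positivity : (0:ℝ) ≤ B + 2*k*μ), hkpos]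
  have hμa : μ * (v t₀)^2 ≤ deriv v t₀ := by
    have h := min_le_left (deriv v t₀ / (v t₀)^2) k
    rw [← hμ] at h
    calc μ * (v t₀)^2 ≤ (deriv v t₀ / (v t₀)^2) * (v t₀)^2 := by
          apply mul_le_mul_of_nonneg_right h (by positivity)
      _ = deriv v t₀ := by field_simp
  -- integral antiderivative of v
  set V : ℝ → ℝ := fun t => ∫ x in t₀..t, v x with hV
  have hVd : ∀ t, HasDerivAt V (v t) t := by
    intro t
    exact intervalIntegral.integral_hasDerivAt_right
      (hv.continuous.intervalIntegrable _ _)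
      (hv.continuous.stronglyMeasurableAtFilter _ _)
      hv.continuous.continuousAt
  -- the monotone functional F
  set F : ℝ → ℝ := fun t => (deriv v t - μ * (v t)^2) * Real.exp ((2*μ - C) * V t) with hF
  have hFd : ∀ t, HasDerivAt F
      ((deriv (deriv v) t - μ * (2 * v t ^ 1 * deriv v t)) * Real.exp ((2*μ - C) * V t)
        + (deriv v t - μ * (v t)^2) * (Real.exp ((2*μ - C) * V t) * ((2*μ - C) * v t))) t := by
    intro t
    have h1 : HasDerivAt (fun t => deriv v t - μ * (v t)^2)
        (deriv (deriv v) t - μ * (2 * v t ^ 1 * deriv v t)) t :=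
      ((hv' t).hasDerivAt).sub ((((hv t).hasDerivAt).pow 2).const_mul μ)
    have h2 : HasDerivAt (fun t => Real.exp ((2*μ - C) * V t))
        (Real.exp ((2*μ - C) * V t) * ((2*μ - C) * v t)) t :=
      (((hVd t).const_mul (2*μ - C)).exp)
    exact h1.mul h2
  have hFmono : MonotoneOn F (Ici t₀) := by
    have hFdiff : Differentiable ℝ F := fun t => (hFd t).differentiableAt
    apply monotoneOn_of_deriv_nonneg (convex_Ici t₀) hFdiff.continuous.continuousOn
      hFdiff.differentiableOn
    intro x hx
    rw [interior_Ici] at hx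
    rw [(hFd x).deriv]
    have hvx := hvpos x (le_of_lt hx)
    have key : (deriv (deriv v) x - μ * (2 * v x ^ 1 * deriv v x)) * Real.exp ((2*μ - C) * V x)
        + (deriv v x - μ * (v x)^2) * (Real.exp ((2*μ - C) * V x) * ((2*μ - C) * v x))
        = Real.exp ((2*μ - C) * V x) * ((B + C*μ - 2*μ^2) * v x ^ 3) := by
      rw [hode x]; ring
    rw [key]
    have : 0 ≤ (B + C*μ - 2*μ^2) * v x ^ 3 := mul_nonneg hq (by positivity)
    exact mul_nonneg (Real.exp_pos _).le this
  have hFt₀ : 0 ≤ F t₀ := by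
    have hV0 : V t₀ = 0 := intervalIntegral.integral_same
    rw [hF]
    simp only [hV0, mul_zero, Real.exp_zero, mul_one]
    linarith [hμa]
  have hkey : ∀ t, t₀ ≤ t → μ * (v t)^2 ≤ deriv v t := by
    intro t ht
    have hFt : 0 ≤ F t := le_trans hFt₀ (hFmono self_mem_Ici ht ht)
    have hFt' : 0 ≤ (deriv v t - μ * (v t)^2) * Real.exp ((2*μ - C) * V t) := hFt
    have hexp : 0 < Real.exp ((2*μ - C) * V t) := Real.exp_pos _
    nlinarith [hFt', hexp]
  -- final contradiction via g = -1/v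
  set G : ℝ → ℝ := fun t => -(v t)⁻¹ - μ * t with hG
  have hGmono : MonotoneOn G (Ici t₀) := by
    have hGd : ∀ t ∈ Ici t₀, HasDerivAt G (deriv v t / (v t)^2 - μ) t := by
      intro t ht
      have hne : v t ≠ 0 := ne_of_gt (hvpos t ht)
      have h1 : HasDerivAt (fun t => (v t)⁻¹) (-(deriv v t) / (v t)^2) t :=
        ((hv t).hasDerivAt).inv hne
      have h2 : HasDerivAt (fun t => -(v t)⁻¹) (deriv v t / (v t)^2) t := by
        have := h1.neg
        rw [neg_div, neg_neg] at this; exact this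
      have h3 := h2.sub ((hasDerivAt_id t).const_mul μ)
      rw [mul_one] at h3; exact h3
    apply monotoneOn_of_deriv_nonneg (convex_Ici t₀)
    · -- continuity
      apply ContinuousOn.sub
      · exact (hv.continuous.continuousOn.inv₀ (fun t ht => ne_of_gt (hvpos t ht))).neg
      · exact (continuous_const.mul continuous_id).continuousOn
    · intro x hx
      rw [interior_Ici] at hx
      exact ((hGd x (mem_Ici.2 (le_of_lt hx))).differentiableAt).differentiableWithinAt
    · intro x hx
      rw [interior_Ici] at hx
      rw [(hGd x (mem_Ici.2 (le_of_lt hx))).deriv]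
      have h1 := hkey x (le_of_lt hx)
      have h2 : (0:ℝ) < (v x)^2 := pow_pos (hvpos x (le_of_lt hx)) 2
      rw [sub_nonneg, le_div_iff₀ h2]
      exact h1
  -- evaluate G at a late time
  set T : ℝ := t₀ + 1/(μ * v t₀) + 1 with hT
  have hTpos : 0 < 1/(μ * v t₀) := div_pos one_pos (mul_pos hμpos h0)
  have ht₀T : t₀ ≤ T := by rw [hT]; linarith
  have hGle : G t₀ ≤ G T := hGmono self_mem_Ici ht₀T ht₀T
  have hvT : 0 < v T := hvpos T ht₀T
  have hinvT : 0 < (v T)⁻¹ := inv_pos.2 hvT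
  have hμT : μ * (T - t₀) = (v t₀)⁻¹ + μ := by
    rw [hT]
    field_simp
    ring
  have hGt₀ : G t₀ = -(v t₀)⁻¹ - μ * t₀ := rfl
  have hGT : G T = -(v T)⁻¹ - μ * T := rfl
  rw [hGt₀, hGT] at hGle
  nlinarith [hGle, hinvT, hμT, hμpos]






lemma blowup0 (C B : ℝ) (hB : 0 < B) (v : ℝ → ℝ)
    (hv : Differentiable ℝ v) (hv' : Differentiable ℝ (deriv v))
    (hode : ∀ t, deriv (deriv v) t = C * v t * deriv v t + B * v t ^ 3)
    (t₀ : ℝ) (h0 : 0 < v t₀) (h1 : 0 ≤ deriv v t₀) : False := by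
  rcases eq_or_lt_of_le h1 with heq | hlt
  · -- deriv v t₀ = 0 : bump
    have hdd : 0 < deriv (deriv v) t₀ := by
      rw [hode t₀, ← heq]
      have : (0:ℝ) < B * v t₀ ^ 3 := by positivity
      linarith
    have hda : HasDerivAt (deriv v) (deriv (deriv v) t₀) t₀ := (hv' t₀).hasDerivAt
    have hev1 : ∀ᶠ t in 𝓝[>] t₀, 0 < deriv v t := ev_right_pos hda hdd heq.symm
    have hev2 : ∀ᶠ t in 𝓝[>] t₀, 0 < v t :=
      ((hv.continuous.continuousAt).eventually_mem (lt_mem_nhds h0)).filter_mono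
        nhdsWithin_le_nhds
    obtain ⟨t₁, h1', h2'⟩ := (hev1.and hev2).exists
    exact blowup C B hB v hv hv' hode t₁ h2' h1'
  · exact blowup C B hB v hv hv' hode t₀ h0 hlt

lemma transform (C B : ℝ) (u : ℝ → ℝ) (hu : Differentiable ℝ u)
    (hu' : Differentiable ℝ (deriv u))
    (hode : ∀ t, deriv (deriv u) t = C * u t * deriv u t + B * u t ^ 3)
    (σ ε c : ℝ) (hσ : σ = 1 ∨ σ = -1) (hε : ε = 1 ∨ ε = -1) :
    Differentiable ℝ (fun s => σ * u (c + ε * s)) ∧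
    deriv (fun s => σ * u (c + ε * s)) = (fun s => σ * ε * deriv u (c + ε * s)) ∧
    ∀ s, deriv (deriv (fun s => σ * u (c + ε * s))) s =
      (σ * ε * C) * (σ * u (c + ε * s)) * (deriv (fun s => σ * u (c + ε * s)) s)
        + B * (σ * u (c + ε * s)) ^ 3 := by
  have key : ∀ (τ : ℝ) (f : ℝ → ℝ), Differentiable ℝ f →
      ∀ s, HasDerivAt (fun s => τ * f (c + ε * s)) (τ * ε * deriv f (c + ε * s)) s := by
    intro τ f hf s
    have h1 : HasDerivAt (fun s : ℝ => c + ε * s) ε s := by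
      simpa using ((hasDerivAt_id s).const_mul ε).const_add c
    have h2 : HasDerivAt (fun s => f (c + ε * s)) (deriv f (c + ε * s) * ε) s :=
      ((hf (c + ε * s)).hasDerivAt).comp s h1
    have h3 := h2.const_mul τ
    rw [show τ * ε * deriv f (c + ε * s) = τ * (deriv f (c + ε * s) * ε) by ring]
    exact h3
  have hd : Differentiable ℝ (fun s => σ * u (c + ε * s)) :=
    fun s => (key σ u hu s).differentiableAt
  have hdv : deriv (fun s => σ * u (c + ε * s)) = fun s => (σ * ε) * deriv u (c + ε * s) :=
    funext fun s => (key σ u hu s).deriv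
  refine ⟨hd, by simpa [mul_assoc] using hdv, ?_⟩
  intro s
  rw [hdv]
  have h2 : deriv (fun s => (σ * ε) * deriv u (c + ε * s)) s
      = (σ * ε) * ε * deriv (deriv u) (c + ε * s) := (key (σ * ε) (deriv u) hu' s).deriv
  rw [h2, hode (c + ε * s)]
  rcases hσ with rfl | rfl <;> rcases hε with rfl | rfl <;> ring


/-- A > 0, B > 0: any global solution of u'' = A u u' + B u³ with u'(0) ≥ 0
is identically zero. -/
theorem stmt_7 (A B : ℝ) (hA : 0 < A) (hB : 0 < B)
    (u : ℝ → ℝ) (hu : Differentiable ℝ u) (hu' : Differentiable ℝ (deriv u))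
    (hode : ∀ t, deriv (deriv u) t = A * u t * deriv u t + B * (u t) ^ 3)
    (hinit : 0 ≤ deriv u 0) :
    ∀ t, u t = 0 := by
  have hode' : ∀ t, deriv (deriv u) t = A * u t * deriv u t + B * u t ^ 3 := hode
  have main : ∀ (σ ε c s₀ : ℝ), (σ = 1 ∨ σ = -1) → (ε = 1 ∨ ε = -1) →
      0 < σ * u (c + ε * s₀) → 0 ≤ σ * ε * deriv u (c + ε * s₀) → False := by
    intro σ ε c s₀ hσ hε hpos hder
    obtain ⟨hd, hdv, hodev⟩ := transform A B u hu hu' hode' σ ε c hσ hε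
    have haff : Differentiable ℝ (fun s : ℝ => c + ε * s) :=
      (differentiable_id.const_mul ε).const_add c
    have hd2 : Differentiable ℝ (deriv (fun s => σ * u (c + ε * s))) := by
      rw [hdv]
      exact (hu'.comp haff).const_mul (σ * ε)
    refine blowup0 (σ * ε * A) B hB _ hd hd2 hodev s₀ hpos ?_
    rw [hdv]
    exact hder
  intro t
  by_contra hne
  rcases lt_trichotomy (u t) 0 with hlt | heq | hgt
  · rcases lt_or_ge (deriv u t) 0 with hd | hd
    · -- u t < 0, u' t < 0 : σ=-1, ε=1, c=0, s₀=t
      refine main (-1) 1 0 t (Or.inr rfl) (Or.inl rfl) ?_ ?_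
      · simp only [zero_add, one_mul]; linarith
      · simp only [zero_add, one_mul, mul_one]; linarith
    · -- u t < 0, u' t ≥ 0 : σ=-1, ε=-1, c=0, s₀=-t
      refine main (-1) (-1) 0 (-t) (Or.inr rfl) (Or.inr rfl) ?_ ?_
      · simp only [zero_add, neg_mul, neg_neg, one_mul]; linarith
      · simp only [zero_add, neg_mul, neg_neg, one_mul]; linarith
  · exact hne heq
  · rcases lt_or_ge (deriv u t) 0 with hd | hd
    · -- u t > 0, u' t < 0 : σ=1, ε=-1, c=t, s₀=0
      refine main 1 (-1) t 0 (Or.inl rfl) (Or.inr rfl) ?_ ?_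
      · simp only [mul_zero, neg_zero, add_zero, one_mul]; linarith
      · simp only [mul_zero, neg_zero, add_zero, one_mul, neg_mul]; linarith
    · -- u t > 0, u' t ≥ 0 : σ=1, ε=1, c=0, s₀=t
      refine main 1 1 0 t (Or.inl rfl) (Or.inl rfl) ?_ ?_
      · simp only [zero_add, one_mul]; linarith
      · simp only [zero_add, one_mul]; linarith
end

section
/- Let A > 0 and B > 0 be real constants, and let k₊ = (−A + √(A² + 8B))/4 be the positive root of 2k² + A·k − B = 0. Then there is no twice differentiable function u : ℝ → ℝ satisfying u''(t) = A·u(t)·u'(t) + B·u(t)³ for all t ∈ ℝ with u'(0) < 0 and u'(0) + k₊·u(0)² ≤ 0; that is, every such solution blows up in finite time. -/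
/-- If `u' ≤ -k u²` globally (k > 0) and `u` is positive somewhere, contradiction
(backward Riccati blow-up). -/
lemma stmt8_auxA (k : ℝ) (hk : 0 < k) (u : ℝ → ℝ) (hu : Differentiable ℝ u)
    (h : ∀ t, deriv u t ≤ -(k * u t ^ 2)) (t₀ : ℝ) (h₀ : 0 < u t₀) : False := by
  have hanti : Antitone u := antitone_of_deriv_nonpos hu fun x =>
    (h x).trans (by nlinarith [sq_nonneg (u x)])
  have hpos : ∀ t ≤ t₀, 0 < u t := fun t ht => lt_of_lt_of_le h₀ (hanti ht)
  set ψ : ℝ → ℝ := fun t => (u t)⁻¹ - k * t with hψ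
  have hmono : MonotoneOn ψ (Set.Iic t₀) := by
    apply monotoneOn_of_deriv_nonneg (convex_Iic t₀)
    · exact ((hu.continuous.continuousOn.inv₀ fun t ht => (hpos t ht).ne').sub
        (continuous_const.mul continuous_id).continuousOn)
    · intro x hx
      rw [interior_Iic] at hx
      exact (((hu x).inv (hpos x hx.le).ne').sub
        ((differentiableAt_const _).mul differentiableAt_fun_id)).differentiableWithinAt
    · intro x hx
      rw [interior_Iic] at hx
      have hux : u x ≠ 0 := (hpos x hx.le).ne'
      have hdψ : HasDerivAt ψ (-deriv u x / u x ^ 2 - k) x := by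
        have h1 : HasDerivAt (fun t => (u t)⁻¹) (-deriv u x / u x ^ 2) x :=
          (hu x).hasDerivAt.inv hux
        have h2 : HasDerivAt (fun t : ℝ => k * t) k x := by
          simpa using (hasDerivAt_id x).const_mul k
        exact h1.sub h2
      rw [hdψ.deriv]
      have h2 : (0:ℝ) < u x ^ 2 := by positivity
      have h3 := h x
      rw [sub_nonneg, le_div_iff₀ h2]
      nlinarith
  set t : ℝ := t₀ - (u t₀ * k)⁻¹ - 1/k with htdef
  have hle : t ≤ t₀ := by
    have h1 : 0 < (u t₀ * k)⁻¹ := by positivity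
    have h2 : 0 < 1/k := by positivity
    rw [htdef]; linarith
  have hmt := hmono (Set.mem_Iic.2 hle) (Set.mem_Iic.2 le_rfl) hle
  have h1 : (0:ℝ) < (u t)⁻¹ := inv_pos.2 (hpos t hle)
  have h2 : ψ t = (u t)⁻¹ - k * t := rfl
  have h3 : ψ t₀ = (u t₀)⁻¹ - k * t₀ := rfl
  have h4 : k * (u t₀ * k)⁻¹ = (u t₀)⁻¹ := by
    field_simp
  have h5 : k * (1/k) = 1 := by field_simp
  rw [h2, h3, htdef] at hmt
  nlinarith [hmt]

/-- Same conclusion if `u` is merely nonzero somewhere, by the symmetry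
`v t = -u (2 t₀ - t)`. -/
lemma stmt8_auxB (k : ℝ) (hk : 0 < k) (u : ℝ → ℝ) (hu : Differentiable ℝ u)
    (h : ∀ t, deriv u t ≤ -(k * u t ^ 2)) (t₀ : ℝ) (h₀ : u t₀ ≠ 0) : False := by
  rcases h₀.lt_or_gt with hneg | hpos
  · set v : ℝ → ℝ := fun t => -u (2 * t₀ - t) with hv
    have hdv : ∀ t, HasDerivAt v (deriv u (2 * t₀ - t)) t := by
      intro t
      have hinner : HasDerivAt (fun t : ℝ => 2 * t₀ - t) (-1) t := by
        simpa using (hasDerivAt_id t).const_sub (2 * t₀)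
      have := ((hu (2 * t₀ - t)).hasDerivAt.comp t hinner).fun_neg
      simpa using this
    have hvdiff : Differentiable ℝ v := fun t => (hdv t).differentiableAt
    have hvderiv : ∀ t, deriv v t = deriv u (2 * t₀ - t) := fun t => (hdv t).deriv
    refine stmt8_auxA k hk v hvdiff (fun t => ?_) t₀ (by
      have he : (2:ℝ) * t₀ - t₀ = t₀ := by ring
      simp only [hv, he]
      linarith)
    rw [hvderiv]
    have := h (2 * t₀ - t)
    simpa [hv] using this
  · exact stmt8_auxA k hk u hu h t₀ hpos

/-- A > 0, B > 0: no global solution with u'(0) < 0 and g_{k₊}(u(0)) ≤ 0. -/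
theorem stmt_8 (A B : ℝ) (hA : 0 < A) (hB : 0 < B)
    (kp : ℝ) (hkp : kp = (-A + Real.sqrt (A ^ 2 + 8 * B)) / 4) :
    ¬ ∃ u : ℝ → ℝ, Differentiable ℝ u ∧ Differentiable ℝ (deriv u) ∧
      (∀ t, deriv (deriv u) t = A * u t * deriv u t + B * (u t) ^ 3) ∧
      deriv u 0 < 0 ∧ deriv u 0 + kp * (u 0) ^ 2 ≤ 0 := by
  rintro ⟨u, hu, hu', hode, hneg, hg0⟩
  -- arithmetic facts about kp
  have hsq : Real.sqrt (A ^ 2 + 8 * B) ^ 2 = A ^ 2 + 8 * B :=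
    Real.sq_sqrt (by positivity)
  have hkpos : 0 < kp := by
    have : A < Real.sqrt (A ^ 2 + 8 * B) := by
      nlinarith [Real.sqrt_nonneg (A ^ 2 + 8 * B), hsq]
    rw [hkp]; linarith
  have hkey : B = kp * (A + 2 * kp) := by
    subst hkp; nlinarith [hsq]
  set c : ℝ := A + 2 * kp with hc
  set g : ℝ → ℝ := fun t => deriv u t + kp * u t ^ 2 with hgdef
  have hgdiff : Differentiable ℝ g := hu'.add (((differentiable_const kp).mul (hu.pow 2)))
  have hgderiv : ∀ t, deriv g t = c * u t * g t := by
    intro t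
    have h1 : deriv g t = deriv (deriv u) t + kp * (2 * u t * deriv u t) := by
      rw [hgdef]
      rw [deriv_fun_add (hu' t) (((hu t).fun_pow 2).const_mul kp)]
      rw [deriv_const_mul _ ((hu t).fun_pow 2)]
      congr 1
      congr 1
      rw [((hu t).hasDerivAt.fun_pow 2).deriv]
      norm_num
    rw [h1, hode t, hgdef, hc]
    simp only
    rw [hkey, hc]
    ring
  -- the integrating factor
  set F : ℝ → ℝ := fun t => ∫ s in (0:ℝ)..t, c * u s with hF
  have hcont : Continuous (fun s => c * u s) := continuous_const.mul hu.continuous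
  have hFd : ∀ t, HasDerivAt F (c * u t) t := by
    intro t
    exact intervalIntegral.integral_hasDerivAt_right
      (hcont.intervalIntegrable _ _)
      hcont.aestronglyMeasurable.stronglyMeasurableAtFilter
      hcont.continuousAt
  set H : ℝ → ℝ := fun t => g t * Real.exp (-F t) with hH
  have hHd : ∀ t, HasDerivAt H 0 t := by
    intro t
    have h1 : HasDerivAt (fun t => Real.exp (-F t)) (Real.exp (-F t) * (-(c * u t))) t :=
      (((hFd t).neg).exp)
    have h2 : HasDerivAt g (c * u t * g t) t := by
      have := (hgdiff t).hasDerivAt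
      rwa [hgderiv t] at this
    have := h2.fun_mul h1
    exact this.congr_deriv (by ring)
  have hHconst : ∀ t, H t = H 0 := by
    intro t
    exact is_const_of_deriv_eq_zero (fun x => (hHd x).differentiableAt)
      (fun x => (hHd x).deriv) t 0
  have hF0 : F 0 = 0 := by simp [hF]
  have hH0 : H 0 = g 0 := by simp [hH, hF0]
  have hgle : ∀ t, g t ≤ 0 := by
    intro t
    have h1 := hHconst t
    rw [hH0] at h1
    have h2 : g t = g 0 * Real.exp (F t) := by
      have h3 : g t * Real.exp (-F t) = g 0 := h1
      have h4 : Real.exp (-F t) * Real.exp (F t) = 1 := by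
        rw [← Real.exp_add]; simp
      calc g t = g t * (Real.exp (-F t) * Real.exp (F t)) := by rw [h4]; ring
        _ = (g t * Real.exp (-F t)) * Real.exp (F t) := by ring
        _ = g 0 * Real.exp (F t) := by rw [h3]
    rw [h2]
    have : g 0 ≤ 0 := hg0
    exact mul_nonpos_of_nonpos_of_nonneg this (Real.exp_pos _).le
  have hdle : ∀ t, deriv u t ≤ -(kp * u t ^ 2) := by
    intro t
    have := hgle t
    simp only [hgdef] at this
    linarith
  -- find a point where u is nonzero
  by_cases h0 : u 0 = 0
  · -- then g 0 = deriv u 0 < 0, so g < 0 everywhere, u strictly decreasing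
    have hg0' : g 0 < 0 := by simp [hgdef, h0]; linarith [hneg]
    have hglt : ∀ t, g t < 0 := by
      intro t
      have h1 := hHconst t
      rw [hH0] at h1
      have h2 : g t = g 0 * Real.exp (F t) := by
        have h3 : g t * Real.exp (-F t) = g 0 := h1
        have h4 : Real.exp (-F t) * Real.exp (F t) = 1 := by
          rw [← Real.exp_add]; simp
        calc g t = g t * (Real.exp (-F t) * Real.exp (F t)) := by rw [h4]; ring
          _ = (g t * Real.exp (-F t)) * Real.exp (F t) := by ring
          _ = g 0 * Real.exp (F t) := by rw [h3]
      rw [h2]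
      exact mul_neg_of_neg_of_pos hg0' (Real.exp_pos _)
    have hstrict : StrictAnti u := by
      apply strictAnti_of_deriv_neg
      intro x
      have := hglt x
      simp only [hgdef] at this
      nlinarith [sq_nonneg (u x)]
    have h1 : u 1 < u 0 := hstrict (by norm_num)
    rw [h0] at h1
    exact stmt8_auxB kp hkpos u hu hdle 1 h1.ne
  · exact stmt8_auxB kp hkpos u hu hdle 0 h0
end

section
/- Let A > 0 and B > 0 be real constants, and let k₊ = (−A + √(A² + 8B))/4 be the positive root of 2k² + A·k − B = 0. Then there is no twice differentiable function u : ℝ → ℝ satisfying u''(t) = A·u(t)·u'(t) + B·u(t)³ for all t ∈ ℝ with u'(0) < 0 and u'(0) + k₊·u(0)² > 0; that is, every such solution blows up in finite time. -/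
/-- Solutions of `g' = c g` with `g 0 > 0` stay positive. -/
private lemma pos_of_ode (c g : ℝ → ℝ) (hc : Continuous c)
    (hg : ∀ t, HasDerivAt g (c t * g t) t) (h0 : 0 < g 0) (t : ℝ) : 0 < g t := by
  set V : ℝ → ℝ := fun t => ∫ s in (0:ℝ)..t, c s with hV
  have hVd : ∀ x, HasDerivAt V (c x) x := fun x =>
    (hc.integral_hasStrictDerivAt 0 x).hasDerivAt
  set F : ℝ → ℝ := fun t => g t * Real.exp (-V t) with hF
  have hFd : ∀ x, HasDerivAt F 0 x := by
    intro x
    have h1 : HasDerivAt (fun s => Real.exp (-V s)) (Real.exp (-V x) * -(c x)) x :=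
      ((hVd x).neg).exp
    have h2 : HasDerivAt (fun s => g s * Real.exp (-V s)) _ x := (hg x).mul h1
    convert h2 using 1
    ring
  have hconst : F t = F 0 :=
    is_const_of_deriv_eq_zero (fun y => (hFd y).differentiableAt)
      (fun y => (hFd y).deriv) t 0
  have hV0 : V 0 = 0 := by simp [hV]
  have hx : g t * Real.exp (-V t) = g 0 := by
    simpa [hF, hV0] using hconst
  nlinarith [Real.exp_pos (-V t), hx]

/-- A never-vanishing continuous function negative at 0 is negative everywhere. -/
private lemma neg_everywhere {u : ℝ → ℝ} (hu : Continuous u) (hne : ∀ t, u t ≠ 0)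
    (h0 : u 0 < 0) : ∀ t, u t < 0 := by
  intro t
  by_contra h
  push_neg at h
  have ht : 0 < u t := lt_of_le_of_ne h (Ne.symm (hne t))
  rcases le_total 0 t with h1 | h1
  · obtain ⟨s, _, hs⟩ := intermediate_value_Icc h1 hu.continuousOn
      (show (0:ℝ) ∈ Set.Icc (u 0) (u t) from ⟨h0.le, ht.le⟩)
    exact hne s hs
  · obtain ⟨s, _, hs⟩ := intermediate_value_Icc' h1 hu.continuousOn
      (show (0:ℝ) ∈ Set.Icc (u 0) (u t) from ⟨h0.le, ht.le⟩)
    exact hne s hs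

/-- Main blow-up argument, in the case `u 0 < 0`. -/
private lemma key (A B k l : ℝ) (hk : 0 < k) (hl : l < 0)
    (hsum : A + 2*k = -(2*l)) (hsum' : A + 2*l = -(2*k))
    (hBk : B = 2*k^2 + A*k) (hBl : B = 2*l^2 + A*l)
    (u : ℝ → ℝ) (hu : Differentiable ℝ u) (hu' : Differentiable ℝ (deriv u))
    (hode : ∀ t, deriv (deriv u) t = A * u t * deriv u t + B * (u t) ^ 3)
    (hd0 : deriv u 0 < 0) (hg0 : deriv u 0 + k * (u 0) ^ 2 > 0)
    (hu0 : u 0 < 0) : False := by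
  have hdd : ∀ t, HasDerivAt (deriv u) (A * u t * deriv u t + B * u t ^ 3) t := by
    intro t
    have h1 := (hu' t).hasDerivAt
    rwa [hode t] at h1
  -- derivative of g = u' + k u²
  have hdg : ∀ t, HasDerivAt (fun s => deriv u s + k * u s ^ 2)
      ((fun t => -(2*l) * u t) t * (deriv u t + k * u t ^ 2)) t := by
    intro t
    have h2 : HasDerivAt (fun s => k * u s ^ 2) (k * ((2:ℕ) * u t ^ 1 * deriv u t)) t :=
      ((hu t).hasDerivAt.pow 2).const_mul k
    have h3 : HasDerivAt (fun s => deriv u s + k * u s ^ 2) _ t := (hdd t).add h2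
    convert h3 using 1
    push_cast
    linear_combination (-(u t * deriv u t) - k * u t^3) * hsum - u t^3 * hBk
  -- derivative of h = u' + l u²
  have hdh : ∀ t, HasDerivAt (fun s => deriv u s + l * u s ^ 2)
      (-(2*k) * u t * (deriv u t + l * u t ^ 2)) t := by
    intro t
    have h2 : HasDerivAt (fun s => l * u s ^ 2) (l * ((2:ℕ) * u t ^ 1 * deriv u t)) t :=
      ((hu t).hasDerivAt.pow 2).const_mul l
    have h3 : HasDerivAt (fun s => deriv u s + l * u s ^ 2) _ t := (hdd t).add h2
    convert h3 using 1
    push_cast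
    linear_combination (-(u t * deriv u t) - l * u t^3) * hsum' - u t^3 * hBl
  have hcu : Continuous u := hu.continuous
  -- g > 0 everywhere
  have gpos : ∀ t, 0 < deriv u t + k * u t ^ 2 := by
    apply pos_of_ode (fun t => -(2*l) * u t) _ (continuous_const.mul hcu) hdg hg0
  -- H := -(u' + l u²) > 0 everywhere
  have Hpos : ∀ t, 0 < -(deriv u t + l * u t ^ 2) := by
    apply pos_of_ode (fun t => -(2*k) * u t) _ (continuous_const.mul hcu)
    · intro t
      have : HasDerivAt (fun s => -(deriv u s + l * u s ^ 2)) _ t := (hdh t).neg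
      convert this using 1
      ring
    · nlinarith [sq_nonneg (u 0)]
  -- u never vanishes, hence stays negative
  have hne : ∀ t, u t ≠ 0 := by
    intro t h
    have h1 := gpos t
    have h2 := Hpos t
    rw [h] at h1 h2
    simp at h1 h2
    linarith
  have uneg : ∀ t, u t < 0 := neg_everywhere hcu hne hu0
  -- setup for the Riccati blow-up
  have hkl : 0 < k - l := by linarith
  set α : ℝ := 2 * k * Real.sqrt (1/(k-l)) with hα
  have hαpos : 0 < α := by
    apply mul_pos (by linarith)
    exact Real.sqrt_pos.2 (by positivity)
  set H : ℝ → ℝ := fun t => -(deriv u t + l * u t ^ 2) with hH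
  have hHd : ∀ t, HasDerivAt H (2*k * u t * (deriv u t + l * u t ^ 2)) t := by
    intro t
    have : HasDerivAt (fun s => -(deriv u s + l * u s ^ 2)) _ t := (hdh t).neg
    convert this using 1
    ring
  -- key differential inequality: H' ≥ α √H H
  have hkey : ∀ t, α * Real.sqrt (H t) * H t ≤ 2*k * u t * (deriv u t + l * u t ^ 2) := by
    intro t
    have h1 : H t * (1/(k-l)) ≤ u t ^ 2 := by
      rw [mul_one_div, div_le_iff₀ hkl]
      simp only [hH]
      nlinarith [gpos t]
    have e3 : Real.sqrt (H t * (1/(k-l))) ≤ -u t := by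
      calc Real.sqrt (H t * (1/(k-l))) ≤ Real.sqrt (u t ^ 2) := Real.sqrt_le_sqrt h1
        _ = |u t| := Real.sqrt_sq_eq_abs _
        _ = -u t := abs_of_neg (uneg t)
    have e4 : Real.sqrt (H t * (1/(k-l))) = Real.sqrt (H t) * Real.sqrt (1/(k-l)) :=
      Real.sqrt_mul (Hpos t).le _
    have e5 : 2*k * u t * (deriv u t + l * u t ^ 2) = (2*k * H t) * (-u t) := by
      simp only [hH]; ring
    rw [e5]
    have e6 : (2*k * H t) * Real.sqrt (H t * (1/(k-l))) ≤ (2*k * H t) * (-u t) :=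
      mul_le_mul_of_nonneg_left e3 (le_of_lt (mul_pos (by linarith) (Hpos t)))
    calc α * Real.sqrt (H t) * H t = (2*k * H t) * (Real.sqrt (H t) * Real.sqrt (1/(k-l))) := by
          rw [hα]; ring
      _ = (2*k * H t) * Real.sqrt (H t * (1/(k-l))) := by rw [e4]
      _ ≤ (2*k * H t) * (-u t) := e6
  -- φ := (√H)⁻¹ has derivative ≤ -α/2
  set φ : ℝ → ℝ := fun t => (Real.sqrt (H t))⁻¹ with hφ
  have hsqrtpos : ∀ t, 0 < Real.sqrt (H t) := fun t => Real.sqrt_pos.2 (Hpos t)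
  have hφd : ∀ t, HasDerivAt φ
      (-(2*k * u t * (deriv u t + l * u t ^ 2) / (2 * Real.sqrt (H t))) / Real.sqrt (H t) ^ 2) t := by
    intro t
    exact ((hHd t).sqrt (Hpos t).ne').inv (hsqrtpos t).ne'
  have hφpos : ∀ t, 0 < φ t := fun t => by
    simp only [hφ]; exact inv_pos.2 (hsqrtpos t)
  have hφle : ∀ t, (-(2*k * u t * (deriv u t + l * u t ^ 2) / (2 * Real.sqrt (H t))) / Real.sqrt (H t) ^ 2) ≤ -(α/2) := by
    intro t
    have hs := hsqrtpos t
    have hHp := Hpos t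
    have hk2 : Real.sqrt (H t) ^ 2 = H t := Real.sq_sqrt hHp.le
    rw [hk2, neg_div, neg_le_neg_iff, div_div, le_div_iff₀ (by positivity)]
    calc α / 2 * (2 * Real.sqrt (H t) * H t) = α * Real.sqrt (H t) * H t := by ring
      _ ≤ 2*k * u t * (deriv u t + l * u t ^ 2) := hkey t
  -- ψ := φ + (α/2) t is antitone, contradiction
  set ψ : ℝ → ℝ := fun t => φ t + α/2 * t with hψ
  have hψd : ∀ t, HasDerivAt ψ
      ((-(2*k * u t * (deriv u t + l * u t ^ 2) / (2 * Real.sqrt (H t))) / Real.sqrt (H t) ^ 2) + α/2) t := by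
    intro t
    have h2 : HasDerivAt (fun s : ℝ => α/2 * s) (α/2) t := by
      simpa using (hasDerivAt_id t).const_mul (α/2)
    exact (hφd t).add h2
  have hanti : Antitone ψ := by
    apply antitone_of_deriv_nonpos (fun t => (hψd t).differentiableAt)
    intro t
    rw [(hψd t).deriv]
    linarith [hφle t]
  set T : ℝ := 2 * φ 0 / α + 1 with hT
  have hT0 : 0 ≤ T := by positivity
  have h1 := hanti hT0
  have h2 : ψ T = φ T + α/2 * T := rfl
  have h3 : ψ 0 = φ 0 := by simp [hψ]
  rw [h2, h3, hT] at h1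
  have hc : α/2 * (2 * φ 0 / α + 1) = φ 0 + α/2 := by
    field_simp
  rw [hc] at h1
  linarith [hφpos (2 * φ 0 / α + 1)]

private lemma key' (A B k l : ℝ) (hk : 0 < k) (hl : l < 0)
    (hsum : A + 2*k = -(2*l)) (hsum' : A + 2*l = -(2*k))
    (hBk : B = 2*k^2 + A*k) (hBl : B = 2*l^2 + A*l)
    (u : ℝ → ℝ) (hu : Differentiable ℝ u) (hu' : Differentiable ℝ (deriv u))
    (hode : ∀ t, deriv (deriv u) t = A * u t * deriv u t + B * (u t) ^ 3)
    (hd0 : deriv u 0 < 0) (hg0 : deriv u 0 + k * (u 0) ^ 2 > 0) : False := by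
  have hu0ne : u 0 ≠ 0 := by
    intro h
    rw [h] at hg0
    simp at hg0
    linarith
  rcases lt_or_gt_of_ne hu0ne with h0 | h0
  · exact key A B k l hk hl hsum hsum' hBk hBl u hu hu' hode hd0 hg0 h0
  · -- time-reverse and negate: w t = -u (-t)
    set w : ℝ → ℝ := fun t => -u (-t) with hw
    have hwd : ∀ t, HasDerivAt w (deriv u (-t)) t := by
      intro t
      have h1 : HasDerivAt (fun x : ℝ => -x) (-1) t := hasDerivAt_neg t
      have h2 := ((hu (-t)).hasDerivAt).comp t h1
      have h3 : HasDerivAt (fun s => -u (-s)) _ t := h2.neg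
      convert h3 using 1
      ring
    have hwderiv : deriv w = fun t => deriv u (-t) := funext fun t => (hwd t).deriv
    have hwdiff : Differentiable ℝ w := fun t => (hwd t).differentiableAt
    have hwd2 : ∀ t, HasDerivAt (fun s => deriv u (-s)) (deriv (deriv u) (-t) * (-1)) t := by
      intro t
      exact ((hu' (-t)).hasDerivAt).comp t (hasDerivAt_neg t)
    have hwdiff' : Differentiable ℝ (deriv w) := by
      rw [hwderiv]
      exact fun t => (hwd2 t).differentiableAt
    have hwode : ∀ t, deriv (deriv w) t = A * w t * deriv w t + B * (w t) ^ 3 := by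
      intro t
      rw [hwderiv]
      rw [(hwd2 t).deriv, hode (-t)]
      simp only [hw]
      ring
    have hwd0 : deriv w 0 = deriv u 0 := by rw [hwderiv]; simp
    apply key A B k l hk hl hsum hsum' hBk hBl w hwdiff hwdiff' hwode
    · rw [hwd0]; exact hd0
    · rw [hwd0]
      have : w 0 = -u 0 := by simp [hw]
      rw [this]
      ring_nf
      ring_nf at hg0
      exact hg0
    · simp only [hw, neg_zero]
      linarith

/-- A > 0, B > 0: no global solution with u'(0) < 0 and g_{k₊}(u(0)) > 0. -/
theorem stmt_9 (A B : ℝ) (hA : 0 < A) (hB : 0 < B)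
    (kp : ℝ) (hkp : kp = (-A + Real.sqrt (A ^ 2 + 8 * B)) / 4) :
    ¬ ∃ u : ℝ → ℝ, Differentiable ℝ u ∧ Differentiable ℝ (deriv u) ∧
      (∀ t, deriv (deriv u) t = A * u t * deriv u t + B * (u t) ^ 3) ∧
      deriv u 0 < 0 ∧ deriv u 0 + kp * (u 0) ^ 2 > 0 := by
  rintro ⟨u, hu, hu', hode, hd0, hg0⟩
  set D : ℝ := Real.sqrt (A ^ 2 + 8 * B) with hD
  have hD2 : D ^ 2 = A ^ 2 + 8 * B := Real.sq_sqrt (by positivity)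
  have hDnn : 0 ≤ D := Real.sqrt_nonneg _
  have hDA : A < D := by nlinarith
  have hkpos : 0 < kp := by rw [hkp]; linarith
  set l : ℝ := (-A - D) / 4 with hl
  have hlneg : l < 0 := by rw [hl]; linarith
  have hsum : A + 2*kp = -(2*l) := by rw [hkp, hl]; ring
  have hsum' : A + 2*l = -(2*kp) := by rw [hkp, hl]; ring
  have hBk : B = 2*kp^2 + A*kp := by rw [hkp]; linear_combination -hD2 / 8
  have hBl : B = 2*l^2 + A*l := by rw [hl]; linear_combination -hD2 / 8
  exact key' A B kp l hkpos hlneg hsum hsum' hBk hBl u hu hu' hode hd0 hg0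
end

section
/- Let A > 0 and B > 0 be real constants. If u : ℝ → ℝ is a twice differentiable function satisfying u''(t) = A·u(t)·u'(t) + B·u(t)³ for all t ∈ ℝ, then u is identically zero. Consequently, for each integer m with 5 ≤ m ≤ 7, every positive three-times differentiable global solution f : ℝ → ℝ of f²·f''' − (2(m+1)/(m−2))·f·f'·f'' + (m²/(m−2)²)·f'³ = 0 is constant. -/
open Set

/-- Blow-up lemma: if `u > 0` and `u' ≥ σ u²` on `[t₁,∞)` with `σ>0`, contradiction. -/
lemma blowup_s10 {u u₁ : ℝ → ℝ} {σ t₁ : ℝ} (hσ : 0 < σ)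
    (hu : ∀ t, HasDerivAt u (u₁ t) t)
    (hpos : ∀ t, t₁ ≤ t → 0 < u t)
    (hge : ∀ t, t₁ ≤ t → σ * u t ^ 2 ≤ u₁ t) : False := by
  set v : ℝ → ℝ := fun t => (u t)⁻¹ + σ * t with hv
  have hvd : ∀ t, t₁ ≤ t → HasDerivAt v (-(u₁ t) / u t ^ 2 + σ) t := by
    intro t ht
    exact ((hu t).inv (hpos t ht).ne').add ((hasDerivAt_id t).const_mul σ |>.congr_deriv (by ring))
  have hmono : AntitoneOn v (Ici t₁) := by
    apply antitoneOn_of_deriv_nonpos (convex_Ici t₁)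
    · intro t ht
      exact ((hvd t ht).continuousAt).continuousWithinAt
    · intro t ht
      rw [interior_Ici] at ht
      exact (hvd t (le_of_lt ht)).differentiableAt.differentiableWithinAt
    · intro t ht
      rw [interior_Ici] at ht
      rw [(hvd t ht.le).deriv]
      have h1 := hge t ht.le
      have h2 : (0:ℝ) < u t ^ 2 := pow_pos (hpos t ht.le) 2
      rw [div_add' _ _ _ h2.ne']
      apply div_nonpos_of_nonpos_of_nonneg _ h2.le
      nlinarith
  have key : ∀ t, t₁ ≤ t → v t ≤ v t₁ := fun t ht => hmono self_mem_Ici ht ht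
  set T : ℝ := t₁ + ((u t₁)⁻¹ + 1) / σ with hT
  have hut₁ : 0 < (u t₁)⁻¹ := inv_pos.mpr (hpos t₁ le_rfl)
  have hTt₁ : t₁ ≤ T := by
    rw [hT]; nlinarith [div_pos (by linarith : (0:ℝ) < (u t₁)⁻¹ + 1) hσ]
  have := key T hTt₁
  have huT : 0 < (u T)⁻¹ := inv_pos.mpr (hpos T hTt₁)
  rw [hv] at this
  simp only [hT] at this
  have : (u (t₁ + ((u t₁)⁻¹ + 1) / σ))⁻¹ ≤ -1 := by
    have hσ' : σ * (((u t₁)⁻¹ + 1) / σ) = (u t₁)⁻¹ + 1 := by field_simp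
    nlinarith
  rw [hT] at huT; linarith

/-- Sign-constancy: `P' = g·P` with `g` continuous gives `P t = P 0 · exp(∫₀ᵗ g)`. -/
lemma sign_exp {P g : ℝ → ℝ} (hg : Continuous g)
    (hP : ∀ t, HasDerivAt P (g t * P t) t) :
    ∀ t, P t = P 0 * Real.exp (∫ s in (0:ℝ)..t, g s) := by
  set G : ℝ → ℝ := fun t => ∫ s in (0:ℝ)..t, g s with hGdef
  have hG : ∀ t, HasDerivAt G (g t) t := fun t => (hg.integral_hasStrictDerivAt 0 t).hasDerivAt
  set F : ℝ → ℝ := fun t => P t * Real.exp (-G t) with hFdef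
  have hF : ∀ t, HasDerivAt F 0 t := by
    intro t
    have h1 : HasDerivAt (fun t => Real.exp (-G t)) (-(g t) * Real.exp (-G t)) t := by
      have := ((hG t).neg).exp
      simpa [mul_comm] using this
    have := (hP t).mul h1
    refine this.congr_deriv (Eq.symm ?_)
    ring
  have hconst : ∀ t, F t = F 0 := by
    intro t
    have : ∀ x y : ℝ, F x = F y := fun x y =>
      is_const_of_deriv_eq_zero (fun s => (hF s).differentiableAt) (fun s => (hF s).deriv) x y
    exact this t 0
  intro t
  have h0 : G 0 = 0 := by simp [hGdef]
  have ht := hconst t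
  rw [hFdef] at ht
  simp only at ht
  rw [h0] at ht
  simp only [neg_zero, Real.exp_zero, mul_one] at ht
  have hexp : Real.exp (-G t) ≠ 0 := Real.exp_ne_zero _
  have : P t = P 0 / Real.exp (-G t) := by
    field_simp at ht ⊢; linarith [ht]
  rw [this, Real.exp_neg]
  field_simp
  rfl

lemma zero_on {f f₁ : ℝ → ℝ} {a b K : ℝ}
    (hf : ∀ t, HasDerivAt f (f₁ t) t)
    (hK : ∀ t ∈ Set.Icc a b, |f₁ t| ≤ K * |f t|)
    (ha : f a = 0) : ∀ t ∈ Set.Icc a b, f t = 0 := by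
  intro t ht
  have := norm_le_gronwallBound_of_norm_deriv_right_le (δ := 0) (K := K) (ε := 0)
    (f := f) (f' := f₁) (a := a) (b := b)
    (fun x _ => (hf x).continuousAt.continuousWithinAt)
    (fun x _ => (hf x).hasDerivWithinAt)
    (by simp [ha])
    (fun x hx => by simpa using hK x (Set.Ico_subset_Icc_self hx))
    t ht
  rw [gronwallBound_ε0_δ0] at this
  have : |f t| ≤ 0 := this
  have := abs_nonneg (f t)
  have : |f t| = 0 := le_antisymm ‹|f t| ≤ 0› this
  exact abs_eq_zero.mp this

/-- If `|u'| ≤ C u²` everywhere and `u` vanishes at one point, it vanishes everywhere. -/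
lemma prop_zero {u u₁ : ℝ → ℝ} {C : ℝ} (hC : 0 ≤ C)
    (hu : ∀ t, HasDerivAt u (u₁ t) t)
    (hb : ∀ t, |u₁ t| ≤ C * (u t) ^ 2)
    {t₁ : ℝ} (h0 : u t₁ = 0) : ∀ t, u t = 0 := by
  have main : ∀ (v v₁ : ℝ → ℝ), (∀ t, HasDerivAt v (v₁ t) t) →
      (∀ t, |v₁ t| ≤ C * (v t) ^ 2) → ∀ a b : ℝ, a ≤ b → v a = 0 → v b = 0 := by
    intro v v₁ hv hvb a b hab hva
    obtain ⟨M, hM⟩ : ∃ M, ∀ t ∈ Set.Icc a b, |v t| ≤ M := by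
      have hcont : ContinuousOn v (Set.Icc a b) :=
        fun t _ => (hv t).continuousAt.continuousWithinAt
      obtain ⟨M, hM⟩ := (isCompact_Icc (a := a) (b := b)).exists_bound_of_continuousOn hcont
      exact ⟨M, fun t ht => by simpa [Real.norm_eq_abs] using hM t ht⟩
    have hKb : ∀ t ∈ Set.Icc a b, |v₁ t| ≤ (C * M) * |v t| := by
      intro t ht
      have h1 := hvb t
      have h2 := hM t ht
      have h3 : (v t) ^ 2 = |v t| * |v t| := by
        rw [← sq_abs]; ring
      nlinarith [abs_nonneg (v t), abs_nonneg (v₁ t), mul_nonneg hC (abs_nonneg (v t))]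
    exact zero_on hv hKb hva b ⟨hab, le_rfl⟩
  intro t
  rcases le_total t₁ t with h | h
  · exact main u u₁ hu hb t₁ t h h0
  · -- reflect
    have hrefl : ∀ s, HasDerivAt (fun r => u (-r)) (-(u₁ (-s))) s := by
      intro s
      simpa [Function.comp_def] using (hu (-s)).comp s (hasDerivAt_neg s)
    have := main (fun r => u (-r)) (fun r => -(u₁ (-r))) hrefl
      (fun r => by simpa using hb (-r)) (-t₁) (-t) (by linarith) (by simpa using h0)
    simpa using this

/-- If `u' > c u²` everywhere with `c > 0` and `u` positive somewhere, blow-up. -/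
lemma M1 {c : ℝ} {u u₁ : ℝ → ℝ} (hc : 0 < c)
    (h1 : ∀ t, HasDerivAt u (u₁ t) t)
    (hP : ∀ t, c * u t ^ 2 < u₁ t)
    {t₁ : ℝ} (ht₁ : 0 < u t₁) : False := by
  have hmono : Monotone u := by
    apply monotone_of_deriv_nonneg (fun t => (h1 t).differentiableAt)
    intro t
    rw [(h1 t).deriv]
    nlinarith [hP t, sq_nonneg (u t), hc]
  exact blowup_s10 hc h1 (fun t ht => lt_of_lt_of_le ht₁ (hmono ht))
    (fun t _ => (hP t).le)

/-- If `u' > c u²` at one point, with `c > 0` a root of `2c² - Ac - B`, blow-up. -/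
lemma M {A B c : ℝ} {u u₁ u₂ : ℝ → ℝ} (hc : 0 < c) (hroot : 2*c^2 - A*c - B = 0)
    (h1 : ∀ t, HasDerivAt u (u₁ t) t) (h2 : ∀ t, HasDerivAt u₁ (u₂ t) t)
    (h3 : ∀ t, u₂ t = A * u t * u₁ t + B * u t ^ 3)
    {t₀ : ℝ} (hP0 : c * u t₀ ^ 2 < u₁ t₀) : False := by
  set P : ℝ → ℝ := fun t => u₁ t - c * u t ^ 2 with hPdef
  have hPd : ∀ t, HasDerivAt P (((A - 2*c) * u t) * P t) t := by
    intro t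
    have := (h2 t).sub (((h1 t).pow 2).const_mul c)
    refine this.congr_deriv (Eq.symm ?_)
    have h3t := h3 t
    simp only [hPdef]
    push_cast
    linear_combination (-1 : ℝ) * h3t + u t ^ 3 * hroot
  have hucont : Continuous u := continuous_iff_continuousAt.mpr fun t => (h1 t).continuousAt
  have hgcont : Continuous (fun t => (A - 2*c) * u t) := (continuous_const.mul hucont)
  have hsign := sign_exp hgcont hPd
  have hP0' : 0 < P t₀ := by simp only [hPdef]; linarith
  have hPpos : ∀ t, 0 < P t := by
    intro t
    have h0 : 0 < P 0 := by
      have := hsign t₀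
      by_contra hcon
      push_neg at hcon
      nlinarith [Real.exp_pos (∫ s in (0:ℝ)..t₀, (A - 2*c) * u s), this]
    rw [hsign t]
    positivity
  have hP' : ∀ t, c * u t ^ 2 < u₁ t := by
    intro t; have := hPpos t; simp only [hPdef] at this; linarith
  by_cases hex : ∃ s, 0 < u s
  · obtain ⟨s, hs⟩ := hex
    exact M1 hc h1 hP' hs
  · push_neg at hex
    have hmono : StrictMono u := by
      apply strictMono_of_deriv_pos
      intro t
      rw [(h1 t).deriv]
      nlinarith [hP' t, sq_nonneg (u t)]
    have hu0 : u (-1) < 0 := lt_of_lt_of_le (hmono (by norm_num : (-1:ℝ) < 0)) (hex 0)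
    -- reflected solution w t = -u(-t)
    set w : ℝ → ℝ := fun t => -u (-t) with hwdef
    set w₁ : ℝ → ℝ := fun t => u₁ (-t) with hw₁def
    have hw1 : ∀ t, HasDerivAt w (w₁ t) t := by
      intro t
      have := ((h1 (-t)).comp t (hasDerivAt_neg t)).neg
      simpa [Function.comp_def, Pi.neg_def] using this
    have hPw : ∀ t, c * w t ^ 2 < w₁ t := by
      intro t; simp only [hwdef, hw₁def, neg_sq]; exact hP' (-t)
    have : 0 < w 1 := by simp only [hwdef]; linarith
    exact M1 hc hw1 hPw this

set_option maxHeartbeats 1000000 in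
/-- The trapped region `cm u² ≤ u' ≤ cp u²` with `u` positive somewhere: contradiction. -/
lemma M2 {A B cp cm : ℝ} (hcp : 0 < cp) (hcm : cm < 0)
    (hsum : cp + cm = A / 2) (hprod : cp * cm = -B / 2)
    {u u₁ u₂ : ℝ → ℝ}
    (h1 : ∀ t, HasDerivAt u (u₁ t) t) (h2 : ∀ t, HasDerivAt u₁ (u₂ t) t)
    (h3 : ∀ t, u₂ t = A * u t * u₁ t + B * u t ^ 3)
    (hup : ∀ t, u₁ t ≤ cp * u t ^ 2) (hlo : ∀ t, cm * u t ^ 2 ≤ u₁ t)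
    {t₀ : ℝ} (ht₀ : 0 < u t₀) : False := by
  -- Step (a): u is positive everywhere
  have hb : ∀ t, |u₁ t| ≤ (cp - cm) * u t ^ 2 := by
    intro t
    rw [abs_le]
    constructor
    · nlinarith [hlo t, sq_nonneg (u t)]
    · nlinarith [hup t, sq_nonneg (u t)]
  have upos : ∀ t, 0 < u t := by
    intro t
    by_contra hcon
    push_neg at hcon
    have hzero : ∃ t₂, u t₂ = 0 := by
      rcases eq_or_lt_of_le hcon with h | h
      · exact ⟨t, h⟩
      · have hucont : Continuous u := continuous_iff_continuousAt.mpr fun s => (h1 s).continuousAt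
        rcases le_total t t₀ with hle | hle
        · have := intermediate_value_Icc hle hucont.continuousOn
          have h0 : (0:ℝ) ∈ Set.Icc (u t) (u t₀) := ⟨h.le, ht₀.le⟩
          obtain ⟨t₂, _, ht₂⟩ := this h0
          exact ⟨t₂, ht₂⟩
        · have := intermediate_value_Icc' hle hucont.continuousOn
          have h0 : (0:ℝ) ∈ Set.Icc (u t) (u t₀) := ⟨h.le, ht₀.le⟩
          obtain ⟨t₂, _, ht₂⟩ := this h0
          exact ⟨t₂, ht₂⟩
    obtain ⟨t₂, ht₂⟩ := hzero
    have := prop_zero (by linarith : (0:ℝ) ≤ cp - cm) h1 hb ht₂ t₀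
    linarith
  -- P and Q
  set P : ℝ → ℝ := fun t => u₁ t - cp * u t ^ 2 with hPdef
  set Q : ℝ → ℝ := fun t => u₁ t - cm * u t ^ 2 with hQdef
  have hProot : 2*cp^2 - A*cp - B = 0 := by nlinarith
  have hQroot : 2*cm^2 - A*cm - B = 0 := by nlinarith
  have hPd : ∀ t, HasDerivAt P (((A - 2*cp) * u t) * P t) t := by
    intro t
    have := (h2 t).sub (((h1 t).pow 2).const_mul cp)
    refine this.congr_deriv (Eq.symm ?_)
    simp only [hPdef]
    push_cast
    linear_combination (-1 : ℝ) * (h3 t) + u t ^ 3 * hProot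
  have hQd : ∀ t, HasDerivAt Q (((A - 2*cm) * u t) * Q t) t := by
    intro t
    have := (h2 t).sub (((h1 t).pow 2).const_mul cm)
    refine this.congr_deriv (Eq.symm ?_)
    simp only [hQdef]
    push_cast
    linear_combination (-1 : ℝ) * (h3 t) + u t ^ 3 * hQroot
  have hucont : Continuous u := continuous_iff_continuousAt.mpr fun s => (h1 s).continuousAt
  have hsignP := sign_exp (g := fun t => (A - 2*cp) * u t) (continuous_const.mul hucont) hPd
  have hsignQ := sign_exp (g := fun t => (A - 2*cm) * u t) (continuous_const.mul hucont) hQd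
  -- Subcase P 0 = 0 : u' = cp u² everywhere, blow-up
  by_cases hP0 : P 0 = 0
  · apply blowup_s10 hcp h1 (fun t _ => upos t) (t₁ := 0)
    intro t _
    have := hsignP t
    rw [hP0] at this
    simp only [hPdef] at this
    simp only [zero_mul] at this
    linarith
  by_cases hQ0 : Q 0 = 0
  · -- u' = cm u² everywhere; reflect and blow up
    have hQall : ∀ t, Q t = 0 := by
      intro t; rw [hsignQ t, hQ0, zero_mul]
    set v : ℝ → ℝ := fun t => u (-t) with hvdef
    set v₁ : ℝ → ℝ := fun t => -u₁ (-t) with hv₁def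
    have hv1 : ∀ t, HasDerivAt v (v₁ t) t := by
      intro t
      simpa [Function.comp_def] using ((h1 (-t)).comp t (hasDerivAt_neg t))
    apply blowup_s10 (show (0:ℝ) < -cm by linarith) hv1
      (fun t _ => upos (-t)) (t₁ := 0)
    intro t _
    have := hQall (-t)
    simp only [hQdef] at this
    simp only [hvdef, hv₁def, neg_sq]
    nlinarith [this]
  -- Main subcase: P < 0 < Q everywhere
  have hPneg : ∀ t, P t < 0 := by
    intro t
    rw [hsignP t]
    have h0 : P 0 ≤ 0 := by simp only [hPdef]; linarith [hup 0]
    have h0' : P 0 < 0 := lt_of_le_of_ne h0 hP0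
    have := Real.exp_pos (∫ s in (0:ℝ)..t, (A - 2*cp) * u s)
    nlinarith
  have hQpos : ∀ t, 0 < Q t := by
    intro t
    rw [hsignQ t]
    have h0 : 0 ≤ Q 0 := by simp only [hQdef]; linarith [hlo 0]
    have h0' : 0 < Q 0 := lt_of_le_of_ne h0 (Ne.symm hQ0)
    have := Real.exp_pos (∫ s in (0:ℝ)..t, (A - 2*cm) * u s)
    nlinarith
  -- the slope s = u₁ / u²
  set S : ℝ → ℝ := fun t => u₁ t / u t ^ 2 with hSdef
  have hkey : ∀ t, u₂ t * u t - 2 * u₁ t ^ 2 = -2 * P t * Q t := by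
    intro t
    simp only [hPdef, hQdef]
    linear_combination u t * (h3 t) - (2 * u t ^ 2 * u₁ t) * hsum + (2 * u t ^ 4) * hprod
  have hSd : ∀ t, HasDerivAt S ((u₂ t * u t - 2 * u₁ t ^ 2) / u t ^ 3) t := by
    intro t
    have hne : u t ^ 2 ≠ 0 := (pow_pos (upos t) 2).ne'
    have := (h2 t).div ((h1 t).pow 2) hne
    refine this.congr_deriv (Eq.symm ?_)
    have hut : u t ≠ 0 := (upos t).ne'
    simp only [Pi.pow_apply]
    field_simp
    ring
  have hSpos : ∀ t, 0 < (u₂ t * u t - 2 * u₁ t ^ 2) / u t ^ 3 := by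
    intro t
    apply div_pos
    · rw [hkey t]
      nlinarith [hPneg t, hQpos t]
    · exact pow_pos (upos t) 3
  have hSmono : StrictMono S := by
    apply strictMono_of_deriv_pos
    intro t
    rw [(hSd t).deriv]
    exact hSpos t
  by_cases hex : ∃ t₁, 0 < u₁ t₁
  · obtain ⟨t₁, ht₁⟩ := hex
    have hσ : 0 < S t₁ := div_pos ht₁ (pow_pos (upos t₁) 2)
    apply blowup_s10 hσ h1 (fun t _ => upos t) (t₁ := t₁)
    intro t ht
    have hS : S t₁ ≤ S t := hSmono.monotone ht
    have h2t : 0 < u t ^ 2 := pow_pos (upos t) 2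
    have : S t₁ * u t ^ 2 ≤ S t * u t ^ 2 := by nlinarith
    calc S t₁ * u t ^ 2 ≤ S t * u t ^ 2 := this
    _ = u₁ t := by
        simp only [hSdef]
        field_simp
        exact mul_div_cancel_right₀ _ (upos t).ne'
  · -- u₁ ≤ 0 everywhere: logarithmic growth of S forces S > 0, contradiction
    push_neg at hex
    set a : ℝ := u 0 with hadef
    have ha : 0 < a := upos 0
    set k : ℝ := -cm with hkdef
    have hk : 0 < k := by simp only [hkdef]; linarith
    set δ : ℝ := S 0 - cm with hδdef
    have hδ : 0 < δ := by
      have := hQpos 0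
      simp only [hQdef] at this
      have h2 : 0 < u 0 ^ 2 := pow_pos (upos 0) 2
      simp only [hδdef, hSdef]
      rw [sub_pos, lt_div_iff₀ h2]
      linarith
    -- lower barrier for u : u t ≥ (a⁻¹ + k t)⁻¹ for t ≥ 0
    have hbar : ∀ t, 0 ≤ t → (a⁻¹ + k * t)⁻¹ ≤ u t := by
      intro t ht
      set ψ : ℝ → ℝ := fun r => (u r)⁻¹ + cm * r with hψdef
      have hψd : ∀ r, HasDerivAt ψ (-(u₁ r) / u r ^ 2 + cm) r := by
        intro r
        exact ((h1 r).inv (upos r).ne').add ((hasDerivAt_id r).const_mul cm |>.congr_deriv (by ring))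
      have hψmono : Antitone ψ := by
        apply antitone_of_deriv_nonpos (fun r => (hψd r).differentiableAt)
        intro r
        rw [(hψd r).deriv]
        have hq := hQpos r
        simp only [hQdef] at hq
        have h2 : 0 < u r ^ 2 := pow_pos (upos r) 2
        rw [div_add' _ _ _ h2.ne']
        apply div_nonpos_of_nonpos_of_nonneg _ h2.le
        nlinarith
      have := hψmono ht
      simp only [hψdef] at this
      -- (u t)⁻¹ + cm t ≤ (u 0)⁻¹  ⇒  (u t)⁻¹ ≤ a⁻¹ + k t
      have h1' : (u t)⁻¹ ≤ a⁻¹ + k * t := by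
        simp only [hkdef, hadef]
        simp only [mul_zero, add_zero] at this
        linarith
      have hpos1 : 0 < (u t)⁻¹ := inv_pos.mpr (upos t)
      have hpos2 : 0 < a⁻¹ + k * t := lt_of_lt_of_le hpos1 h1'
      have := inv_anti₀ hpos1 h1'
      rwa [inv_inv] at this
    -- φ t = S t - c0 * log(a⁻¹ + k t) is monotone on [0,∞)
    set c0 : ℝ := 2 * cp * δ / k with hc0def
    have hc0 : 0 < c0 := by positivity
    set φ : ℝ → ℝ := fun t => S t - c0 * Real.log (a⁻¹ + k * t) with hφdef
    have hφd : ∀ t, 0 ≤ t → HasDerivAt φ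
        ((u₂ t * u t - 2 * u₁ t ^ 2) / u t ^ 3 - c0 * (k / (a⁻¹ + k * t))) t := by
      intro t ht
      have hpos2 : 0 < a⁻¹ + k * t :=
        add_pos_of_pos_of_nonneg (inv_pos.mpr ha) (mul_nonneg hk.le ht)
      have hlog : HasDerivAt (fun r => Real.log (a⁻¹ + k * r)) (k / (a⁻¹ + k * t)) t := by
        have hin : HasDerivAt (fun r => a⁻¹ + k * r) k t := by
          simpa using ((hasDerivAt_id t).const_mul k).const_add a⁻¹
        simpa using hin.log hpos2.ne'
      exact (hSd t).sub (hlog.const_mul c0)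
    have hφmono : ∀ t, 0 ≤ t → φ 0 ≤ φ t := by
      intro t ht
      have : MonotoneOn φ (Set.Ici 0) := by
        apply monotoneOn_of_deriv_nonneg (convex_Ici 0)
        · intro r hr
          exact (hφd r hr).continuousAt.continuousWithinAt
        · intro r hr
          rw [interior_Ici] at hr
          exact (hφd r (le_of_lt hr)).differentiableAt.differentiableWithinAt
        · intro r hr
          rw [interior_Ici] at hr
          rw [(hφd r hr.le).deriv]
          have hrpos : (0:ℝ) ≤ r := hr.le
          -- S' ≥ 2 cp δ u ≥ c0 * k/(a⁻¹+kr)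
          have hS0r : S 0 ≤ S r := hSmono.monotone hrpos
          have hu2 : 0 < u r ^ 2 := pow_pos (upos r) 2
          have hQr : δ * u r ^ 2 ≤ Q r := by
            have : δ ≤ S r - cm := by simp only [hδdef]; linarith
            have h2 : (S r - cm) * u r ^ 2 = Q r := by
              simp only [hSdef, hQdef]
              have hur : u r ≠ 0 := (upos r).ne'
              field_simp
            nlinarith
          have hPr : cp * u r ^ 2 ≤ -P r := by
            simp only [hPdef]
            have := hex r
            linarith
          have hlow : 2 * cp * δ * u r ≤ (u₂ r * u r - 2 * u₁ r ^ 2) / u r ^ 3 := by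
            rw [hkey r, le_div_iff₀ (pow_pos (upos r) 3)]
            have hQr' : 0 < Q r := hQpos r
            have h4 : cp * u r ^ 2 * (δ * u r ^ 2) ≤ (-P r) * Q r :=
              mul_le_mul hPr hQr (mul_nonneg hδ.le (sq_nonneg _))
                (by linarith [hPneg r])
            have h4' : cp * δ * u r ^ 4 ≤ (-P r) * Q r := by nlinarith [h4]
            nlinarith [h4']
          have hbar' : (a⁻¹ + k * r)⁻¹ ≤ u r := hbar r hrpos
          have hX : 0 < a⁻¹ + k * r :=
            add_pos_of_pos_of_nonneg (inv_pos.mpr ha) (mul_nonneg hk.le hrpos)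
          have h1' : (1:ℝ) ≤ u r * (a⁻¹ + k * r) := by
            have := mul_le_mul_of_nonneg_right hbar' hX.le
            rwa [inv_mul_cancel₀ hX.ne'] at this
          have hck : c0 * k = 2 * cp * δ := by
            simp only [hc0def]; field_simp
          have hc0k : c0 * (k / (a⁻¹ + k * r)) ≤ 2 * cp * δ * u r := by
            rw [mul_div_assoc', hck, div_le_iff₀ hX]
            nlinarith [mul_le_mul_of_nonneg_left h1'
              (le_of_lt (mul_pos (mul_pos (by norm_num : (0:ℝ) < 2) hcp) hδ))]
          linarith
      exact this (Set.self_mem_Ici) (Set.mem_Ici.mpr ht) ht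
    -- choose a large time to make S positive
    have hS0 : S 0 ≤ 0 := by
      simp only [hSdef]
      apply div_nonpos_of_nonpos_of_nonneg (hex 0) (by positivity)
    set R : ℝ := Real.log a⁻¹ + (1 - S 0) / c0 with hRdef
    set T : ℝ := Real.exp R / k with hTdef
    have hT : 0 ≤ T := (div_pos (Real.exp_pos R) hk).le
    have hlogT : R < Real.log (a⁻¹ + k * T) := by
      have h1' : k * T = Real.exp R := by
        simp only [hTdef]; field_simp
      rw [h1']
      have : Real.exp R < a⁻¹ + Real.exp R := by
        have := inv_pos.mpr ha; linarith
      calc R = Real.log (Real.exp R) := (Real.log_exp R).symm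
      _ < Real.log (a⁻¹ + Real.exp R) := by
          apply Real.log_lt_log (Real.exp_pos R) this
    have hφT := hφmono T hT
    simp only [hφdef] at hφT
    simp only [mul_zero, add_zero] at hφT
    -- φ 0 = S 0 - c0 log a⁻¹
    have hST : 0 < S T := by
      have h4 : c0 * R < c0 * Real.log (a⁻¹ + k * T) := (mul_lt_mul_iff_right₀ hc0).mpr hlogT
      simp only [hRdef] at h4
      have hexp : c0 * ((1 - S 0)/c0) = 1 - S 0 := by field_simp
      nlinarith [hφT, h4, hexp]
    simp only [hSdef] at hST
    have h2 : 0 < u T ^ 2 := pow_pos (upos T) 2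
    nlinarith [div_nonpos_of_nonpos_of_nonneg (hex T) h2.le]

/-- Only the trivial global solution of `u'' = A u u' + B u³` when `B > 0`. -/
lemma ode_zero {A B : ℝ} (hB : 0 < B) {u u₁ u₂ : ℝ → ℝ}
    (h1 : ∀ t, HasDerivAt u (u₁ t) t) (h2 : ∀ t, HasDerivAt u₁ (u₂ t) t)
    (h3 : ∀ t, u₂ t = A * u t * u₁ t + B * u t ^ 3) : ∀ t, u t = 0 := by
  set D : ℝ := Real.sqrt (A^2 + 8*B) with hDdef
  have hD2 : D^2 = A^2 + 8*B := Real.sq_sqrt (by nlinarith)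
  have hDpos : 0 < D := Real.sqrt_pos.mpr (by nlinarith)
  have hDA : A < D ∧ -A < D := by
    constructor <;> nlinarith
  set cp : ℝ := (A + D)/4 with hcpdef
  set cm : ℝ := (A - D)/4 with hcmdef
  have hcp : 0 < cp := by simp only [hcpdef]; linarith [hDA.2]
  have hcm : cm < 0 := by simp only [hcmdef]; linarith [hDA.1]
  have hrp : 2*cp^2 - A*cp - B = 0 := by simp only [hcpdef]; nlinarith [hD2]
  have hrm : 2*cm^2 - A*cm - B = 0 := by simp only [hcmdef]; nlinarith [hD2]
  have hsum : cp + cm = A/2 := by simp only [hcpdef, hcmdef]; ring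
  have hprod : cp * cm = -B/2 := by simp only [hcpdef, hcmdef]; nlinarith [hD2]
  by_cases hex1 : ∃ s, cp * u s ^ 2 < u₁ s
  · obtain ⟨s, hs⟩ := hex1
    exact (M hcp hrp h1 h2 h3 hs).elim
  by_cases hex2 : ∃ s, u₁ s < cm * u s ^ 2
  · -- reflect in time: v t = u (-t) solves the equation with A replaced by -A
    obtain ⟨s, hs⟩ := hex2
    set v : ℝ → ℝ := fun t => u (-t) with hvdef
    set v₁ : ℝ → ℝ := fun t => -u₁ (-t) with hv₁def
    set v₂ : ℝ → ℝ := fun t => u₂ (-t) with hv₂def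
    have hv1 : ∀ t, HasDerivAt v (v₁ t) t := by
      intro t; simpa [Function.comp_def] using ((h1 (-t)).comp t (hasDerivAt_neg t))
    have hv2 : ∀ t, HasDerivAt v₁ (v₂ t) t := by
      intro t
      have := ((h2 (-t)).comp t (hasDerivAt_neg t)).neg
      simpa [Function.comp_def, Pi.neg_def] using this
    have hv3 : ∀ t, v₂ t = (-A) * v t * v₁ t + B * v t ^ 3 := by
      intro t
      simp only [hvdef, hv₁def, hv₂def]
      rw [h3 (-t)]
      ring
    have hroot' : 2*(-cm)^2 - (-A)*(-cm) - B = 0 := by linarith [hrm]; 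
    have hs' : (-cm) * v (-s) ^ 2 < v₁ (-s) := by
      simp only [hvdef, hv₁def, neg_neg]
      nlinarith [hs]
    exact (M (by linarith : (0:ℝ) < -cm) hroot' hv1 hv2 hv3 hs').elim
  push_neg at hex1 hex2
  intro t
  by_contra hne
  rcases lt_or_gt_of_ne hne with hlt | hgt
  · -- u t < 0 : use the reflection w r = -u (-r)
    set w : ℝ → ℝ := fun r => -u (-r) with hwdef
    set w₁ : ℝ → ℝ := fun r => u₁ (-r) with hw₁def
    set w₂ : ℝ → ℝ := fun r => -u₂ (-r) with hw₂def
    have hw1 : ∀ r, HasDerivAt w (w₁ r) r := by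
      intro r; simpa [Function.comp_def, Pi.neg_def] using ((h1 (-r)).comp r (hasDerivAt_neg r)).neg
    have hw2 : ∀ r, HasDerivAt w₁ (w₂ r) r := by
      intro r
      have := ((h2 (-r)).comp r (hasDerivAt_neg r))
      simpa [hw₂def, Function.comp_def] using this
    have hw3 : ∀ r, w₂ r = A * w r * w₁ r + B * w r ^ 3 := by
      intro r
      simp only [hwdef, hw₁def, hw₂def]
      rw [h3 (-r)]
      ring
    have hwup : ∀ r, w₁ r ≤ cp * w r ^ 2 := by
      intro r; simp only [hwdef, hw₁def, neg_sq]; exact hex1 (-r)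
    have hwlo : ∀ r, cm * w r ^ 2 ≤ w₁ r := by
      intro r; simp only [hwdef, hw₁def, neg_sq]; exact hex2 (-r)
    have hwpos : 0 < w (-t) := by simp only [hwdef, neg_neg]; linarith
    exact M2 hcp hcm hsum hprod hw1 hw2 hw3 hwup hwlo hwpos
  · exact M2 hcp hcm hsum hprod h1 h2 h3 hex1 hex2 hgt

set_option maxHeartbeats 1000000 in
/-- A > 0, B > 0: only the trivial global solution; consequently for
5 ≤ m ≤ 7 every positive global solution of (1.1) is constant. -/
theorem stmt_10 (A B : ℝ) (hA : 0 < A) (hB : 0 < B) :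
    (∀ u : ℝ → ℝ, Differentiable ℝ u → Differentiable ℝ (deriv u) →
      (∀ t, deriv (deriv u) t = A * u t * deriv u t + B * (u t) ^ 3) →
      ∀ t, u t = 0)
    ∧
    (∀ m : ℤ, 5 ≤ m → m ≤ 7 →
      ∀ f : ℝ → ℝ, (∀ t, 0 < f t) →
        Differentiable ℝ f → Differentiable ℝ (deriv f) →
        Differentiable ℝ (deriv (deriv f)) →
        (∀ t, (f t) ^ 2 * deriv (deriv (deriv f)) t
          - (2 * ((m:ℝ) + 1) / ((m:ℝ) - 2)) * f t * deriv f t * deriv (deriv f) t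
          + ((m:ℝ) ^ 2 / ((m:ℝ) - 2) ^ 2) * (deriv f t) ^ 3 = 0) →
        ∀ s t, f s = f t) := by
  constructor
  · intro u hd1 hd2 hode t
    exact ode_zero hB (u₁ := deriv u) (u₂ := fun t => A * u t * deriv u t + B * u t ^ 3)
      (fun s => (hd1 s).hasDerivAt)
      (fun s => by have := (hd2 s).hasDerivAt; rwa [hode s] at this)
      (fun s => rfl) t
  · intro m hm5 hm7 f hfpos hf1 hf2 hf3 heq s t
    have hm5' : (5:ℝ) ≤ (m:ℝ) := by exact_mod_cast hm5
    have hm7' : (m:ℝ) ≤ 7 := by exact_mod_cast hm7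
    have hm2 : (m:ℝ) - 2 ≠ 0 := by linarith
    set f₁ : ℝ → ℝ := deriv f with hf₁def
    set f₂ : ℝ → ℝ := deriv f₁ with hf₂def
    set f₃ : ℝ → ℝ := deriv f₂ with hf₃def
    have hd1 : ∀ r, HasDerivAt f (f₁ r) r := fun r => (hf1 r).hasDerivAt
    have hd2 : ∀ r, HasDerivAt f₁ (f₂ r) r := fun r => (hf2 r).hasDerivAt
    have hd3 : ∀ r, HasDerivAt f₂ (f₃ r) r := fun r => (hf3 r).hasDerivAt
    set A' : ℝ := (8 - (m:ℝ)) / ((m:ℝ) - 2) with hA'def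
    set B' : ℝ := 2 * ((m:ℝ) - 4) / ((m:ℝ) - 2) ^ 2 with hB'def
    have hB' : 0 < B' := by
      apply div_pos (by linarith)
      positivity
    set u : ℝ → ℝ := fun r => f₁ r / f r with hudef
    set u₁ : ℝ → ℝ := fun r => (f₂ r * f r - f₁ r ^ 2) / f r ^ 2 with hu₁def
    set u₂ : ℝ → ℝ := fun r =>
      (f₃ r * f r ^ 2 - 3 * f r * f₁ r * f₂ r + 2 * f₁ r ^ 3) / f r ^ 3 with hu₂def
    have hne : ∀ r, f r ≠ 0 := fun r => (hfpos r).ne'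
    have hu1 : ∀ r, HasDerivAt u (u₁ r) r := by
      intro r
      have := (hd2 r).div (hd1 r) (hne r)
      refine this.congr_deriv (Eq.symm ?_)
      show (f₂ r * f r - f₁ r ^ 2) / f r ^ 2 = _
      ring
    have hu2 : ∀ r, HasDerivAt u₁ (u₂ r) r := by
      intro r
      have hnum : HasDerivAt (fun x => f₂ x * f x - f₁ x ^ 2)
          (f₃ r * f r + f₂ r * f₁ r - 2 * f₁ r * f₂ r) r :=
        ((hd3 r).mul (hd1 r)).sub (by simpa [Pi.pow_def] using (hd2 r).pow 2)
      have hden : HasDerivAt (fun x => f x ^ 2) (2 * f r * f₁ r) r := by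
        simpa [Pi.pow_def] using (hd1 r).pow 2
      have := hnum.div hden (pow_ne_zero 2 (hne r))
      refine this.congr_deriv (Eq.symm ?_)
      show (f₃ r * f r ^ 2 - 3 * f r * f₁ r * f₂ r + 2 * f₁ r ^ 3) / f r ^ 3 = _
      rw [div_eq_div_iff (pow_ne_zero 3 (hne r)) (pow_ne_zero 2 (pow_ne_zero 2 (hne r)))]
      ring
    have hode : ∀ r, u₂ r = A' * u r * u₁ r + B' * u r ^ 3 := by
      intro r
      have hfr := hne r
      have hf3r : f₃ r = (2 * ((m:ℝ) + 1) / ((m:ℝ) - 2) * f r * f₁ r * f₂ r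
          - (m:ℝ) ^ 2 / ((m:ℝ) - 2) ^ 2 * f₁ r ^ 3) / f r ^ 2 := by
        rw [eq_div_iff (pow_ne_zero 2 hfr)]
        linear_combination heq r
      simp only [hudef, hu₁def, hu₂def, hA'def, hB'def]
      rw [hf3r]
      field_simp
      ring
    have hz := ode_zero hB' hu1 hu2 hode
    have hderiv0 : ∀ r, deriv f r = 0 := by
      intro r
      have hz' := hz r
      simp only [hudef] at hz'
      rcases div_eq_zero_iff.mp hz' with h | h
      · exact h
      · exact absurd h (hne r)
    exact is_const_of_deriv_eq_zero hf1 hderiv0 s t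
end

section
/- Let A < 0 and B > 0 be real constants. If u : ℝ → ℝ is a twice differentiable function satisfying u''(t) = A·u(t)·u'(t) + B·u(t)³ for all t ∈ ℝ, then u is identically zero. Consequently, for each integer m ≥ 9, every positive three-times differentiable global solution f : ℝ → ℝ of f²·f''' − (2(m+1)/(m−2))·f·f'·f'' + (m²/(m−2)²)·f'³ = 0 is constant. -/
lemma growth_fwd (h d : ℝ → ℝ) (c t0 : ℝ)
    (hd : ∀ t, t0 ≤ t → HasDerivAt h (d t) t)
    (hc : ∀ t, t0 ≤ t → c ≤ d t) :
    ∀ t, t0 ≤ t → h t0 + c * (t - t0) ≤ h t := by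
  intro t ht
  have hmono : MonotoneOn (fun x => h x - c * x) (Set.Ici t0) := by
    apply monotoneOn_of_deriv_nonneg (convex_Ici t0)
    · exact ContinuousOn.sub
        (fun x hx => ((hd x hx).continuousAt).continuousWithinAt)
        (Continuous.continuousOn (by continuity))
    · intro x hx
      rw [interior_Ici] at hx
      exact (((hd x (le_of_lt hx)).sub ((hasDerivAt_id x).const_mul c)).differentiableAt).differentiableWithinAt
    · intro x hx
      rw [interior_Ici] at hx
      have hx' : t0 ≤ x := le_of_lt hx
      have : deriv (fun x => h x - c * x) x = d x - c := by
        have := ((hd x hx').sub ((hasDerivAt_id x).const_mul c))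
        exact this.deriv.trans (by simp)
      rw [this]
      have := hc x hx'
      linarith
  have := hmono (Set.self_mem_Ici) (Set.mem_Ici.mpr ht) ht
  simp only at this
  linarith

lemma no_pos_decay (φ d : ℝ → ℝ) (c t0 : ℝ) (hcpos : 0 < c)
    (hpos : ∀ t, t0 ≤ t → 0 < φ t)
    (hd : ∀ t, t0 ≤ t → HasDerivAt φ (d t) t)
    (hneg : ∀ t, t0 ≤ t → d t ≤ -c) : False := by
  have key := growth_fwd (fun x => -φ x) (fun x => -d x) c t0
    (fun t ht => (hd t ht).neg)
    (fun t ht => by have := hneg t ht; show c ≤ -d t; linarith)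
  have hx : 0 ≤ φ t0 / c := le_of_lt (div_pos (hpos t0 le_rfl) hcpos)
  have h1 := key (t0 + φ t0 / c + 1) (by linarith)
  have h2 := hpos (t0 + φ t0 / c + 1) (by linarith)
  have h3 : c * (t0 + φ t0 / c + 1 - t0) = φ t0 + c := by
    field_simp
    ring
  nlinarith

lemma no_pos_growth (φ d : ℝ → ℝ) (c t0 : ℝ) (hcpos : 0 < c)
    (hpos : ∀ t, t ≤ t0 → 0 < φ t)
    (hd : ∀ t, t ≤ t0 → HasDerivAt φ (d t) t)
    (hge : ∀ t, t ≤ t0 → c ≤ d t) : False := by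
  apply no_pos_decay (fun x => φ (-x)) (fun x => -d (-x)) c (-t0) hcpos
  · intro t ht; exact hpos (-t) (by linarith)
  · intro t ht
    have : HasDerivAt (fun x => φ (-x)) (d (-t) * -1) t :=
      (hd (-t) (by linarith)).comp t (hasDerivAt_neg t)
    simpa using this
  · intro t ht; linarith [hge (-t) (by linarith)]

set_option maxHeartbeats 2000000 in
lemma part1 (A B : ℝ) (hA : A < 0) (hB : 0 < B) (u : ℝ → ℝ)
    (hu1 : Differentiable ℝ u) (hu2 : Differentiable ℝ (deriv u))
    (hode : ∀ t, deriv (deriv u) t = A * u t * deriv u t + B * (u t) ^ 3) :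
    ∀ t, u t = 0 := by
  by_contra hcon
  push_neg at hcon
  obtain ⟨t0, ht0⟩ := hcon
  have hu' : ∀ t, HasDerivAt u (deriv u t) t := fun t => (hu1 t).hasDerivAt
  have hu'' : ∀ t, HasDerivAt (deriv u) (A * u t * deriv u t + B * (u t) ^ 3) t := by
    intro t; rw [← hode t]; exact (hu2 t).hasDerivAt
  have hucont : Continuous u := hu1.continuous
  set U : ℝ → ℝ := fun t => ∫ x in (0:ℝ)..t, u x with hUdef
  have hU : ∀ t, HasDerivAt U (u t) t := fun t =>
    intervalIntegral.integral_hasDerivAt_right (hucont.intervalIntegrable _ _)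
      (hucont.stronglyMeasurableAtFilter _ _) hucont.continuousAt
  have hU0 : U 0 = 0 := intervalIntegral.integral_same
  set s : ℝ := Real.sqrt (A ^ 2 + 8 * B) with hsdef
  have hs0 : 0 ≤ s := Real.sqrt_nonneg _
  have hs2 : s ^ 2 = A ^ 2 + 8 * B := Real.sq_sqrt (by nlinarith)
  have hsA : -A < s := by
    have h1 : 0 < s - A := by linarith
    nlinarith
  have hspos : 0 < s := by linarith
  have rep : ∀ c : ℝ, 2 * c ^ 2 + A * c = B →
      ∀ t, deriv u t + c * (u t) ^ 2
        = (deriv u 0 + c * (u 0) ^ 2) * Real.exp ((A + 2 * c) * U t) := by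
    intro c hc
    set g : ℝ → ℝ := fun t => deriv u t + c * (u t) ^ 2 with hgdef
    have hg : ∀ t, HasDerivAt g ((A + 2 * c) * u t * g t) t := by
      intro t
      have h2 : HasDerivAt (fun x => (u x) ^ 2) (2 * u t * deriv u t) t := by
        exact ((hu' t).pow 2).congr_deriv (by simp)
      have h1 := (hu'' t).add (h2.const_mul c)
      refine h1.congr_deriv ?_
      show _ = (A + 2 * c) * u t * (deriv u t + c * (u t) ^ 2)
      linear_combination (-(u t) ^ 3) * hc
    set G : ℝ → ℝ := fun t => g t * Real.exp (-(A + 2 * c) * U t) with hGdef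
    have hG : ∀ t, HasDerivAt G 0 t := by
      intro t
      have h3 : HasDerivAt (fun x => Real.exp (-(A + 2 * c) * U x))
          (Real.exp (-(A + 2 * c) * U t) * (-(A + 2 * c) * u t)) t :=
        ((hU t).const_mul (-(A + 2 * c))).exp
      have h4 := (hg t).mul h3
      exact h4.congr_deriv (by ring)
    have hGconst : ∀ t, G t = G 0 := fun t =>
      is_const_of_deriv_eq_zero (fun x => (hG x).differentiableAt) (fun x => (hG x).deriv) t 0
    intro t
    have h := hGconst t
    simp only [hGdef, hU0, mul_zero, Real.exp_zero, mul_one] at h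
    have hprod : Real.exp (-(A + 2 * c) * U t) * Real.exp ((A + 2 * c) * U t) = 1 := by
      rw [← Real.exp_add]; ring_nf; exact Real.exp_zero
    have hthis := congrArg (· * Real.exp ((A + 2 * c) * U t)) h
    calc deriv u t + c * u t ^ 2 = g t := rfl
      _ = g t * (Real.exp (-(A + 2 * c) * U t) * Real.exp ((A + 2 * c) * U t)) := by
          rw [hprod, mul_one]
      _ = (deriv u 0 + c * u 0 ^ 2) * Real.exp ((A + 2 * c) * U t) := by
          rw [← mul_assoc, hthis]
  set cp : ℝ := (-A + s) / 4 with hcpdef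
  set cm : ℝ := (-A - s) / 4 with hcmdef
  have hcp : 0 < cp := by rw [hcpdef]; linarith
  have hcm : cm < 0 := by rw [hcmdef]; linarith
  have hrp : 2 * cp ^ 2 + A * cp = B := by rw [hcpdef]; linear_combination hs2 / 8
  have hrm : 2 * cm ^ 2 + A * cm = B := by rw [hcmdef]; linear_combination hs2 / 8
  have hap : 0 < A + 2 * cp := by rw [hcpdef]; linarith
  have ham : A + 2 * cm < 0 := by rw [hcmdef]; linarith
  have hcpm : 0 < cp - cm := by rw [hcpdef, hcmdef]; linarith
  have Prep := rep cp hrp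
  have Nrep := rep cm hrm
  set P : ℝ := deriv u 0 + cp * (u 0) ^ 2 with hPdef
  set N : ℝ := deriv u 0 + cm * (u 0) ^ 2 with hNdef
  have hPN : ∀ t, P * Real.exp ((A + 2 * cp) * U t) - N * Real.exp ((A + 2 * cm) * U t)
      = (cp - cm) * (u t) ^ 2 := by
    intro t
    linear_combination (Nrep t) - (Prep t)
  rcases lt_trichotomy N 0 with hN | hN | hN
  · rcases lt_trichotomy P 0 with hP | hP | hP
    · -- P < 0 : u strictly decreasing
      have hder : ∀ t, deriv u t ≤ P * Real.exp ((A + 2 * cp) * U t) := by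
        intro t
        have h := Prep t
        nlinarith [sq_nonneg (u t), Real.exp_pos ((A + 2 * cp) * U t)]
      have hderneg : ∀ t, deriv u t < 0 := by
        intro t
        have := hder t
        nlinarith [Real.exp_pos ((A + 2 * cp) * U t),
          mul_pos (neg_pos.mpr hP) (Real.exp_pos ((A + 2 * cp) * U t))]
      have hanti : Antitone u := antitone_of_deriv_nonpos hu1 (fun t => (hderneg t).le)
      by_cases hex : ∃ t1, u t1 < 0
      · obtain ⟨t1, ht1⟩ := hex
        have hule : ∀ t, t1 ≤ t → u t < 0 := fun t ht => lt_of_le_of_lt (hanti ht) ht1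
        apply no_pos_decay (fun t => -(u t)⁻¹) (fun t => deriv u t / (u t) ^ 2) cp t1 hcp
        · intro t ht
          exact neg_pos.mpr (inv_lt_zero.mpr (hule t ht))
        · intro t ht
          have h := ((hu' t).inv (ne_of_lt (hule t ht))).neg
          exact h.congr_deriv (by ring)
        · intro t ht
          have hut : u t < 0 := hule t ht
          have h2pos : 0 < u t ^ 2 := pow_two_pos_of_ne_zero (ne_of_lt hut)
          have h := Prep t
          have hd2 : deriv u t ≤ -cp * (u t) ^ 2 := by
            nlinarith [mul_pos (neg_pos.mpr hP) (Real.exp_pos ((A + 2 * cp) * U t))]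
          show deriv u t / u t ^ 2 ≤ -cp
          rw [div_le_iff₀ h2pos]
          linarith [hd2]
      · push_neg at hex
        have hU2 : ∀ t, 0 ≤ t → 0 ≤ U t := by
          intro t ht
          exact intervalIntegral.integral_nonneg ht (fun x _ => hex x)
        have hderP : ∀ t, 0 ≤ t → deriv u t ≤ P := by
          intro t ht
          have h1 := hder t
          have h2 : 1 ≤ Real.exp ((A + 2 * cp) * U t) :=
            Real.one_le_exp (mul_nonneg hap.le (hU2 t ht))
          nlinarith
        have key := growth_fwd (fun t => -u t) (fun t => -deriv u t) (-P) 0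
          (fun t _ => (hu' t).neg) (fun t ht => by show -P ≤ -deriv u t; linarith [hderP t ht])
        have hP' : (0:ℝ) < -P := by linarith
        have hT : (0:ℝ) ≤ (u 0 + 1) / (-P) := div_nonneg (by linarith [hex 0]) hP'.le
        have h1 := key ((u 0 + 1) / (-P)) hT
        have hPne : P ≠ 0 := ne_of_lt hP
        have h2 : (-P) * ((u 0 + 1) / (-P) - 0) = u 0 + 1 := by
          field_simp
          ring
        have h3 := hex ((u 0 + 1) / (-P))
        linarith
    · -- P = 0 : deriv u = -cp u²
      have hd : ∀ t, deriv u t = -cp * (u t) ^ 2 := by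
        intro t
        have h := Prep t
        rw [hP, zero_mul] at h
        linarith
      have hanti : Antitone u := antitone_of_deriv_nonpos hu1
        (fun t => by rw [hd t]; nlinarith [sq_nonneg (u t)])
      rcases ht0.lt_or_gt with hlt | hgt
      · apply no_pos_decay (fun t => -(u t)⁻¹) (fun t => deriv u t / (u t) ^ 2) cp t0 hcp
        · intro t ht
          exact neg_pos.mpr (inv_lt_zero.mpr (lt_of_le_of_lt (hanti ht) hlt))
        · intro t ht
          have h := ((hu' t).inv (ne_of_lt (lt_of_le_of_lt (hanti ht) hlt))).neg
          exact h.congr_deriv (by ring)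
        · intro t ht
          have hut : u t < 0 := lt_of_le_of_lt (hanti ht) hlt
          have hne0 : u t ^ 2 ≠ 0 := pow_ne_zero 2 (ne_of_lt hut)
          show deriv u t / u t ^ 2 ≤ -cp
          rw [hd t, mul_div_assoc, div_self hne0, mul_one]
      · apply no_pos_growth (fun t => (u t)⁻¹) (fun t => -(deriv u t) / (u t) ^ 2) cp t0 hcp
        · intro t ht
          exact inv_pos.mpr (lt_of_lt_of_le hgt (hanti ht))
        · intro t ht
          exact (hu' t).inv (ne_of_gt (lt_of_lt_of_le hgt (hanti ht)))
        · intro t ht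
          have hut : 0 < u t := lt_of_lt_of_le hgt (hanti ht)
          have hne0 : u t ^ 2 ≠ 0 := pow_ne_zero 2 (ne_of_gt hut)
          show cp ≤ -(deriv u t) / u t ^ 2
          rw [hd t, neg_mul, neg_neg, mul_div_assoc, div_self hne0, mul_one]
    · -- P > 0, N < 0
      have hune : ∀ t, u t ≠ 0 := by
        intro t h0
        have h := hPN t
        rw [h0] at h
        nlinarith [mul_pos hP (Real.exp_pos ((A + 2 * cp) * U t)),
          mul_pos (neg_pos.mpr hN) (Real.exp_pos ((A + 2 * cm) * U t))]
      have hsign : (∀ t, 0 < u t) ∨ (∀ t, u t < 0) := by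
        by_contra hc
        push_neg at hc
        obtain ⟨⟨t1, h1⟩, t2, h2⟩ := hc
        have h1' : u t1 < 0 := lt_of_le_of_ne h1 (hune t1)
        have h2' : 0 < u t2 := lt_of_le_of_ne h2 (Ne.symm (hune t2))
        have hm : (0:ℝ) ∈ Set.Icc (u t1) (u t2) := ⟨h1'.le, h2'.le⟩
        obtain ⟨x, hx⟩ := intermediate_value_univ t1 t2 hucont hm
        exact hune x hx
      set γ : ℝ := (A + 2 * cp) / 2 with hγdef
      have hγ : 0 < γ := by rw [hγdef]; linarith
      set K : ℝ := Real.sqrt (P / (cp - cm)) with hKdef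
      have hK : 0 < K := Real.sqrt_pos.mpr (div_pos hP hcpm)
      have hK2 : K ^ 2 = P / (cp - cm) := Real.sq_sqrt (div_pos hP hcpm).le
      have hK2' : K ^ 2 * (cp - cm) = P := by
        rw [hK2]; field_simp
      have hlow : ∀ t, (K * Real.exp (γ * U t)) ^ 2 ≤ (u t) ^ 2 := by
        intro t
        have h := hPN t
        have he2 : 0 < Real.exp ((A + 2 * cm) * U t) := Real.exp_pos _
        have hee : Real.exp (γ * U t) * Real.exp (γ * U t)
            = Real.exp ((A + 2 * cp) * U t) := by
          rw [← Real.exp_add]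
          congr 1
          rw [hγdef]; ring
        have he1 : (K * Real.exp (γ * U t)) ^ 2 * (cp - cm)
            = P * Real.exp ((A + 2 * cp) * U t) := by
          rw [mul_pow, pow_two (Real.exp (γ * U t)), hee]
          linear_combination Real.exp ((A + 2 * cp) * U t) * hK2'
        nlinarith [mul_pos (neg_pos.mpr hN) he2, hcpm]
      rcases hsign with hall | hall
      · have hub : ∀ t, K * Real.exp (γ * U t) ≤ u t := by
          intro t
          nlinarith [hlow t, hall t, mul_pos hK (Real.exp_pos (γ * U t))]
        apply no_pos_decay (fun t => Real.exp (-γ * U t))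
          (fun t => Real.exp (-γ * U t) * (-γ * u t)) (γ * K) 0 (by positivity)
        · intro t _; exact Real.exp_pos _
        · intro t _; exact ((hU t).const_mul (-γ)).exp
        · intro t _
          have h1 := hub t
          have h2 : Real.exp (γ * U t) * Real.exp (-γ * U t) = 1 := by
            rw [← Real.exp_add]; ring_nf; exact Real.exp_zero
          have h3 : K ≤ u t * Real.exp (-γ * U t) := by
            have hmm := mul_le_mul_of_nonneg_right h1 (Real.exp_pos (-γ * U t)).le
            calc K = K * (Real.exp (γ * U t) * Real.exp (-γ * U t)) := by
                  rw [h2, mul_one]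
              _ = K * Real.exp (γ * U t) * Real.exp (-γ * U t) := by ring
              _ ≤ u t * Real.exp (-γ * U t) := hmm
          show Real.exp (-γ * U t) * (-γ * u t) ≤ -(γ * K)
          nlinarith [mul_le_mul_of_nonneg_left h3 hγ.le]
      · have hub : ∀ t, K * Real.exp (γ * U t) ≤ -u t := by
          intro t
          nlinarith [hlow t, hall t, mul_pos hK (Real.exp_pos (γ * U t))]
        apply no_pos_growth (fun t => Real.exp (-γ * U t))
          (fun t => Real.exp (-γ * U t) * (-γ * u t)) (γ * K) 0 (by positivity)
        · intro t _; exact Real.exp_pos _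
        · intro t _; exact ((hU t).const_mul (-γ)).exp
        · intro t _
          have h1 := hub t
          have h2 : Real.exp (γ * U t) * Real.exp (-γ * U t) = 1 := by
            rw [← Real.exp_add]; ring_nf; exact Real.exp_zero
          have h3 : K ≤ -u t * Real.exp (-γ * U t) := by
            have hmm := mul_le_mul_of_nonneg_right h1 (Real.exp_pos (-γ * U t)).le
            calc K = K * (Real.exp (γ * U t) * Real.exp (-γ * U t)) := by
                  rw [h2, mul_one]
              _ = K * Real.exp (γ * U t) * Real.exp (-γ * U t) := by ring
              _ ≤ -u t * Real.exp (-γ * U t) := hmm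
          show γ * K ≤ Real.exp (-γ * U t) * (-γ * u t)
          nlinarith [mul_le_mul_of_nonneg_left h3 hγ.le]
  · -- N = 0 : deriv u = -cm u² ≥ 0
    have hd : ∀ t, deriv u t = -cm * (u t) ^ 2 := by
      intro t
      have h := Nrep t
      rw [hN, zero_mul] at h
      linarith
    have hmon : Monotone u := monotone_of_deriv_nonneg hu1
      (fun t => by rw [hd t]; nlinarith [sq_nonneg (u t)])
    rcases ht0.lt_or_gt with hlt | hgt
    · apply no_pos_growth (fun t => -(u t)⁻¹) (fun t => deriv u t / (u t) ^ 2) (-cm) t0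
        (by linarith)
      · intro t ht
        exact neg_pos.mpr (inv_lt_zero.mpr (lt_of_le_of_lt (hmon ht) hlt))
      · intro t ht
        have h := ((hu' t).inv (ne_of_lt (lt_of_le_of_lt (hmon ht) hlt))).neg
        exact h.congr_deriv (by ring)
      · intro t ht
        have hut : u t < 0 := lt_of_le_of_lt (hmon ht) hlt
        have hne0 : u t ^ 2 ≠ 0 := pow_ne_zero 2 (ne_of_lt hut)
        show -cm ≤ deriv u t / u t ^ 2
        rw [hd t, mul_div_assoc, div_self hne0, mul_one]
    · apply no_pos_decay (fun t => (u t)⁻¹) (fun t => -(deriv u t) / (u t) ^ 2) (-cm) t0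
        (by linarith)
      · intro t ht
        exact inv_pos.mpr (lt_of_lt_of_le hgt (hmon ht))
      · intro t ht
        exact (hu' t).inv (ne_of_gt (lt_of_lt_of_le hgt (hmon ht)))
      · intro t ht
        have hut : 0 < u t := lt_of_lt_of_le hgt (hmon ht)
        have hne0 : u t ^ 2 ≠ 0 := pow_ne_zero 2 (ne_of_gt hut)
        show -(deriv u t) / u t ^ 2 ≤ -(-cm)
        rw [hd t, neg_mul, neg_neg, mul_div_assoc, div_self hne0, mul_one, neg_neg]
  · -- N > 0 : u strictly increasing
    have hder : ∀ t, N * Real.exp ((A + 2 * cm) * U t) ≤ deriv u t := by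
      intro t
      have h := Nrep t
      nlinarith [sq_nonneg (u t)]
    have hderpos : ∀ t, 0 < deriv u t := by
      intro t
      have := hder t
      nlinarith [mul_pos hN (Real.exp_pos ((A + 2 * cm) * U t))]
    have hmon : Monotone u := monotone_of_deriv_nonneg hu1 (fun t => (hderpos t).le)
    by_cases hex : ∃ t1, 0 < u t1
    · obtain ⟨t1, ht1⟩ := hex
      apply no_pos_decay (fun t => (u t)⁻¹) (fun t => -(deriv u t) / (u t) ^ 2) (-cm) t1
        (by linarith)
      · intro t ht
        exact inv_pos.mpr (lt_of_lt_of_le ht1 (hmon ht))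
      · intro t ht
        exact (hu' t).inv (ne_of_gt (lt_of_lt_of_le ht1 (hmon ht)))
      · intro t ht
        have hut : 0 < u t := lt_of_lt_of_le ht1 (hmon ht)
        have h2pos : 0 < u t ^ 2 := pow_two_pos_of_ne_zero (ne_of_gt hut)
        have hd2 : -cm * (u t) ^ 2 ≤ deriv u t := by
          have h := Nrep t
          nlinarith [mul_pos hN (Real.exp_pos ((A + 2 * cm) * U t))]
        show -(deriv u t) / u t ^ 2 ≤ -(-cm)
        rw [div_le_iff₀ h2pos]
        linarith [hd2]
    · push_neg at hex
      have hU2 : ∀ t, 0 ≤ t → U t ≤ 0 := by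
        intro t ht
        have hneg : 0 ≤ ∫ x in (0:ℝ)..t, -u x :=
          intervalIntegral.integral_nonneg ht (fun x _ => by linarith [hex x])
        rw [intervalIntegral.integral_neg] at hneg
        simp only [hUdef]
        linarith
      have hderN : ∀ t, 0 ≤ t → N ≤ deriv u t := by
        intro t ht
        have h1 := hder t
        have h2 : 1 ≤ Real.exp ((A + 2 * cm) * U t) :=
          Real.one_le_exp (by nlinarith [mul_nonneg (neg_nonneg.mpr ham.le) (neg_nonneg.mpr (hU2 t ht))])
        nlinarith [h1, h2, hN]
      have key := growth_fwd u (deriv u) N 0 (fun t _ => hu' t) hderN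
      have hN' : N ≠ 0 := ne_of_gt hN
      have hT : (0:ℝ) ≤ (1 - u 0) / N := div_nonneg (by linarith [hex 0]) hN.le
      have h1 := key ((1 - u 0) / N) hT
      have h2 : N * ((1 - u 0) / N - 0) = 1 - u 0 := by
        field_simp [hN']
        ring
      have h3 := hex ((1 - u 0) / N)
      linarith

set_option maxHeartbeats 1000000 in
/-- A < 0, B > 0: only the trivial global solution; consequently for
m ≥ 9 every positive global solution of (1.1) is constant. -/
theorem stmt_11 (A B : ℝ) (hA : A < 0) (hB : 0 < B) :
    (∀ u : ℝ → ℝ, Differentiable ℝ u → Differentiable ℝ (deriv u) →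
      (∀ t, deriv (deriv u) t = A * u t * deriv u t + B * (u t) ^ 3) →
      ∀ t, u t = 0)
    ∧
    (∀ m : ℤ, 9 ≤ m →
      ∀ f : ℝ → ℝ, (∀ t, 0 < f t) →
        Differentiable ℝ f → Differentiable ℝ (deriv f) →
        Differentiable ℝ (deriv (deriv f)) →
        (∀ t, (f t) ^ 2 * deriv (deriv (deriv f)) t
          - (2 * ((m:ℝ) + 1) / ((m:ℝ) - 2)) * f t * deriv f t * deriv (deriv f) t
          + ((m:ℝ) ^ 2 / ((m:ℝ) - 2) ^ 2) * (deriv f t) ^ 3 = 0) →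
        ∀ s t, f s = f t) := by
  constructor
  · intro u h1 h2 h3
    exact part1 A B hA hB u h1 h2 h3
  · intro m hm f hfpos hf1 hf2 hf3 heq s t
    have hM : (9:ℝ) ≤ (m:ℝ) := by exact_mod_cast hm
    have hM2 : (0:ℝ) < (m:ℝ) - 2 := by linarith
    have hMne : (m:ℝ) - 2 ≠ 0 := ne_of_gt hM2
    have hfne : ∀ x, f x ≠ 0 := fun x => ne_of_gt (hfpos x)
    have hf' : ∀ x, HasDerivAt f (deriv f x) x := fun x => (hf1 x).hasDerivAt
    have hf'' : ∀ x, HasDerivAt (deriv f) (deriv (deriv f) x) x := fun x => (hf2 x).hasDerivAt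
    have hf''' : ∀ x, HasDerivAt (deriv (deriv f)) (deriv (deriv (deriv f)) x) x :=
      fun x => (hf3 x).hasDerivAt
    set A' : ℝ := (8 - (m:ℝ)) / ((m:ℝ) - 2) with hA'def
    set B' : ℝ := 2 * ((m:ℝ) - 4) / ((m:ℝ) - 2) ^ 2 with hB'def
    have hA' : A' < 0 := div_neg_of_neg_of_pos (by linarith) hM2
    have hB' : 0 < B' := div_pos (by linarith) (by positivity)
    set u : ℝ → ℝ := fun x => deriv f x / f x with hudef
    have hu : ∀ x, HasDerivAt u
        ((deriv (deriv f) x * f x - deriv f x * deriv f x) / f x ^ 2) x :=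
      fun x => (hf'' x).div (hf' x) (hfne x)
    have hud : ∀ x, deriv u x
        = (deriv (deriv f) x * f x - deriv f x * deriv f x) / f x ^ 2 :=
      fun x => (hu x).deriv
    have hu1 : Differentiable ℝ u := fun x => (hu x).differentiableAt
    have hderu : deriv u = fun x =>
        (deriv (deriv f) x * f x - deriv f x * deriv f x) / f x ^ 2 := funext hud
    have hu2' : ∀ x, HasDerivAt (deriv u)
        (((deriv (deriv (deriv f)) x * f x + deriv (deriv f) x * deriv f x
            - (deriv (deriv f) x * deriv f x + deriv f x * deriv (deriv f) x)) * f x ^ 2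
          - (deriv (deriv f) x * f x - deriv f x * deriv f x) * (2 * f x * deriv f x))
          / (f x ^ 2) ^ 2) x := by
      intro x
      rw [hderu]
      have hnum : HasDerivAt (fun y => deriv (deriv f) y * f y - deriv f y * deriv f y)
          (deriv (deriv (deriv f)) x * f x + deriv (deriv f) x * deriv f x
            - (deriv (deriv f) x * deriv f x + deriv f x * deriv (deriv f) x)) x :=
        ((hf''' x).mul (hf' x)).sub ((hf'' x).mul (hf'' x))
      have hden : HasDerivAt (fun y => f y ^ 2) (2 * f x * deriv f x) x := by
        exact ((hf' x).pow 2).congr_deriv (by simp)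
      exact hnum.div hden (pow_ne_zero 2 (hfne x))
    have hu2 : Differentiable ℝ (deriv u) := fun x => (hu2' x).differentiableAt
    have hode : ∀ x, deriv (deriv u) x = A' * u x * deriv u x + B' * (u x) ^ 3 := by
      intro x
      rw [(hu2' x).deriv, hud x]
      simp only [hudef]
      have h := heq x
      have hF3 : deriv (deriv (deriv f)) x
          = (2 * ((m:ℝ) + 1) / ((m:ℝ) - 2) * (f x * deriv f x * deriv (deriv f) x)
            - (m:ℝ) ^ 2 / ((m:ℝ) - 2) ^ 2 * deriv f x ^ 3) / f x ^ 2 := by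
        rw [eq_div_iff (pow_ne_zero 2 (hfne x))]
        linear_combination h
      rw [hF3, hA'def, hB'def]
      field_simp [hfne x, hMne]
      ring
    have huzero := part1 A' B' hA' hB' u hu1 hu2 hode
    have hfderiv : ∀ x, deriv f x = 0 := by
      intro x
      have hz := huzero x
      simp only [hudef] at hz
      exact (div_eq_zero_iff.mp hz).resolve_right (hfne x)
    exact is_const_of_deriv_eq_zero hf1 hfderiv s t
end

section
/- Let m be an integer with m ≥ 5. Then every positive three-times differentiable function f : ℝ → ℝ satisfying f(t)²·f'''(t) − (2(m+1)/(m−2))·f(t)·f'(t)·f''(t) + (m²/(m−2)²)·f'(t)³ = 0 for all t ∈ ℝ is constant; equivalently, equation (1.1) has no non-trivial positive global solution on ℝ when m ≥ 5. -/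
/-- Core Riccati blow-up: if `u' ≥ ε u²` forward of `t₀` and `u t₀ > 0`, contradiction. -/
lemma riccati_blowup (u : ℝ → ℝ) (hu : Differentiable ℝ u) (ε t₀ : ℝ) (hε : 0 < ε)
    (h : ∀ t, t₀ ≤ t → ε * u t ^ 2 ≤ deriv u t) (h0 : 0 < u t₀) : False := by
  have hmono : MonotoneOn u (Set.Ici t₀) := by
    apply monotoneOn_of_deriv_nonneg (convex_Ici t₀) hu.continuous.continuousOn
      hu.differentiableOn
    intro x hx
    rw [interior_Ici, Set.mem_Ioi] at hx
    exact le_trans (by positivity) (h x hx.le)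
  have hpos : ∀ t, t₀ ≤ t → 0 < u t := fun t ht =>
    lt_of_lt_of_le h0 (hmono Set.self_mem_Ici ht ht)
  set g : ℝ → ℝ := fun t => -(u t)⁻¹ - ε * t with hg
  have hgd : ∀ t, t₀ ≤ t → HasDerivAt g (deriv u t / u t ^ 2 - ε) t := by
    intro t ht
    have h1 : HasDerivAt u (deriv u t) t := (hu t).hasDerivAt
    have h2 := (h1.fun_inv (ne_of_gt (hpos t ht))).fun_neg
    have h3 : HasDerivAt (fun s : ℝ => ε * s) ε t := by
      simpa using (hasDerivAt_id t).const_mul ε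
    have h4 := h2.fun_sub h3
    exact h4.congr_deriv (by ring)
  have hgmono : MonotoneOn g (Set.Ici t₀) := by
    apply monotoneOn_of_deriv_nonneg (convex_Ici t₀)
    · exact fun t ht => ((hgd t ht).continuousAt).continuousWithinAt
    · intro t ht
      rw [interior_Ici, Set.mem_Ioi] at ht
      exact ((hgd t ht.le).differentiableAt).differentiableWithinAt
    · intro x hx
      rw [interior_Ici, Set.mem_Ioi] at hx
      rw [(hgd x hx.le).deriv]
      have h5 := h x hx.le
      have hu2 : 0 < u x ^ 2 := pow_pos (hpos x hx.le) 2
      have : ε ≤ deriv u x / u x ^ 2 := (le_div_iff₀ hu2).2 (by linarith)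
      linarith
  set T : ℝ := t₀ + ((u t₀)⁻¹ + ε) / ε with hT
  have hinv0 : 0 < (u t₀)⁻¹ := inv_pos.2 h0
  have htt : t₀ ≤ T := by
    rw [hT]
    nlinarith [div_pos (by linarith : (0:ℝ) < (u t₀)⁻¹ + ε) hε]
  have hle := hgmono Set.self_mem_Ici (Set.mem_Ici.2 htt) htt
  have h1 : 0 < (u T)⁻¹ := inv_pos.2 (hpos T htt)
  have h3 : ε * T - ε * t₀ = (u t₀)⁻¹ + ε := by
    rw [hT]; field_simp; ring
  have hle' : -(u t₀)⁻¹ - ε * t₀ ≤ -(u T)⁻¹ - ε * T := hle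
  linarith


/-- Forward, negative: `u' ≤ -ε u²`, `u t₀ < 0`. -/
lemma riccati_blowup_neg (u : ℝ → ℝ) (hu : Differentiable ℝ u) (ε t₀ : ℝ) (hε : 0 < ε)
    (h : ∀ t, t₀ ≤ t → deriv u t ≤ -(ε * u t ^ 2)) (h0 : u t₀ < 0) : False := by
  apply riccati_blowup (fun t => -u t) hu.neg ε t₀ hε _ (by simpa using h0)
  intro t ht
  show ε * (-u t) ^ 2 ≤ deriv (fun t => -u t) t
  rw [deriv.fun_neg]
  have := h t ht
  nlinarith [this]

/-- Backward, negative start: `u' ≥ ε u²` on `(-∞, t₀]`, `u t₀ < 0`. -/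
lemma riccati_blowup_back (u : ℝ → ℝ) (hu : Differentiable ℝ u) (ε t₀ : ℝ) (hε : 0 < ε)
    (h : ∀ t, t ≤ t₀ → ε * u t ^ 2 ≤ deriv u t) (h0 : u t₀ < 0) : False := by
  have hdiff : Differentiable ℝ (fun t => u (2 * t₀ - t)) :=
    hu.comp ((differentiable_const _).sub differentiable_id)
  apply riccati_blowup_neg (fun t => u (2 * t₀ - t)) hdiff ε t₀ hε _
    (show u (2 * t₀ - t₀) < 0 by rw [show 2 * t₀ - t₀ = t₀ by ring]; exact h0)
  intro t ht
  have hd : deriv (fun t => u (2 * t₀ - t)) t = -deriv u (2 * t₀ - t) :=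
    deriv_comp_const_sub u (2 * t₀) t
  show deriv (fun t => u (2 * t₀ - t)) t ≤ -(ε * u (2 * t₀ - t) ^ 2)
  rw [hd]
  have := h (2 * t₀ - t) (by linarith)
  nlinarith [this]

/-- Backward, positive start: `u' ≤ -ε u²` on `(-∞, t₀]`, `u t₀ > 0`. -/
lemma riccati_blowup_back_neg (u : ℝ → ℝ) (hu : Differentiable ℝ u) (ε t₀ : ℝ) (hε : 0 < ε)
    (h : ∀ t, t ≤ t₀ → deriv u t ≤ -(ε * u t ^ 2)) (h0 : 0 < u t₀) : False := by
  have hdiff : Differentiable ℝ (fun t => u (2 * t₀ - t)) :=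
    hu.comp ((differentiable_const _).sub differentiable_id)
  apply riccati_blowup (fun t => u (2 * t₀ - t)) hdiff ε t₀ hε _
    (show 0 < u (2 * t₀ - t₀) by rw [show 2 * t₀ - t₀ = t₀ by ring]; exact h0)
  intro t ht
  have hd : deriv (fun t => u (2 * t₀ - t)) t = -deriv u (2 * t₀ - t) :=
    deriv_comp_const_sub u (2 * t₀) t
  show ε * u (2 * t₀ - t) ^ 2 ≤ deriv (fun t => u (2 * t₀ - t)) t
  rw [hd]
  have := h (2 * t₀ - t) (by linarith)
  nlinarith [this]

/-- Solutions of `p' = g p` have the form `p 0 * exp (∫ g)`. -/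
lemma linear_ode_sol (p g : ℝ → ℝ) (hp : Differentiable ℝ p) (hg : Continuous g)
    (hode : ∀ t, deriv p t = g t * p t) (t : ℝ) :
    p t = p 0 * Real.exp (∫ s in (0:ℝ)..t, g s) := by
  set G : ℝ → ℝ := fun t => ∫ s in (0:ℝ)..t, g s with hG
  have hGd : ∀ t, HasDerivAt G (g t) t := fun t =>
    (hg.integral_hasStrictDerivAt 0 t).hasDerivAt
  set H : ℝ → ℝ := fun t => p t * Real.exp (-G t) with hH
  have hHd : ∀ t, HasDerivAt H 0 t := by
    intro t
    have h1 : HasDerivAt (fun t => Real.exp (-G t)) (Real.exp (-G t) * -g t) t :=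
      ((hGd t).neg).exp
    have h2 := (hp t).hasDerivAt.mul h1
    have h3 : deriv p t * Real.exp (-G t) + p t * (Real.exp (-G t) * -g t) = 0 := by
      rw [hode t]; ring
    rw [h3] at h2
    exact h2
  have hconst : H t = H 0 :=
    is_const_of_deriv_eq_zero (fun s => (hHd s).differentiableAt) (fun s => (hHd s).deriv) t 0
  have hG0 : G 0 = 0 := intervalIntegral.integral_same
  have hexp : p t = H t * Real.exp (G t) := by
    rw [hH]
    rw [mul_assoc, ← Real.exp_add]
    simp
  rw [hexp, hconst, hH]
  simp [hG0]
  exact Or.inl rfl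


set_option maxHeartbeats 1000000 in
/-- For m ≥ 5, every positive global solution of equation (1.1) on ℝ is
constant. -/
theorem stmt_12 (m : ℤ) (hm : 5 ≤ m)
    (f : ℝ → ℝ) (hf : ∀ t, 0 < f t)
    (hd1 : Differentiable ℝ f) (hd2 : Differentiable ℝ (deriv f))
    (hd3 : Differentiable ℝ (deriv (deriv f)))
    (hode : ∀ t, (f t) ^ 2 * deriv (deriv (deriv f)) t
      - (2 * ((m:ℝ) + 1) / ((m:ℝ) - 2)) * f t * deriv f t * deriv (deriv f) t
      + ((m:ℝ) ^ 2 / ((m:ℝ) - 2) ^ 2) * (deriv f t) ^ 3 = 0) :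
    ∀ s t, f s = f t := by
  have hM5 : (5:ℝ) ≤ (m:ℝ) := by exact_mod_cast hm
  set M : ℝ := (m:ℝ) with hMdef
  have hM2' : (0:ℝ) < M - 2 := by linarith
  have hM2 : M - 2 ≠ 0 := ne_of_gt hM2'
  set l1 : ℝ := 2 / (M - 2) with hl1def
  set l2 : ℝ := (4 - M) / (2 * (M - 2)) with hl2def
  have hl1 : 0 < l1 := div_pos two_pos hM2'
  have hl2 : l2 < 0 := div_neg_of_neg_of_pos (by linarith) (by linarith)
  have hfne : ∀ t, f t ≠ 0 := fun t => ne_of_gt (hf t)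
  set u : ℝ → ℝ := fun t => deriv f t / f t with hu_def
  have hu : Differentiable ℝ u := hd2.div hd1 hfne
  have hud' : ∀ t, deriv u t =
      (deriv (deriv f) t * f t - deriv f t * deriv f t) / f t ^ 2 :=
    fun t => ((hd2 t).hasDerivAt.div (hd1 t).hasDerivAt (hfne t)).deriv
  have hueq : deriv u = fun t =>
      (deriv (deriv f) t * f t - deriv f t * deriv f t) / f t ^ 2 := funext hud'
  have hdu : Differentiable ℝ (deriv u) := by
    rw [hueq]
    exact ((hd3.mul hd1).sub (hd2.mul hd2)).div (hd1.pow 2)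
      (fun t => pow_ne_zero 2 (hfne t))
  -- second derivative of u
  have huddval : ∀ t, deriv (deriv u) t =
      -((M - 8) / (M - 2)) * u t * deriv u t + (2 * (M - 4) / (M - 2) ^ 2) * u t ^ 3 := by
    intro t
    have hN : HasDerivAt (fun t => deriv (deriv f) t * f t - deriv f t * deriv f t)
        (deriv (deriv (deriv f)) t * f t + deriv (deriv f) t * deriv f t
          - (deriv (deriv f) t * deriv f t + deriv f t * deriv (deriv f) t)) t :=
      ((hd3 t).hasDerivAt.mul (hd1 t).hasDerivAt).sub
        ((hd2 t).hasDerivAt.mul (hd2 t).hasDerivAt)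
    have hD : HasDerivAt (fun t => f t ^ 2) (2 * f t * deriv f t) t := by
      have h := (hd1 t).hasDerivAt.fun_pow 2
      norm_num at h
      convert h using 1 <;> ring
    have hden : ((M - 2) ^ 2 * f t ^ 2) ≠ 0 :=
      mul_ne_zero (pow_ne_zero 2 hM2) (pow_ne_zero 2 (hfne t))
    have h3p : (M - 2) ^ 2 * f t ^ 2 * deriv (deriv (deriv f)) t
        - 2 * (M + 1) * (M - 2) * f t * deriv f t * deriv (deriv f) t
        + M ^ 2 * deriv f t ^ 3 = 0 := by
      have h3 := hode t
      field_simp [hM2] at h3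
      have h4 : (M - 2) * ((M - 2) ^ 2 * f t ^ 2 * deriv (deriv (deriv f)) t
          - 2 * (M + 1) * (M - 2) * f t * deriv f t * deriv (deriv f) t
          + M ^ 2 * deriv f t ^ 3) = 0 := by linear_combination (M - 2) * h3
      have h5 := (mul_eq_zero.1 h4).resolve_left hM2
      linarith [h5]
    have hd3' : deriv (deriv (deriv f)) t =
        (2 * (M + 1) * (M - 2) * f t * deriv f t * deriv (deriv f) t
          - M ^ 2 * deriv f t ^ 3) / ((M - 2) ^ 2 * f t ^ 2) := by
      rw [eq_div_iff hden]
      linarith [h3p]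
    conv_lhs => rw [hueq]
    rw [(hN.fun_div hD (pow_ne_zero 2 (hfne t))).deriv, hd3']
    rw [hud' t]
    simp only [hu_def]
    field_simp [hfne t, hM2]
    ring
  -- P and Q
  set P : ℝ → ℝ := fun t => deriv u t - l1 * u t ^ 2 with hPdef
  set Q : ℝ → ℝ := fun t => deriv u t - l2 * u t ^ 2 with hQdef
  have husq : ∀ t, HasDerivAt (fun t => u t ^ 2) (2 * u t * deriv u t) t := by
    intro t
    have h := (hu t).hasDerivAt.fun_pow 2
    norm_num at h
    convert h using 1 <;> ring
  have hPdiff : Differentiable ℝ P := hdu.sub ((hu.pow 2).const_mul l1)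
  have hQdiff : Differentiable ℝ Q := hdu.sub ((hu.pow 2).const_mul l2)
  have hPd : ∀ t, HasDerivAt P (deriv (deriv u) t - l1 * (2 * u t * deriv u t)) t :=
    fun t => (hdu t).hasDerivAt.sub ((husq t).const_mul l1)
  have hQd : ∀ t, HasDerivAt Q (deriv (deriv u) t - l2 * (2 * u t * deriv u t)) t :=
    fun t => (hdu t).hasDerivAt.sub ((husq t).const_mul l2)
  have hPderiv : ∀ t, deriv P t = (2 * l2 * u t) * P t := by
    intro t
    rw [(hPd t).deriv, huddval t]
    simp only [hPdef, hl1def, hl2def]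
    field_simp [hM2]
    ring
  have hQderiv : ∀ t, deriv Q t = (2 * l1 * u t) * Q t := by
    intro t
    rw [(hQd t).deriv, huddval t]
    simp only [hQdef, hl1def, hl2def]
    field_simp [hM2]
    ring
  have hPsol : ∀ t, P t = P 0 * Real.exp (∫ s in (0:ℝ)..t, 2 * l2 * u s) :=
    linear_ode_sol P (fun s => 2 * l2 * u s) hPdiff
      (continuous_const.mul hu.continuous) hPderiv
  have hQsol : ∀ t, Q t = Q 0 * Real.exp (∫ s in (0:ℝ)..t, 2 * l1 * u s) :=
    linear_ode_sol Q (fun s => 2 * l1 * u s) hQdiff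
      (continuous_const.mul hu.continuous) hQderiv
  -- helper: if u' ≥ l1 u² everywhere then u ≡ 0
  have hU : (∀ t, l1 * u t ^ 2 ≤ deriv u t) → ∀ t, u t = 0 := by
    intro hyp t
    rcases lt_trichotomy (u t) 0 with h | h | h
    · exact (riccati_blowup_back u hu l1 t hl1 (fun s _ => hyp s) h).elim
    · exact h
    · exact (riccati_blowup u hu l1 t hl1 (fun s _ => hyp s) h).elim
  have hV : (∀ t, deriv u t ≤ -((-l2) * u t ^ 2)) → ∀ t, u t = 0 := by
    intro hyp t
    rcases lt_trichotomy (u t) 0 with h | h | h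
    · exact (riccati_blowup_neg u hu (-l2) t (by linarith) (fun s _ => hyp s) h).elim
    · exact h
    · exact (riccati_blowup_back_neg u hu (-l2) t (by linarith) (fun s _ => hyp s) h).elim
  -- main case analysis
  have hu0 : ∀ t, u t = 0 := by
    rcases le_or_gt 0 (P 0) with hc1 | hc1
    · -- P ≥ 0 everywhere
      apply hU
      intro t
      have h1 : 0 ≤ P t := by
        rw [hPsol t]
        exact mul_nonneg hc1 (Real.exp_pos _).le
      have h2 : P t = deriv u t - l1 * u t ^ 2 := by rw [hPdef]
      linarith
    rcases le_or_gt (Q 0) 0 with hc2 | hc2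
    · -- Q ≤ 0 everywhere
      apply hV
      intro t
      have h1 : Q t ≤ 0 := by
        rw [hQsol t]
        exact mul_nonpos_of_nonpos_of_nonneg hc2 (Real.exp_pos _).le
      have h2 : Q t = deriv u t - l2 * u t ^ 2 := by rw [hQdef]
      nlinarith [h1, h2]
    · -- P < 0 < Q everywhere: impossible
      exfalso
      have hPneg : ∀ t, P t < 0 := fun t => by
        rw [hPsol t]; exact mul_neg_of_neg_of_pos hc1 (Real.exp_pos _)
      have hQpos : ∀ t, 0 < Q t := fun t => by
        rw [hQsol t]; exact mul_pos hc2 (Real.exp_pos _)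
      have hune : ∀ t, u t ≠ 0 := by
        intro t h0
        have h1 := hPneg t
        have h2 := hQpos t
        rw [hPdef] at h1
        rw [hQdef] at h2
        simp only [h0] at h1 h2
        nlinarith [h1, h2]
      have husq2 : ∀ t, (0:ℝ) < u t ^ 2 := fun t =>
        lt_of_le_of_ne (sq_nonneg (u t)) (Ne.symm (pow_ne_zero 2 (hune t)))
      -- v = u' / u²
      set v : ℝ → ℝ := fun t => deriv u t / u t ^ 2 with hvdef
      have hvderiv : ∀ t, deriv v t = -2 * u t * (v t - l1) * (v t - l2) := by
        intro t
        have hvd : HasDerivAt v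
            ((deriv (deriv u) t * u t ^ 2 - deriv u t * (2 * u t * deriv u t))
              / (u t ^ 2) ^ 2) t :=
          (hdu t).hasDerivAt.div (husq t) (ne_of_gt (husq2 t))
        rw [hvd.deriv, huddval t]
        simp only [hvdef, hl1def, hl2def]
        field_simp [hune t, hM2]
        ring
      have hvlt : ∀ t, v t < l1 := by
        intro t
        have h1 := hPneg t
        simp only [hPdef] at h1
        rw [hvdef]
        exact (div_lt_iff₀ (husq2 t)).2 (by linarith)
      have hvgt : ∀ t, l2 < v t := by
        intro t
        have h1 := hQpos t
        simp only [hQdef] at h1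
        rw [hvdef]
        exact (lt_div_iff₀ (husq2 t)).2 (by linarith)
      have hduv : ∀ t, deriv u t = v t * u t ^ 2 := by
        intro t
        simp only [hvdef]
        exact (div_mul_cancel₀ _ (pow_ne_zero 2 (hune t))).symm
      -- sign of u is constant
      have hsign : (∀ t, 0 < u t) ∨ (∀ t, u t < 0) := by
        rcases (hune 0).lt_or_gt with h0 | h0
        · right
          intro t
          rcases (hune t).lt_or_gt with h | h
          · exact h
          · exfalso
            have hmem : (0:ℝ) ∈ Set.uIcc (u 0) (u t) :=
              Set.mem_uIcc.2 (Or.inl ⟨h0.le, h.le⟩)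
            obtain ⟨s, _, hs⟩ := intermediate_value_uIcc
              (hu.continuous.continuousOn) hmem
            exact hune s hs
        · left
          intro t
          rcases (hune t).lt_or_gt with h | h
          · exfalso
            have hmem : (0:ℝ) ∈ Set.uIcc (u 0) (u t) :=
              Set.mem_uIcc.2 (Or.inr ⟨h.le, h0.le⟩)
            obtain ⟨s, _, hs⟩ := intermediate_value_uIcc
              (hu.continuous.continuousOn) hmem
            exact hune s hs
          · exact h
      rcases hsign with hupos | huneg
      · -- u > 0 everywhere: v strictly increasing
        have hvmono : StrictMono v := by
          apply strictMono_of_deriv_pos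
          intro t
          rw [hvderiv t]
          nlinarith [mul_pos (mul_pos (hupos t) (sub_pos.2 (hvlt t)))
            (sub_pos.2 (hvgt t))]
        rcases lt_or_ge 0 (v 0) with hv0 | hv0
        · refine riccati_blowup u hu (v 0) 0 hv0 ?_ (hupos 0)
          intro t ht
          have h1 : v 0 ≤ v t := hvmono.le_iff_le.mpr ht
          rw [hduv t]
          nlinarith [mul_le_mul_of_nonneg_right h1 (sq_nonneg (u t))]
        · have hv1 : v (-1) < v 0 := hvmono (by norm_num)
          refine riccati_blowup_back_neg u hu (-(v (-1))) (-1) (by linarith) ?_ (hupos (-1))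
          intro t ht
          have h1 : v t ≤ v (-1) := hvmono.le_iff_le.mpr ht
          rw [hduv t]
          nlinarith [mul_le_mul_of_nonneg_right h1 (sq_nonneg (u t))]
      · -- u < 0 everywhere: v strictly decreasing
        have hvmono : StrictAnti v := by
          apply strictAnti_of_deriv_neg
          intro t
          rw [hvderiv t]
          nlinarith [mul_pos (mul_pos (neg_pos.2 (huneg t)) (sub_pos.2 (hvlt t)))
            (sub_pos.2 (hvgt t))]
        rcases lt_or_ge (v 0) 0 with hv0 | hv0
        · refine riccati_blowup_neg u hu (-(v 0)) 0 (by linarith) ?_ (huneg 0)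
          intro t ht
          have h1 : v t ≤ v 0 := hvmono.le_iff_ge.mpr ht
          rw [hduv t]
          nlinarith [mul_le_mul_of_nonneg_right h1 (sq_nonneg (u t))]
        · have hv1 : v 0 < v (-1) := hvmono (by norm_num)
          refine riccati_blowup_back u hu (v (-1)) (-1) (by linarith) ?_ (huneg (-1))
          intro t ht
          have h1 : v (-1) ≤ v t := hvmono.le_iff_ge.mpr ht
          rw [hduv t]
          nlinarith [mul_le_mul_of_nonneg_right h1 (sq_nonneg (u t))]
  -- conclude f is constant
  have hderiv0 : ∀ t, deriv f t = 0 := by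
    intro t
    have h := hu0 t
    rw [hu_def] at h
    exact (div_eq_zero_iff.1 h).resolve_right (hfne t)
  exact fun s t => is_const_of_deriv_eq_zero hd1 hderiv0 s t
end

section
/- Every twice differentiable function u : ℝ → ℝ satisfying u''(t) = 2·u(t)·u'(t) for all t ∈ ℝ is either a constant function or of the form u(t) = −b·tanh(b·t + c) for some real constants b ≠ 0 and c. -/
lemma tanh_half_log {A : ℝ} (hA : 0 < A) :
    Real.tanh (Real.log A / 2) = (A - 1) / (A + 1) := by
  set y := Real.log A / 2 with hy
  have hexp : Real.exp y * Real.exp y = A := by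
    rw [← Real.exp_add]
    have : y + y = Real.log A := by rw [hy]; ring
    rw [this, Real.exp_log hA]
  have he : 0 < Real.exp y := Real.exp_pos y
  have hA1 : A + 1 ≠ 0 := by positivity
  rw [Real.tanh_eq_sinh_div_cosh, Real.sinh_eq, Real.cosh_eq, Real.exp_neg]
  have hden : Real.exp y + (Real.exp y)⁻¹ ≠ 0 := by positivity
  field_simp
  nlinarith [hexp, he]

lemma aux_noblow {u : ℝ → ℝ} {k t₀ : ℝ} (hu : Differentiable ℝ u)
    (hode : ∀ t, deriv u t = u t ^ 2 + k) (hpos : ∀ t, 0 < deriv u t)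
    (h0 : 0 ≤ u t₀) : False := by
  set ε := deriv u t₀ with hε
  have hεpos : 0 < ε := hpos t₀
  have mono : StrictMono u := strictMono_of_deriv_pos hpos
  -- derivative bound for t ≥ t₀
  have stepA : ∀ t, t₀ ≤ t → ε ≤ deriv u t := by
    intro t ht
    have h1 : u t₀ ≤ u t := mono.le_iff_le.2 ht
    have h2 : u t₀ ^ 2 ≤ u t ^ 2 := by nlinarith
    rw [hode t, hε, hode t₀]; linarith
  -- linear growth
  have stepB : ∀ t, t₀ ≤ t → u t₀ + ε * (t - t₀) ≤ u t := by
    intro t ht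
    have := (convex_Ici t₀).mul_sub_le_image_sub_of_le_deriv
      hu.continuous.continuousOn hu.differentiableOn
      (fun x hx => stepA x (le_of_lt (by simpa using hx))) t₀ Set.self_mem_Ici t ht ht
    linarith
  set M := Real.sqrt (2 * |k| + 1) + 1 with hM
  have hMsq : 2 * |k| + 1 ≤ M ^ 2 := by
    have h1 : Real.sqrt (2 * |k| + 1) ^ 2 = 2 * |k| + 1 := Real.sq_sqrt (by positivity)
    have h2 : 0 ≤ Real.sqrt (2 * |k| + 1) := Real.sqrt_nonneg _
    nlinarith
  have hM1 : 1 ≤ M := by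
    have h2 : 0 ≤ Real.sqrt (2 * |k| + 1) := Real.sqrt_nonneg _
    nlinarith [Real.sqrt_nonneg (2 * |k| + 1)]
  set t₁ := t₀ + M / ε with ht₁
  have ht₀t₁ : t₀ ≤ t₁ := by
    have h7 : 0 ≤ M / ε := by positivity
    rw [ht₁]; linarith
  have hut₁ : M ≤ u t₁ := by
    have h8 := stepB t₁ ht₀t₁
    have h9 : ε * (t₁ - t₀) = M := by
      rw [ht₁]; field_simp; ring
    nlinarith
  have hularge : ∀ t, t₁ ≤ t → M ≤ u t := fun t ht => le_trans hut₁ (mono.le_iff_le.2 ht)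
  have hupos : ∀ t, t₁ ≤ t → 0 < u t := fun t ht => lt_of_lt_of_le (by linarith) (hularge t ht)
  set h : ℝ → ℝ := fun t => -(u t)⁻¹ with hh
  have hder : ∀ t, t₁ ≤ t → HasDerivAt h (deriv u t / u t ^ 2) t := by
    intro t ht
    have hne : u t ≠ 0 := ne_of_gt (hupos t ht)
    have := ((hu t).hasDerivAt.inv hne).neg
    refine this.congr_deriv ?_
    ring
  have hderbd : ∀ t, t₁ ≤ t → (1:ℝ)/2 ≤ deriv h t := by
    intro t ht
    rw [(hder t ht).deriv]
    have h1 : M ≤ u t := hularge t ht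
    have h2 : 0 < u t := hupos t ht
    rw [le_div_iff₀ (by positivity), hode t]
    have : 2 * |k| + 1 ≤ u t ^ 2 := le_trans hMsq (by nlinarith)
    have hk : -|k| ≤ k := neg_abs_le k
    nlinarith
  have hcont : ContinuousOn h (Set.Ici t₁) := by
    intro t ht
    exact ((hder t ht).continuousAt).continuousWithinAt
  have hdiff : DifferentiableOn ℝ h (interior (Set.Ici t₁)) := by
    intro t ht
    exact ((hder t (le_of_lt (by simpa using ht))).differentiableAt).differentiableWithinAt
  set T := t₁ + 2 * (1 + (u t₁)⁻¹) with hT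
  have hut₁pos : 0 < u t₁ := hupos t₁ le_rfl
  have hTt₁ : t₁ ≤ T := by
    have : 0 < (u t₁)⁻¹ := by positivity
    simp only [hT]; nlinarith
  have key := (convex_Ici t₁).mul_sub_le_image_sub_of_le_deriv hcont hdiff
    (fun x hx => hderbd x (le_of_lt (by simpa using hx))) t₁ Set.self_mem_Ici T hTt₁ hTt₁
  have hTpos : 0 < u T := hupos T hTt₁
  have h3 : (0:ℝ) < (u T)⁻¹ := by positivity
  have h4 : h T = -(u T)⁻¹ := rfl
  have h5 : h t₁ = -(u t₁)⁻¹ := rfl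
  rw [h4, h5] at key
  have h6 : (1:ℝ)/2 * (T - t₁) = 1 + (u t₁)⁻¹ := by rw [hT]; ring
  rw [h6] at key
  linarith

/-- Every global solution of u'' = 2 u u' is constant or of the form
u(t) = −b·tanh(b t + c) with b ≠ 0. -/
theorem stmt_13 (u : ℝ → ℝ) (hu : Differentiable ℝ u)
    (hu' : Differentiable ℝ (deriv u))
    (hode : ∀ t, deriv (deriv u) t = 2 * u t * deriv u t) :
    (∃ c : ℝ, ∀ t, u t = c) ∨
    (∃ b c : ℝ, b ≠ 0 ∧ ∀ t, u t = -b * Real.tanh (b * t + c)) := by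
  classical
  set k := deriv u 0 - u 0 ^ 2 with hk
  -- first integral
  have husq : ∀ t, HasDerivAt (fun t => u t ^ 2) (2 * u t * deriv u t) t := by
    intro t
    have := (hu t).hasDerivAt.pow 2
    exact this.congr_deriv (by norm_num)
  have L1 : ∀ t, deriv u t = u t ^ 2 + k := by
    have hF : ∀ t, HasDerivAt (fun t => deriv u t - u t ^ 2) 0 t := by
      intro t
      have h2 : HasDerivAt (deriv u) (deriv (deriv u) t) t := (hu' t).hasDerivAt
      have := h2.sub (husq t)
      rw [hode t] at this
      exact this.congr_deriv (by ring)
    have hconst := is_const_of_deriv_eq_zero (fun t => (hF t).differentiableAt)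
      (fun t => (hF t).deriv)
    intro t
    have := hconst t 0
    linarith [this]
  -- integrating factor
  set U : ℝ → ℝ := fun t => ∫ s in (0:ℝ)..t, u s with hU
  have hUd : ∀ t, HasDerivAt U (u t) t := fun t =>
    (hu.continuous.integral_hasStrictDerivAt 0 t).hasDerivAt
  set w : ℝ → ℝ := fun t => deriv u t * Real.exp (-(2 * U t)) with hw
  have hwd : ∀ t, HasDerivAt w 0 t := by
    intro t
    have h1 : HasDerivAt (deriv u) (2 * u t * deriv u t) t := by
      have := (hu' t).hasDerivAt; rwa [hode t] at this
    have h2 : HasDerivAt (fun t => Real.exp (-(2 * U t)))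
        (Real.exp (-(2 * U t)) * (-(2 * u t))) t := (((hUd t).const_mul 2).neg).exp
    have := h1.mul h2
    refine this.congr_deriv ?_
    ring
  have hwconst := is_const_of_deriv_eq_zero (fun t => (hwd t).differentiableAt)
    (fun t => (hwd t).deriv)
  have hwval : ∀ t, deriv u t * Real.exp (-(2 * U t)) = deriv u 0 * Real.exp (-(2 * U 0)) :=
    fun t => hwconst t 0
  rcases lt_trichotomy (deriv u 0) 0 with hd0 | hd0 | hd0
  · -- u' < 0 everywhere; tanh case
    right
    have hneg : ∀ t, deriv u t < 0 := by
      intro t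
      have h1 := hwval t
      have h2 : 0 < Real.exp (-(2 * U t)) := Real.exp_pos _
      have h3 : 0 < Real.exp (-(2 * U 0)) := Real.exp_pos _
      nlinarith
    have hkneg : k < 0 := by
      have := hneg 0
      rw [L1 0] at this
      nlinarith [sq_nonneg (u 0)]
    set b := Real.sqrt (-k) with hb
    have hbpos : 0 < b := Real.sqrt_pos.2 (by linarith)
    have hbsq : b ^ 2 = -k := Real.sq_sqrt (by linarith)
    have hbound : ∀ t, u t ^ 2 < b ^ 2 := by
      intro t
      have := hneg t
      rw [L1 t] at this
      rw [hbsq]; linarith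
    have hbu1 : ∀ t, 0 < b - u t := by
      intro t; nlinarith [hbound t]
    have hbu2 : ∀ t, 0 < b + u t := by
      intro t; nlinarith [hbound t]
    set g : ℝ → ℝ := fun t => (Real.log (b - u t) - Real.log (b + u t)) / 2 with hg
    have hgd : ∀ t, HasDerivAt g b t := by
      intro t
      have l1 : HasDerivAt (fun t => b - u t) (-(deriv u t)) t := ((hu t).hasDerivAt).const_sub b
      have l2 : HasDerivAt (fun t => b + u t) (deriv u t) t := ((hu t).hasDerivAt).const_add b
      have l3 := (l1.log (ne_of_gt (hbu1 t))).sub (l2.log (ne_of_gt (hbu2 t)))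
      have l4 := l3.div_const 2
      refine l4.congr_deriv ?_
      rw [L1 t]
      have e1 : b - u t ≠ 0 := ne_of_gt (hbu1 t)
      have e2 : b + u t ≠ 0 := ne_of_gt (hbu2 t)
      field_simp
      nlinarith [hbsq]
    -- g t = b * t + g 0
    have hlin : ∀ t, g t = b * t + g 0 := by
      have hGd : ∀ t, HasDerivAt (fun t => g t - b * t) 0 t := by
        intro t
        have := (hgd t).sub ((hasDerivAt_id t).const_mul b)
        exact this.congr_deriv (by ring)
      have := is_const_of_deriv_eq_zero (fun t => (hGd t).differentiableAt)
        (fun t => (hGd t).deriv)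
      intro t
      have h5 := this t 0
      linarith
    refine ⟨b, g 0, ne_of_gt hbpos, fun t => ?_⟩
    have hA : (0:ℝ) < (b - u t) / (b + u t) := div_pos (hbu1 t) (hbu2 t)
    have harg : b * t + g 0 = Real.log ((b - u t) / (b + u t)) / 2 := by
      rw [← hlin t, hg]
      simp only
      rw [Real.log_div (ne_of_gt (hbu1 t)) (ne_of_gt (hbu2 t))]
    rw [harg, tanh_half_log hA]
    have e2 : b + u t ≠ 0 := ne_of_gt (hbu2 t)
    have e3 : (b - u t) / (b + u t) + 1 ≠ 0 := by
      have : (b - u t) / (b + u t) + 1 = 2 * b / (b + u t) := by field_simp; ring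
      rw [this]
      positivity
    field_simp
    rw [eq_comm, neg_eq_iff_eq_neg, div_eq_iff (by linarith [hbu1 t, hbu2 t])]
    ring
  · -- constant
    left
    have hzero : ∀ t, deriv u t = 0 := by
      intro t
      have h1 := hwval t
      rw [hd0, zero_mul] at h1
      exact (mul_eq_zero.1 h1).resolve_right (ne_of_gt (Real.exp_pos _))
    exact ⟨u 0, fun t => is_const_of_deriv_eq_zero hu hzero t 0⟩
  · -- u' > 0 everywhere: contradiction
    exfalso
    have hposd : ∀ t, 0 < deriv u t := by
      intro t
      have h1 := hwval t
      have h2 : 0 < Real.exp (-(2 * U t)) := Real.exp_pos _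
      have h3 : 0 < Real.exp (-(2 * U 0)) := Real.exp_pos _
      nlinarith
    by_cases hex : ∃ t, 0 ≤ u t
    · obtain ⟨t₀, ht₀⟩ := hex
      exact aux_noblow hu (fun t => L1 t) hposd ht₀
    · push_neg at hex
      set v : ℝ → ℝ := fun t => -u (-t) with hv
      have hvd : ∀ t, HasDerivAt v (deriv u (-t)) t := by
        intro t
        have h1 : HasDerivAt (fun t : ℝ => u (-t)) (deriv u (-t) * (-1)) t :=
          HasDerivAt.comp t ((hu (-t)).hasDerivAt) (hasDerivAt_neg t)
        have := h1.neg
        exact this.congr_deriv (by ring)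
      have hvdiff : Differentiable ℝ v := fun t => (hvd t).differentiableAt
      have hvode : ∀ t, deriv v t = v t ^ 2 + k := by
        intro t
        rw [(hvd t).deriv, L1 (-t), hv]
        simp only
        ring
      have hvpos : ∀ t, 0 < deriv v t := by
        intro t
        rw [(hvd t).deriv]
        exact hposd (-t)
      have hv0 : 0 ≤ v 0 := by
        have := hex 0
        simp only [hv, neg_zero]
        linarith
      exact aux_noblow hvdiff hvode hvpos hv0
end

section
/- For all real constants a > 0, b and c, the function f(x) = a / cosh(b·x + c) is a positive global solution on ℝ of the equation f²·f''' − 5·f·f'·f'' + 4·f'³ = 0 (equation (1.1) with m = 4), and f is non-constant whenever b ≠ 0. -/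
open Real

private lemma hu (b c x : ℝ) : HasDerivAt (fun y : ℝ => b * y + c) b x := by
  simpa using ((hasDerivAt_id x).const_mul b).add_const c

private lemma hd1 (a b c x : ℝ) :
    HasDerivAt (fun y => a / Real.cosh (b * y + c))
      (-a * b * Real.sinh (b * x + c) / Real.cosh (b * x + c) ^ 2) x := by
  have h := (hasDerivAt_const x a).div ((hu b c x).cosh) ((Real.cosh_pos _).ne')
  refine h.congr_deriv (Eq.symm ?_)
  field_simp
  ring

private lemma hd2 (a b c x : ℝ) :
    HasDerivAt (fun y => -a * b * Real.sinh (b * y + c) / Real.cosh (b * y + c) ^ 2)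
      (a * b ^ 2 * (Real.sinh (b * x + c) ^ 2 - 1) / Real.cosh (b * x + c) ^ 3) x := by
  have hc : Real.cosh (b * x + c) ^ 2 ≠ 0 := pow_ne_zero _ ((Real.cosh_pos _).ne')
  have h := (((hu b c x).sinh).const_mul (-a * b)).div ((hu b c x).cosh.pow 2) hc
  refine h.congr_deriv (Eq.symm ?_)
  simp only [Pi.pow_apply]
  field_simp
  ring_nf
  rw [show Real.sinh (b * x + c) ^ 2 = Real.cosh (b * x + c) ^ 2 - 1 from by
    linarith [Real.cosh_sq (b * x + c)]]
  ring

private lemma hd3 (a b c x : ℝ) :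
    HasDerivAt (fun y => a * b ^ 2 * (Real.sinh (b * y + c) ^ 2 - 1) / Real.cosh (b * y + c) ^ 3)
      (a * b ^ 3 * Real.sinh (b * x + c) * (5 - Real.sinh (b * x + c) ^ 2)
        / Real.cosh (b * x + c) ^ 4) x := by
  have hc : Real.cosh (b * x + c) ^ 3 ≠ 0 := pow_ne_zero _ ((Real.cosh_pos _).ne')
  have h := ((((hu b c x).sinh.pow 2).sub_const 1).const_mul (a * b ^ 2)).div
      ((hu b c x).cosh.pow 3) hc
  refine h.congr_deriv (Eq.symm ?_)
  simp only [Pi.pow_apply]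
  field_simp
  ring_nf
  linear_combination (-2 * a * b ^ 3 * Real.sinh (b * x + c) * Real.cosh (b * x + c) ^ 2) *
    Real.cosh_sq (b * x + c)

private lemma d1 (a b c : ℝ) : deriv (fun y => a / Real.cosh (b * y + c))
    = fun x => -a * b * Real.sinh (b * x + c) / Real.cosh (b * x + c) ^ 2 :=
  funext fun x => (hd1 a b c x).deriv

private lemma d2 (a b c : ℝ) : deriv (deriv (fun y => a / Real.cosh (b * y + c)))
    = fun x => a * b ^ 2 * (Real.sinh (b * x + c) ^ 2 - 1) / Real.cosh (b * x + c) ^ 3 := by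
  rw [d1]; exact funext fun x => (hd2 a b c x).deriv

private lemma d3 (a b c : ℝ) : deriv (deriv (deriv (fun y => a / Real.cosh (b * y + c))))
    = fun x => a * b ^ 3 * Real.sinh (b * x + c) * (5 - Real.sinh (b * x + c) ^ 2)
        / Real.cosh (b * x + c) ^ 4 := by
  rw [d2]; exact funext fun x => (hd3 a b c x).deriv

/-- f(x) = a / cosh(bx + c), a > 0, is a positive global solution of
equation (1.1) with m = 4, non-constant whenever b ≠ 0. -/
theorem stmt_14 (a b c : ℝ) (ha : 0 < a) :
    (∀ x, 0 < a / Real.cosh (b * x + c)) ∧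
    Differentiable ℝ (fun x => a / Real.cosh (b * x + c)) ∧
    Differentiable ℝ (deriv (fun x => a / Real.cosh (b * x + c))) ∧
    Differentiable ℝ (deriv (deriv (fun x => a / Real.cosh (b * x + c)))) ∧
    (∀ x, (a / Real.cosh (b * x + c)) ^ 2
        * deriv (deriv (deriv (fun y => a / Real.cosh (b * y + c)))) x
      - 5 * (a / Real.cosh (b * x + c))
        * deriv (fun y => a / Real.cosh (b * y + c)) x
        * deriv (deriv (fun y => a / Real.cosh (b * y + c))) x
      + 4 * (deriv (fun y => a / Real.cosh (b * y + c)) x) ^ 3 = 0) ∧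
    (b ≠ 0 → ∃ x y : ℝ, a / Real.cosh (b * x + c) ≠ a / Real.cosh (b * y + c)) := by
  refine ⟨fun x => div_pos ha (Real.cosh_pos _), ?_, ?_, ?_, ?_, ?_⟩
  · exact fun x => (hd1 a b c x).differentiableAt
  · rw [d1 a b c]; exact fun x => (hd2 a b c x).differentiableAt
  · rw [d2 a b c]; exact fun x => (hd3 a b c x).differentiableAt
  · intro x
    rw [d3 a b c, d2 a b c, d1 a b c]
    have hc := (Real.cosh_pos (b * x + c)).ne'
    field_simp
    ring
  · intro hb
    refine ⟨(-c) / b, (1 - c) / b, ?_⟩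
    have h1 : b * ((-c) / b) + c = 0 := by field_simp; ring
    have h2 : b * ((1 - c) / b) + c = 1 := by field_simp; ring
    rw [h1, h2, Real.cosh_zero]
    have : 1 < Real.cosh 1 := by
      have := Real.one_lt_cosh.mpr (one_ne_zero (α := ℝ))
      simpa using this
    have : a / Real.cosh 1 < a / 1 := by
      apply div_lt_div_of_pos_left ha (by positivity) (by simpa using this)
    simp only [div_one] at this ⊢
    exact fun h => absurd h.symm (ne_of_lt this)
end

section
/- Let A > 0 and B < 0 be real constants with A² + 8B ≥ 0, and let k₁ = (−A + √(A² + 8B))/4 be the larger real root of 2k² + A·k − B = 0 (so k₂ ≤ k₁ < 0). Let a ≤ 0 and β ≥ 0 be reals with β + k₁·a² < 0. Then there exists a twice differentiable function u : [0,∞) → ℝ satisfying u''(t) = A·u(t)·u'(t) + B·u(t)³ for all t ≥ 0, u(0) = a, u'(0) = β, and moreover u(t) → 0 and u'(t) → 0 as t → ∞. -/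
open Filter Set

namespace Stmt16Aux

noncomputable def Efn (k1 k2 : ℝ) : ℝ → ℝ :=
  fun τ => if k1 = k2 then τ else (1 - Real.exp (-(2*(k1-k2)*τ)))/(2*(k1-k2))

noncomputable def vfn (k1 k2 v0 w0 : ℝ) : ℝ → ℝ :=
  fun τ => Real.exp (2*k1*τ) * (v0 - 2*w0 * Efn k1 k2 τ)

noncomputable def wfn (k2 w0 : ℝ) : ℝ → ℝ := fun τ => w0 * Real.exp (2*k2*τ)

noncomputable def ffn (k1 k2 v0 w0 : ℝ) : ℝ → ℝ :=
  fun σ => (Real.sqrt (vfn k1 k2 v0 w0 (max σ 0)))⁻¹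

noncomputable def Tfn (k1 k2 v0 w0 : ℝ) : ℝ → ℝ :=
  fun τ => ∫ σ in (0:ℝ)..τ, ffn k1 k2 v0 w0 σ

variable (k1 k2 v0 w0 : ℝ)

lemma Efn_zero : Efn k1 k2 0 = 0 := by
  unfold Efn; split <;> simp

lemma Efn_hasDeriv (τ : ℝ) :
    HasDerivAt (Efn k1 k2) (Real.exp (-(2*(k1-k2)*τ))) τ := by
  unfold Efn
  by_cases h : k1 = k2
  · simp only [if_pos h, h, sub_self, mul_zero, zero_mul, neg_zero, Real.exp_zero]
    exact hasDerivAt_id τ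
  · simp only [if_neg h]
    have hc : 2*(k1-k2) ≠ 0 := by
      intro hc; apply h; linarith [(mul_eq_zero.mp hc).resolve_left (by norm_num)]
    have h1 : HasDerivAt (fun τ : ℝ => -(2*(k1-k2)*τ)) (-(2*(k1-k2))) τ := by
      simpa using ((hasDerivAt_id τ).const_mul (2*(k1-k2))).fun_neg
    have h2 : HasDerivAt (fun τ : ℝ => Real.exp (-(2*(k1-k2)*τ)))
        (Real.exp (-(2*(k1-k2)*τ)) * (-(2*(k1-k2)))) τ := (Real.hasDerivAt_exp _).comp τ h1
    have h3 : HasDerivAt (fun τ : ℝ => (1 - Real.exp (-(2*(k1-k2)*τ)))/(2*(k1-k2)))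
        ((0 - Real.exp (-(2*(k1-k2)*τ)) * (-(2*(k1-k2))))/(2*(k1-k2))) τ :=
      ((hasDerivAt_const τ 1).sub h2).div_const _
    convert h3 using 1
    field_simp
    ring

lemma Efn_nonneg (hk21 : k2 ≤ k1) {τ : ℝ} (hτ : 0 ≤ τ) : 0 ≤ Efn k1 k2 τ := by
  unfold Efn
  split_ifs with h
  · exact hτ
  · have hs : 0 < 2*(k1-k2) := by
      rcases lt_or_eq_of_le hk21 with h' | h'
      · linarith
      · exact absurd h'.symm h
    apply div_nonneg _ hs.le
    have : Real.exp (-(2*(k1-k2)*τ)) ≤ 1 := by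
      rw [Real.exp_le_one_iff]
      nlinarith
    linarith

lemma Efn_le (hk21 : k2 ≤ k1) {τ : ℝ} (hτ : 0 ≤ τ) : Efn k1 k2 τ ≤ τ := by
  unfold Efn
  split_ifs with h
  · exact le_refl τ
  · have hs : 0 < 2*(k1-k2) := by
      rcases lt_or_eq_of_le hk21 with h' | h'
      · linarith
      · exact absurd h'.symm h
    rw [div_le_iff₀ hs]
    have := Real.add_one_le_exp (-(2*(k1-k2)*τ))
    nlinarith


lemma vfn_zero : vfn k1 k2 v0 w0 0 = v0 := by
  unfold vfn; rw [Efn_zero]; simp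

lemma vfn_pos (hk21 : k2 ≤ k1) (hv0 : 0 < v0) (hw0 : w0 < 0) {τ : ℝ} (hτ : 0 ≤ τ) :
    0 < vfn k1 k2 v0 w0 τ := by
  unfold vfn
  have h1 := Efn_nonneg k1 k2 hk21 hτ
  have h2 := Real.exp_pos (2*k1*τ)
  have h3 : 0 < v0 - 2*w0 * Efn k1 k2 τ := by nlinarith
  exact mul_pos h2 h3

lemma wfn_hasDeriv (τ : ℝ) : HasDerivAt (wfn k2 w0) (2*k2 * wfn k2 w0 τ) τ := by
  have h1 : HasDerivAt (fun τ : ℝ => Real.exp (2*k2*τ)) (Real.exp (2*k2*τ) * (2*k2)) τ :=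
    (Real.hasDerivAt_exp _).comp τ (by simpa using (hasDerivAt_id τ).const_mul (2*k2))
  have := h1.const_mul w0
  refine this.congr_deriv ?_
  unfold wfn; ring

lemma vfn_hasDeriv (τ : ℝ) : HasDerivAt (vfn k1 k2 v0 w0)
    (2*k1 * vfn k1 k2 v0 w0 τ - 2 * wfn k2 w0 τ) τ := by
  have hE := Efn_hasDeriv k1 k2 τ
  have h1 : HasDerivAt (fun τ : ℝ => Real.exp (2*k1*τ)) (Real.exp (2*k1*τ) * (2*k1)) τ :=
    (Real.hasDerivAt_exp _).comp τ (by simpa using (hasDerivAt_id τ).const_mul (2*k1))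
  have h2 : HasDerivAt (fun τ : ℝ => v0 - 2*w0 * Efn k1 k2 τ)
      (0 - 2*w0 * Real.exp (-(2*(k1-k2)*τ))) τ :=
    (hasDerivAt_const τ v0).sub (hE.const_mul (2*w0))
  have h3 := h1.mul h2
  refine h3.congr_deriv ?_
  have hx : Real.exp (2*k1*τ) * Real.exp (-(2*(k1-k2)*τ)) = Real.exp (2*k2*τ) := by
    rw [← Real.exp_add]; ring_nf
  unfold vfn wfn
  linear_combination (-(2*w0)) * hx

lemma vfn_cont : Continuous (vfn k1 k2 v0 w0) :=
  continuous_iff_continuousAt.2 fun τ => (vfn_hasDeriv k1 k2 v0 w0 τ).continuousAt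

lemma ffn_pos (hk21 : k2 ≤ k1) (hv0 : 0 < v0) (hw0 : w0 < 0) (σ : ℝ) :
    0 < ffn k1 k2 v0 w0 σ :=
  inv_pos.2 (Real.sqrt_pos.2 (vfn_pos k1 k2 v0 w0 hk21 hv0 hw0 (le_max_right σ 0)))

lemma ffn_cont (hk21 : k2 ≤ k1) (hv0 : 0 < v0) (hw0 : w0 < 0) :
    Continuous (ffn k1 k2 v0 w0) := by
  apply Continuous.inv₀
  · exact Real.continuous_sqrt.comp
      ((vfn_cont k1 k2 v0 w0).comp (continuous_id.max continuous_const))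
  · intro σ
    exact ne_of_gt (Real.sqrt_pos.2 (vfn_pos k1 k2 v0 w0 hk21 hv0 hw0 (le_max_right σ 0)))

lemma Tfn_hasDeriv (hk21 : k2 ≤ k1) (hv0 : 0 < v0) (hw0 : w0 < 0) (τ : ℝ) :
    HasDerivAt (Tfn k1 k2 v0 w0) (ffn k1 k2 v0 w0 τ) τ :=
  intervalIntegral.integral_hasDerivAt_right
    ((ffn_cont k1 k2 v0 w0 hk21 hv0 hw0).intervalIntegrable _ _)
    ((ffn_cont k1 k2 v0 w0 hk21 hv0 hw0).stronglyMeasurable.stronglyMeasurableAtFilter)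
    (ffn_cont k1 k2 v0 w0 hk21 hv0 hw0).continuousAt

lemma Tfn_zero : Tfn k1 k2 v0 w0 0 = 0 := intervalIntegral.integral_same

lemma Tfn_mono (hk21 : k2 ≤ k1) (hv0 : 0 < v0) (hw0 : w0 < 0) :
    StrictMono (Tfn k1 k2 v0 w0) := by
  apply strictMono_of_deriv_pos
  intro τ
  rw [(Tfn_hasDeriv k1 k2 v0 w0 hk21 hv0 hw0 τ).deriv]
  exact ffn_pos k1 k2 v0 w0 hk21 hv0 hw0 τ

lemma Tfn_cont (hk21 : k2 ≤ k1) (hv0 : 0 < v0) (hw0 : w0 < 0) :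
    Continuous (Tfn k1 k2 v0 w0) :=
  continuous_iff_continuousAt.2 fun τ =>
    (Tfn_hasDeriv k1 k2 v0 w0 hk21 hv0 hw0 τ).continuousAt

lemma Tfn_atBot (hk21 : k2 ≤ k1) (hv0 : 0 < v0) (hw0 : w0 < 0) :
    Tendsto (Tfn k1 k2 v0 w0) atBot atBot := by
  have hneg : ∀ τ : ℝ, τ ≤ 0 → Tfn k1 k2 v0 w0 τ = τ * (Real.sqrt v0)⁻¹ := by
    intro τ hτ
    have hEq : Set.EqOn (ffn k1 k2 v0 w0) (fun _ => (Real.sqrt v0)⁻¹) (Set.uIcc 0 τ) := by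
      intro σ hσ
      have hσ0 : σ ≤ 0 := by
        rcases Set.mem_uIcc.1 hσ with h | h
        · linarith [h.2]
        · linarith [h.2]
      unfold ffn
      rw [max_eq_right hσ0, vfn_zero]
    unfold Tfn
    rw [intervalIntegral.integral_congr hEq, intervalIntegral.integral_const]
    simp [mul_comm]
  have h1 : Tendsto (fun τ : ℝ => τ * (Real.sqrt v0)⁻¹) atBot atBot :=
    Tendsto.atBot_mul_const (inv_pos.2 (Real.sqrt_pos.2 hv0)) tendsto_id
  refine Tendsto.congr' ?_ h1
  filter_upwards [eventually_le_atBot (0:ℝ)] with τ hτ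
  exact (hneg τ hτ).symm

lemma vfn_le (hk21 : k2 ≤ k1) (hk1 : k1 < 0) (hv0 : 0 < v0) (hw0 : w0 < 0) {τ : ℝ}
    (hτ : 0 ≤ τ) : vfn k1 k2 v0 w0 τ ≤ v0 + (-(2*w0)) * τ := by
  unfold vfn
  have h1 := Efn_nonneg k1 k2 hk21 hτ
  have h2 := Efn_le k1 k2 hk21 hτ
  have h3 : Real.exp (2*k1*τ) ≤ 1 := by
    rw [Real.exp_le_one_iff]; nlinarith
  have h4 := Real.exp_pos (2*k1*τ)
  have h5 : v0 - 2*w0*Efn k1 k2 τ ≤ v0 + (-(2*w0))*τ := by nlinarith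
  have h6 : Real.exp (2*k1*τ) * (v0 - 2*w0*Efn k1 k2 τ) ≤ v0 - 2*w0*Efn k1 k2 τ := by
    nlinarith [mul_le_mul_of_nonneg_right h3 (by nlinarith : (0:ℝ) ≤ v0 - 2*w0*Efn k1 k2 τ)]
  linarith

lemma Tfn_atTop (hk21 : k2 ≤ k1) (hk1 : k1 < 0) (hv0 : 0 < v0) (hw0 : w0 < 0) :
    Tendsto (Tfn k1 k2 v0 w0) atTop atTop := by
  set W : ℝ := -(2*w0) with hW
  have hWpos : 0 < W := by simp [hW]; linarith
  set g : ℝ → ℝ := fun σ => (Real.sqrt (v0 + W * σ))⁻¹ with hgdef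
  set G : ℝ → ℝ := fun σ => (2/W) * (Real.sqrt (v0 + W * σ) - Real.sqrt v0) with hGdef
  have hGd : ∀ σ : ℝ, 0 ≤ σ → HasDerivAt G (g σ) σ := by
    intro σ hσ
    have hpos : 0 < v0 + W * σ := by nlinarith
    have h1 : HasDerivAt (fun σ : ℝ => v0 + W * σ) W σ := by
      simpa using ((hasDerivAt_id σ).const_mul W).const_add v0
    have h2 := ((Real.hasDerivAt_sqrt (ne_of_gt hpos)).comp σ h1)
    have h3 := ((h2.sub_const (Real.sqrt v0)).const_mul (2/W))
    refine h3.congr_deriv ?_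
    have hrne : Real.sqrt (v0 + W * σ) ≠ 0 := ne_of_gt (Real.sqrt_pos.2 hpos)
    simp only [hgdef]
    field_simp
  have key : ∀ τ : ℝ, 0 ≤ τ → G τ ≤ Tfn k1 k2 v0 w0 τ := by
    intro τ hτ
    have hGint : ∫ σ in (0:ℝ)..τ, g σ = G τ - G 0 := by
      apply intervalIntegral.integral_eq_sub_of_hasDerivAt
      · intro σ hσ
        rw [Set.uIcc_of_le hτ] at hσ
        exact hGd σ hσ.1
      · apply ContinuousOn.intervalIntegrable
        apply ContinuousOn.inv₀
        · exact (Real.continuous_sqrt.comp (by continuity)).continuousOn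
        · intro σ hσ
          rw [Set.uIcc_of_le hτ] at hσ
          have hpos : 0 < v0 + W * σ := by nlinarith [hσ.1]
          exact ne_of_gt (Real.sqrt_pos.2 hpos)
    have hG0 : G 0 = 0 := by simp [hGdef]
    have hmono : ∫ σ in (0:ℝ)..τ, g σ ≤ ∫ σ in (0:ℝ)..τ, ffn k1 k2 v0 w0 σ := by
      apply intervalIntegral.integral_mono_on hτ
      · apply ContinuousOn.intervalIntegrable
        apply ContinuousOn.inv₀
        · exact (Real.continuous_sqrt.comp (by continuity)).continuousOn
        · intro σ hσ
          rw [Set.uIcc_of_le hτ] at hσ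
          have hpos : 0 < v0 + W * σ := by nlinarith [hσ.1]
          exact ne_of_gt (Real.sqrt_pos.2 hpos)
      · exact ((ffn_cont k1 k2 v0 w0 hk21 hv0 hw0).intervalIntegrable _ _)
      · intro σ hσ
        have hσ0 : 0 ≤ σ := hσ.1
        unfold ffn
        rw [max_eq_left hσ0]
        have hvp := vfn_pos k1 k2 v0 w0 hk21 hv0 hw0 hσ0
        have hle := vfn_le k1 k2 v0 w0 hk21 hk1 hv0 hw0 hσ0
        apply inv_anti₀ (Real.sqrt_pos.2 hvp)
        exact Real.sqrt_le_sqrt hle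
    calc G τ = ∫ σ in (0:ℝ)..τ, g σ := by rw [hGint, hG0, sub_zero]
    _ ≤ Tfn k1 k2 v0 w0 τ := hmono
  have hGtop : Tendsto G atTop atTop := by
    have hsqrt : Tendsto Real.sqrt atTop atTop := by
      apply tendsto_atTop_atTop_of_monotone (fun x y h => Real.sqrt_le_sqrt h)
      intro b
      exact ⟨b^2, by rw [Real.sqrt_sq_eq_abs]; exact le_abs_self b⟩
    have h1 : Tendsto (fun σ : ℝ => v0 + W * σ) atTop atTop :=
      tendsto_atTop_add_const_left _ _ (Tendsto.const_mul_atTop hWpos tendsto_id)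
    have h2 := (hsqrt.comp h1)
    have h3 := tendsto_atTop_add_const_right atTop (-Real.sqrt v0) h2
    have h4 := Tendsto.const_mul_atTop (by positivity : (0:ℝ) < 2/W) h3
    refine h4.congr fun σ => ?_
    simp only [hGdef, Function.comp_apply]
    ring
  apply tendsto_atTop_mono' atTop _ hGtop
  filter_upwards [eventually_ge_atTop (0:ℝ)] with τ hτ using key τ hτ

lemma vfn_tendsto (hk21 : k2 ≤ k1) (hk1 : k1 < 0) (hv0 : 0 < v0) (hw0 : w0 < 0) :
    Tendsto (vfn k1 k2 v0 w0) atTop (nhds 0) := by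
  set W : ℝ := -(2*w0) with hW
  have hWpos : 0 < W := by simp [hW]; linarith
  have h_lin : Tendsto (fun τ : ℝ => 2*k1*τ) atTop atBot := by
    apply Tendsto.const_mul_atTop_of_neg (by linarith : 2*k1 < 0) tendsto_id
  have h_exp : Tendsto (fun τ : ℝ => Real.exp (2*k1*τ)) atTop (nhds 0) :=
    Real.tendsto_exp_atBot.comp h_lin
  have h_texp : Tendsto (fun τ : ℝ => τ * Real.exp (2*k1*τ)) atTop (nhds 0) := by
    have hc : (0:ℝ) < -(2*k1) := by linarith
    have h1 : Tendsto (fun τ : ℝ => -(2*k1) * τ) atTop atTop :=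
      Tendsto.const_mul_atTop hc tendsto_id
    have h2 := (Real.tendsto_pow_mul_exp_neg_atTop_nhds_zero 1).comp h1
    have h3 := h2.const_mul ((-(2*k1))⁻¹)
    rw [mul_zero] at h3
    have hne : k1 ≠ 0 := ne_of_lt hk1
    refine h3.congr fun τ => ?_
    simp only [Function.comp, pow_one]
    rw [neg_mul, neg_neg]
    field_simp
  have hsum : Tendsto (fun τ : ℝ => v0 * Real.exp (2*k1*τ) + W * (τ * Real.exp (2*k1*τ)))
      atTop (nhds 0) := by
    have := (h_exp.const_mul v0).add (h_texp.const_mul W)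
    simpa using this
  apply squeeze_zero' ?_ ?_ hsum
  · filter_upwards [eventually_ge_atTop (0:ℝ)] with τ hτ
    exact (vfn_pos k1 k2 v0 w0 hk21 hv0 hw0 hτ).le
  · filter_upwards [eventually_ge_atTop (0:ℝ)] with τ hτ
    unfold vfn
    have h1 := Efn_nonneg k1 k2 hk21 hτ
    have h2 := Efn_le k1 k2 hk21 hτ
    have h4 := Real.exp_pos (2*k1*τ)
    rw [hW]
    nlinarith [mul_nonneg (mul_nonneg (by linarith : (0:ℝ) ≤ -(2*w0)) h4.le)
      (sub_nonneg.2 h2)]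

lemma wfn_tendsto (hk2 : k2 < 0) : Tendsto (wfn k2 w0) atTop (nhds 0) := by
  have h_lin : Tendsto (fun τ : ℝ => 2*k2*τ) atTop atBot :=
    Tendsto.const_mul_atTop_of_neg (by linarith : 2*k2 < 0) tendsto_id
  have h_exp : Tendsto (fun τ : ℝ => Real.exp (2*k2*τ)) atTop (nhds 0) :=
    Real.tendsto_exp_atBot.comp h_lin
  have := h_exp.const_mul w0
  rw [mul_zero] at this; exact this

lemma aux16 (k1 k2 a β : ℝ) (hk21 : k2 ≤ k1) (hk1 : k1 < 0) (ha : a < 0)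
    (hg : β + k1 * a ^ 2 < 0) :
    ∃ u u' u'' : ℝ → ℝ,
      (∀ t ∈ Set.Ici (0:ℝ), HasDerivWithinAt u (u' t) (Set.Ici (0:ℝ)) t) ∧
      (∀ t ∈ Set.Ici (0:ℝ), HasDerivWithinAt u' (u'' t) (Set.Ici (0:ℝ)) t) ∧
      (∀ t ∈ Set.Ici (0:ℝ), u'' t =
        (-2*(k1+k2)) * u t * u' t + (-2*(k1*k2)) * (u t) ^ 3) ∧
      u 0 = a ∧ u' 0 = β ∧
      Filter.Tendsto u Filter.atTop (nhds 0) ∧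
      Filter.Tendsto u' Filter.atTop (nhds 0) := by
  have hk2 : k2 < 0 := lt_of_le_of_lt hk21 hk1
  set v0 : ℝ := a ^ 2 with hv0def
  set w0 : ℝ := β + k1 * a ^ 2 with hw0def
  have hv0 : 0 < v0 := by rw [hv0def]; nlinarith
  have hw0 : w0 < 0 := hg
  set Φ : ℝ ≃o ℝ := StrictMono.orderIsoOfSurjective (Tfn k1 k2 v0 w0)
    (Tfn_mono k1 k2 v0 w0 hk21 hv0 hw0)
    ((Tfn_cont k1 k2 v0 w0 hk21 hv0 hw0).surjective
      (Tfn_atTop k1 k2 v0 w0 hk21 hk1 hv0 hw0)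
      (Tfn_atBot k1 k2 v0 w0 hk21 hv0 hw0)) with hΦdef
  set τf : ℝ → ℝ := fun t => Φ.symm t with hτfdef
  have hTτf : ∀ t, Tfn k1 k2 v0 w0 (τf t) = t := fun t =>
    StrictMono.orderIsoOfSurjective_self_symm_apply _ _ _ t
  have hτfT : ∀ τ, τf (Tfn k1 k2 v0 w0 τ) = τ := fun τ =>
    StrictMono.orderIsoOfSurjective_symm_apply_self _ _ _ τ
  have hτfc : Continuous τf := Φ.symm.continuous
  have hτf0 : τf 0 = 0 := by
    have := hτfT 0
    rwa [Tfn_zero] at this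
  have hτfmono : Monotone τf := Φ.symm.monotone
  have hτfnn : ∀ t : ℝ, 0 ≤ t → 0 ≤ τf t := by
    intro t ht
    have := hτfmono ht
    rwa [hτf0] at this
  have hτfd : ∀ t : ℝ, 0 ≤ t →
      HasDerivAt τf (Real.sqrt (vfn k1 k2 v0 w0 (τf t))) t := by
    intro t ht
    have h := HasDerivAt.of_local_left_inverse (hτfc.continuousAt)
      (Tfn_hasDeriv k1 k2 v0 w0 hk21 hv0 hw0 (τf t))
      (ne_of_gt (ffn_pos k1 k2 v0 w0 hk21 hv0 hw0 (τf t)))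
      (Eventually.of_forall hTτf)
    have hm : max (τf t) 0 = τf t := max_eq_left (hτfnn t ht)
    unfold ffn at h
    rwa [hm, inv_inv] at h
  have hτftop : Tendsto τf atTop atTop := by
    apply tendsto_atTop_atTop_of_monotone hτfmono
    intro b
    exact ⟨Tfn k1 k2 v0 w0 b, le_of_eq (hτfT b).symm⟩
  refine ⟨fun t => -Real.sqrt (vfn k1 k2 v0 w0 (τf t)),
    fun t => wfn k2 w0 (τf t) - k1 * vfn k1 k2 v0 w0 (τf t),
    fun t => (-2*(k1+k2)) * (-Real.sqrt (vfn k1 k2 v0 w0 (τf t))) *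
        (wfn k2 w0 (τf t) - k1 * vfn k1 k2 v0 w0 (τf t)) +
      (-2*(k1*k2)) * (-Real.sqrt (vfn k1 k2 v0 w0 (τf t))) ^ 3,
    ?_, ?_, fun t _ => rfl, ?_, ?_, ?_, ?_⟩
  · -- u' is the derivative of u
    intro t ht
    have ht' : (0:ℝ) ≤ t := ht
    have hτ0 : 0 ≤ τf t := hτfnn t ht'
    have hv := vfn_pos k1 k2 v0 w0 hk21 hv0 hw0 hτ0
    have hchain := (vfn_hasDeriv k1 k2 v0 w0 (τf t)).comp t (hτfd t ht')
    have hsq := (Real.hasDerivAt_sqrt (ne_of_gt hv)).comp t hchain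
    have hr2 : Real.sqrt (vfn k1 k2 v0 w0 (τf t)) ^ 2 = vfn k1 k2 v0 w0 (τf t) :=
      Real.sq_sqrt hv.le
    have hrne : Real.sqrt (vfn k1 k2 v0 w0 (τf t)) ≠ 0 :=
      ne_of_gt (Real.sqrt_pos.2 hv)
    have := hsq.neg
    apply HasDerivAt.hasDerivWithinAt
    refine this.congr_deriv ?_
    rw [← hr2]
    field_simp
    linear_combination (-k1) * hr2
  · -- u'' is the derivative of u'
    intro t ht
    have ht' : (0:ℝ) ≤ t := ht
    have hτ0 : 0 ≤ τf t := hτfnn t ht'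
    have hv := vfn_pos k1 k2 v0 w0 hk21 hv0 hw0 hτ0
    have h1 := (wfn_hasDeriv k2 w0 (τf t)).comp t (hτfd t ht')
    have h2 := (vfn_hasDeriv k1 k2 v0 w0 (τf t)).comp t (hτfd t ht')
    have h3 := h1.sub (h2.const_mul k1)
    have hr2 : Real.sqrt (vfn k1 k2 v0 w0 (τf t)) ^ 2 = vfn k1 k2 v0 w0 (τf t) :=
      Real.sq_sqrt hv.le
    apply HasDerivAt.hasDerivWithinAt
    refine h3.congr_deriv ?_
    linear_combination (-(2*k1*k2*Real.sqrt (vfn k1 k2 v0 w0 (τf t)))) * hr2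
  · -- u 0 = a
    show -Real.sqrt (vfn k1 k2 v0 w0 (τf 0)) = a
    rw [hτf0, vfn_zero, hv0def, Real.sqrt_sq_eq_abs, abs_of_neg ha, neg_neg]
  · -- u' 0 = β
    show wfn k2 w0 (τf 0) - k1 * vfn k1 k2 v0 w0 (τf 0) = β
    rw [hτf0, vfn_zero]
    unfold wfn
    rw [hw0def, hv0def]
    simp
  · -- u → 0
    have h1 := (vfn_tendsto k1 k2 v0 w0 hk21 hk1 hv0 hw0).comp hτftop
    have h2 := (Real.continuous_sqrt.tendsto 0).comp h1
    have h3 := h2.neg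
    simpa using h3
  · -- u' → 0
    have h1 := (vfn_tendsto k1 k2 v0 w0 hk21 hk1 hv0 hw0).comp hτftop
    have h2 := (wfn_tendsto k2 w0 hk2).comp hτftop
    have := h2.sub (h1.const_mul k1)
    simpa using this

end Stmt16Aux

/-- A > 0, B < 0, A² + 8B ≥ 0: for initial data a ≤ 0, β ≥ 0 with
g_{k₁}(a, β) = β + k₁ a² < 0, there is a solution on [0, ∞) with
u(t) → 0 and u'(t) → 0 as t → ∞. -/
theorem stmt_16 (A B : ℝ) (hA : 0 < A) (hB : B < 0) (hdisc : 0 ≤ A ^ 2 + 8 * B)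
    (k1 : ℝ) (hk1 : k1 = (-A + Real.sqrt (A ^ 2 + 8 * B)) / 4)
    (a β : ℝ) (ha : a ≤ 0) (hβ : 0 ≤ β) (hg : β + k1 * a ^ 2 < 0) :
    ∃ u u' u'' : ℝ → ℝ,
      (∀ t ∈ Set.Ici (0:ℝ), HasDerivWithinAt u (u' t) (Set.Ici (0:ℝ)) t) ∧
      (∀ t ∈ Set.Ici (0:ℝ), HasDerivWithinAt u' (u'' t) (Set.Ici (0:ℝ)) t) ∧
      (∀ t ∈ Set.Ici (0:ℝ), u'' t = A * u t * u' t + B * (u t) ^ 3) ∧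
      u 0 = a ∧ u' 0 = β ∧
      Filter.Tendsto u Filter.atTop (nhds 0) ∧
      Filter.Tendsto u' Filter.atTop (nhds 0) := by
  set s : ℝ := Real.sqrt (A ^ 2 + 8 * B) with hsdef
  have hs2 : s ^ 2 = A ^ 2 + 8 * B := Real.sq_sqrt hdisc
  have hsnn : 0 ≤ s := Real.sqrt_nonneg _
  set k2 : ℝ := (-A - s) / 4 with hk2def
  have hk21 : k2 ≤ k1 := by rw [hk1, hk2def]; linarith
  have hsA : s < A := by
    have : s ^ 2 < A ^ 2 := by rw [hs2]; linarith
    nlinarith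
  have hk1neg : k1 < 0 := by rw [hk1]; linarith
  have haneg : a < 0 := by
    rcases lt_or_eq_of_le ha with h | h
    · exact h
    · exfalso
      rw [h] at hg
      simp at hg
      linarith
  have hA' : -2 * (k1 + k2) = A := by rw [hk1, hk2def]; ring
  have hB' : -2 * (k1 * k2) = B := by
    rw [hk1, hk2def]
    nlinarith [hs2]
  obtain ⟨u, u', u'', h1, h2, h3, h4, h5, h6, h7⟩ :=
    Stmt16Aux.aux16 k1 k2 a β hk21 hk1neg haneg hg
  refine ⟨u, u', u'', h1, h2, ?_, h4, h5, h6, h7⟩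
  intro t ht
  rw [h3 t ht, hA', hB']
end
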